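/- arXiv:1002.2396 — 4 statements merged into one kernel-verified Lean document; each statement's English description precedes it below -/
import Mathlib

section
/- (Sharp John–Nirenberg inequality.) Let n ≥ 1 and set α_n = 2^{−(n+2)}. There exists a constant β_n > 1, depending only on the dimension n, such that for every locally integrable b : ℝ^n → ℝ with 0 < ‖b‖_{BMO} < ∞ and every cube Q ⊂ ℝ^n with sides parallel to the axes, one has |Q|⁻¹ ∫_Q exp( (α_n/‖b‖_{BMO}) |b(y) − b_Q| ) dy ≤ β_n. -/
open MeasureTheory ENNReal

noncomputable section

/-- Axis-parallel cube in `ℝⁿ` with lower corner `a` and side length `h`. -/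
def Cube (n : ℕ) (a : Fin n → ℝ) (h : ℝ) : Set (Fin n → ℝ) :=
  {x | ∀ i, a i ≤ x i ∧ x i ≤ a i + h}

/-- `|Q|⁻¹ ∫_Q f`, as an extended nonnegative real (for nonnegative `f`). -/
def setAvg (n : ℕ) (Q : Set (Fin n → ℝ)) (f : (Fin n → ℝ) → ℝ) : ℝ≥0∞ :=
  (volume Q)⁻¹ * ∫⁻ x in Q, ENNReal.ofReal (f x)

/-- `|Q|⁻¹ ∫_Q f`, as a real number. -/
def intAvg (n : ℕ) (Q : Set (Fin n → ℝ)) (f : (Fin n → ℝ) → ℝ) : ℝ :=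
  ((volume Q).toReal)⁻¹ * ∫ x in Q, f x

/-- The `A₂` constant `[w]_{A₂} = sup_Q (|Q|⁻¹∫_Q w)(|Q|⁻¹∫_Q w⁻¹)`. -/
def A2const (n : ℕ) (w : (Fin n → ℝ) → ℝ) : ℝ≥0∞ :=
  ⨆ (a : Fin n → ℝ) (h : ℝ) (_ : 0 < h),
    setAvg n (Cube n a h) w * setAvg n (Cube n a h) (fun x => (w x)⁻¹)

/-- `w` is a weight in the Muckenhoupt class `A₂`. -/
def IsA2 (n : ℕ) (w : (Fin n → ℝ) → ℝ) : Prop :=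
  (∀ x, 0 < w x) ∧ LocallyIntegrable w ∧ A2const n w < ⊤

/-- The `BMO` norm `‖b‖_{BMO} = sup_Q |Q|⁻¹ ∫_Q |b - b_Q|`. -/
def bmoNorm (n : ℕ) (b : (Fin n → ℝ) → ℝ) : ℝ≥0∞ :=
  ⨆ (a : Fin n → ℝ) (h : ℝ) (_ : 0 < h),
    setAvg n (Cube n a h) (fun y => |b y - intAvg n (Cube n a h) b|)

/-- The weighted norm `‖f‖_{L^p(w)} = (∫ |f|^p w)^{1/p}`. -/
def wNorm (n : ℕ) (p : ℝ) (w f : (Fin n → ℝ) → ℝ) : ℝ≥0∞ :=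
  (∫⁻ x, (ENNReal.ofReal |f x|) ^ p * ENNReal.ofReal (w x)) ^ (1 / p)

/-- The commutator `[b,T] f = b · T f - T (b f)`. -/
def commOp {n : ℕ} (b : (Fin n → ℝ) → ℝ)
    (T : ((Fin n → ℝ) → ℝ) → ((Fin n → ℝ) → ℝ)) :
    ((Fin n → ℝ) → ℝ) → ((Fin n → ℝ) → ℝ) :=
  fun f x => b x * T f x - T (fun y => b y * f y) x

/-- Higher order commutators: `T_b^0 = T`, `T_b^k = [b, T_b^{k-1}]`. -/
def commIter {n : ℕ} (b : (Fin n → ℝ) → ℝ)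
    (T : ((Fin n → ℝ) → ℝ) → ((Fin n → ℝ) → ℝ)) :
    ℕ → ((Fin n → ℝ) → ℝ) → ((Fin n → ℝ) → ℝ)
  | 0 => T
  | (k+1) => commOp b (commIter b T k)

/-- `T` is a linear operator on functions. -/
def IsLinearOp (n : ℕ) (T : ((Fin n → ℝ) → ℝ) → ((Fin n → ℝ) → ℝ)) : Prop :=
  (∀ f g, T (f + g) = T f + T g) ∧ (∀ (c : ℝ) (f), T (c • f) = c • T f)

namespace JN

open Set Metric Filter Topology

/-! ### Basic cube geometry -/

lemma cube_eq_closedBall (n : ℕ) (a : Fin n → ℝ) {h : ℝ} (hh : 0 ≤ h) :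
    Cube n a h = closedBall (fun i => a i + h / 2) (h / 2) := by
  ext x
  simp only [Cube, mem_setOf_eq, mem_closedBall, dist_pi_le_iff (by linarith : (0:ℝ) ≤ h/2),
    Real.dist_eq, abs_sub_le_iff]
  constructor
  · intro hx i; have := hx i; constructor <;> linarith [this.1, this.2]
  · intro hx i; have := hx i; constructor <;> linarith [this.1, this.2]

lemma volume_cube (n : ℕ) (a : Fin n → ℝ) {h : ℝ} (hh : 0 ≤ h) :
    volume (Cube n a h) = ENNReal.ofReal (h ^ n) := by
  rw [cube_eq_closedBall n a hh, Real.volume_pi_closedBall _ (by linarith : (0:ℝ) ≤ h/2)]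
  congr 1; rw [Fintype.card_fin]; ring

lemma isCompact_cube (n : ℕ) (a : Fin n → ℝ) {h : ℝ} (hh : 0 ≤ h) :
    IsCompact (Cube n a h) := by
  rw [cube_eq_closedBall n a hh]; exact isCompact_closedBall _ _

lemma measurableSet_cube (n : ℕ) (a : Fin n → ℝ) {h : ℝ} (hh : 0 ≤ h) :
    MeasurableSet (Cube n a h) := (isCompact_cube n a hh).isClosed.measurableSet

lemma volume_cube_ne_zero (n : ℕ) (a : Fin n → ℝ) {h : ℝ} (hh : 0 < h) :
    volume (Cube n a h) ≠ 0 := by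
  rw [volume_cube n a hh.le]
  simp only [ne_eq, ENNReal.ofReal_eq_zero, not_le]
  positivity

lemma volume_cube_ne_top (n : ℕ) (a : Fin n → ℝ) {h : ℝ} (hh : 0 ≤ h) :
    volume (Cube n a h) ≠ ⊤ := by
  rw [volume_cube n a hh]; exact ofReal_ne_top

lemma volume_hyperplane (n : ℕ) (i : Fin n) (c : ℝ) :
    volume {x : Fin n → ℝ | x i = c} = 0 := by
  have : {x : Fin n → ℝ | x i = c} = Set.pi univ (fun l => if l = i then {c} else univ) := by
    ext x
    simp only [mem_setOf_eq, mem_univ_pi]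
    constructor
    · intro hx l; by_cases hl : l = i <;> simp [hl, hx]
    · intro hx; have := hx i; simpa using this
  rw [this, volume_pi_pi]
  exact Finset.prod_eq_zero (Finset.mem_univ i) (by simp)

/-! ### Dyadic subcubes -/

variable {n : ℕ} {a0 : Fin n → ℝ} {h0 : ℝ}

/-- dyadic subcube of generation `k` with index `j`. -/
def dc (a0 : Fin n → ℝ) (h0 : ℝ) (k : ℕ) (j : Fin n → ℕ) : Set (Fin n → ℝ) :=
  Cube n (fun i => a0 i + h0 / 2 ^ k * j i) (h0 / 2 ^ k)

lemma dc_zero : dc a0 h0 0 (fun _ => 0) = Cube n a0 h0 := by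
  simp [dc]

lemma dc_subset_parent (hh : 0 < h0) (k : ℕ) (j : Fin n → ℕ) :
    dc a0 h0 (k+1) j ⊆ dc a0 h0 k (fun i => j i / 2) := by
  intro x hx i
  have hxi := hx i
  have hs : (0:ℝ) < h0 / 2 ^ k := by positivity
  have hmod0 : 2 * (j i / 2) + j i % 2 = j i := Nat.div_add_mod (j i) 2
  have hmod : (j i : ℝ) = 2 * ((j i / 2 : ℕ) : ℝ) + ((j i % 2 : ℕ) : ℝ) := by
    exact_mod_cast hmod0.symm
  have hr : ((j i % 2 : ℕ) : ℝ) ≤ 1 := by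
    have := Nat.mod_lt (j i) (show 0 < 2 by norm_num)
    exact_mod_cast Nat.lt_succ_iff.mp this
  have hpow : h0 / 2 ^ (k+1) = (h0 / 2 ^ k) / 2 := by
    rw [pow_succ]; ring
  rw [hpow] at hxi
  constructor <;> [skip; skip] <;>
    · simp only at hxi ⊢
      nlinarith [hxi.1, hxi.2, (Nat.cast_nonneg (j i % 2) : (0:ℝ) ≤ ((j i % 2 : ℕ) : ℝ))]

lemma dc_subset_anc (hh : 0 < h0) (k m : ℕ) (j : Fin n → ℕ) :
    dc a0 h0 (k + m) j ⊆ dc a0 h0 k (fun i => j i / 2 ^ m) := by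
  induction m generalizing j with
  | zero => simp [Nat.div_one]
  | succ m ih =>
    intro x hx
    have h1 : x ∈ dc a0 h0 (k + m) (fun i => j i / 2) :=
      dc_subset_parent hh (k + m) j hx
    have h2 := ih (fun i => j i / 2) h1
    have : (fun i => j i / 2 / 2 ^ m) = fun i => j i / 2 ^ (m + 1) := by
      funext i; rw [Nat.div_div_eq_div_mul, pow_succ']
    rwa [this] at h2

lemma dc_subset_root (hh : 0 < h0) (k : ℕ) (j : Fin n → ℕ) (hv : ∀ i, j i < 2 ^ k) :
    dc a0 h0 k j ⊆ Cube n a0 h0 := by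
  have := dc_subset_anc (a0 := a0) hh 0 k j
  rw [zero_add] at this
  refine this.trans ?_
  have : (fun i => j i / 2 ^ k) = fun _ => 0 := by
    funext i; exact Nat.div_eq_of_lt (hv i)
  rw [this, dc_zero]

lemma exists_child (hh : 0 < h0) (k : ℕ) (j : Fin n → ℕ) {x : Fin n → ℝ}
    (hx : x ∈ dc a0 h0 k j) :
    ∃ j' : Fin n → ℕ, (∀ i, j' i / 2 = j i) ∧ (∀ i, j' i ≤ 2 * j i + 1) ∧
      x ∈ dc a0 h0 (k+1) j' := by
  classical
  refine ⟨fun i => 2 * j i + (if x i ≤ a0 i + h0 / 2 ^ k * j i + h0 / 2 ^ (k+1) then 0 else 1),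
    ?_, ?_, ?_⟩
  · intro i
    show (2 * j i + if x i ≤ a0 i + h0 / 2 ^ k * j i + h0 / 2 ^ (k+1) then 0 else 1) / 2 = j i
    split <;> omega
  · intro i
    show (2 * j i + if x i ≤ a0 i + h0 / 2 ^ k * j i + h0 / 2 ^ (k+1) then 0 else 1) ≤ 2 * j i + 1
    split <;> omega
  · intro i
    have hxi := hx i
    have hs : (0:ℝ) < h0 / 2 ^ k := by positivity
    have hpow : h0 / 2 ^ (k+1) = (h0 / 2 ^ k) / 2 := by rw [pow_succ]; ring
    simp only at hxi ⊢
    split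
    · rename_i hc
      rw [hpow] at hc ⊢
      push_cast
      constructor <;> nlinarith [hxi.1, hxi.2]
    · rename_i hc
      push_neg at hc
      rw [hpow] at hc ⊢
      push_cast
      constructor <;> nlinarith [hxi.1, hxi.2]

lemma dc_inter_null (hh : 0 < h0) (k : ℕ) {j j' : Fin n → ℕ} (hne : j ≠ j') :
    volume (dc a0 h0 k j ∩ dc a0 h0 k j') = 0 := by
  obtain ⟨i, hi⟩ := Function.ne_iff.mp hne
  have hs : (0:ℝ) < h0 / 2 ^ k := by positivity
  rcases lt_or_gt_of_ne hi with hlt | hlt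
  · refine measure_mono_null ?_ (volume_hyperplane n i (a0 i + h0 / 2 ^ k * j' i))
    · rintro x ⟨hx1, hx2⟩
      have h1 := (hx1 i).2
      have h2 := (hx2 i).1
      have hcast : (j i : ℝ) + 1 ≤ (j' i : ℝ) := by exact_mod_cast Nat.succ_le_of_lt hlt
      simp only at h1 h2
      have : x i ≤ a0 i + h0 / 2 ^ k * j' i := by nlinarith
      exact le_antisymm this h2
  · refine measure_mono_null ?_ (volume_hyperplane n i (a0 i + h0 / 2 ^ k * j i))
    · rintro x ⟨hx1, hx2⟩
      have h1 := (hx2 i).2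
      have h2 := (hx1 i).1
      have hcast : (j' i : ℝ) + 1 ≤ (j i : ℝ) := by exact_mod_cast Nat.succ_le_of_lt hlt
      simp only at h1 h2
      have : x i ≤ a0 i + h0 / 2 ^ k * j i := by nlinarith
      exact le_antisymm this h2

set_option maxHeartbeats 1000000 in
lemma chain_exists (hh : 0 < h0) {x : Fin n → ℝ} (hx : x ∈ Cube n a0 h0) :
    ∃ J : ℕ → (Fin n → ℕ), (∀ k i, J (k+1) i / 2 = J k i) ∧
      (∀ k, x ∈ dc a0 h0 k (J k)) ∧ (∀ k i, J k i < 2 ^ k) := by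
  choose f hf1 hf2 hf3 using fun (p : Σ' (k : ℕ) (j : Fin n → ℕ), x ∈ dc a0 h0 k j) =>
    exists_child hh p.1 p.2.1 p.2.2
  have base : x ∈ dc a0 h0 0 (fun _ => 0) := by rw [dc_zero]; exact hx
  let F : ∀ _ : ℕ, {j : Fin n → ℕ // x ∈ dc a0 h0 _ j} := fun k =>
    Nat.rec (motive := fun k => {j : Fin n → ℕ // x ∈ dc a0 h0 k j})
      ⟨fun _ => 0, base⟩ (fun k p => ⟨f ⟨k, p.1, p.2⟩, hf3 ⟨k, p.1, p.2⟩⟩) k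
  refine ⟨fun k => (F k).1, fun k i => hf1 ⟨k, (F k).1, (F k).2⟩ i, fun k => (F k).2, ?_⟩
  intro k
  induction k with
  | zero => intro i; simp [F]
  | succ k ih =>
    intro i
    have h2 : f ⟨k, (F k).1, (F k).2⟩ i ≤ 2 * (F k).1 i + 1 := hf2 ⟨k, (F k).1, (F k).2⟩ i
    have ih' : (F k).1 i < 2 ^ k := ih i
    show f ⟨k, (F k).1, (F k).2⟩ i < 2 ^ (k+1)
    calc f ⟨k, (F k).1, (F k).2⟩ i ≤ 2 * (F k).1 i + 1 := h2
      _ < 2 ^ (k+1) := by omega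

lemma chain_anc {J : ℕ → (Fin n → ℕ)} (hJ : ∀ k i, J (k+1) i / 2 = J k i) :
    ∀ k m i, J (k + m) i / 2 ^ m = J k i := by
  intro k m
  induction m with
  | zero => intro i; simp
  | succ m ih =>
    intro i
    have : J (k + (m+1)) i / 2 ^ (m+1) = (J (k + m + 1) i / 2) / 2 ^ m := by
      rw [Nat.div_div_eq_div_mul, pow_succ']
      rfl
    rw [this, hJ (k+m) i, ih i]

lemma tendsto_radius (hh : 0 < h0) :
    Tendsto (fun k : ℕ => h0 / 2 ^ (k+1)) atTop (nhdsWithin 0 (Set.Ioi 0)) := by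
  rw [tendsto_nhdsWithin_iff]
  constructor
  · have : (fun k : ℕ => h0 / 2 ^ (k+1)) = fun k => (h0/2) * (1/2 : ℝ) ^ k := by
      funext k
      rw [one_div, inv_pow, ← div_eq_mul_inv, div_div, ← pow_succ']
    rw [this]
    simpa using (tendsto_pow_atTop_nhds_zero_of_lt_one (by norm_num : (0:ℝ) ≤ 1/2)
      (by norm_num)).const_mul (h0/2)
  · exact Eventually.of_forall fun k => mem_Ioi.mpr (by positivity)

/-! ### Averages and BMO -/

variable {b : (Fin n → ℝ) → ℝ}

lemma lintegral_cube_le_bmo (a : Fin n → ℝ) {h : ℝ} (hh : 0 < h) :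
    ∫⁻ x in Cube n a h, ENNReal.ofReal |b x - intAvg n (Cube n a h) b| ≤
      bmoNorm n b * volume (Cube n a h) := by
  have h1 : setAvg n (Cube n a h) (fun y => |b y - intAvg n (Cube n a h) b|) ≤ bmoNorm n b :=
    le_iSup_of_le a (le_iSup_of_le h (le_iSup_of_le hh le_rfl))
  have hv0 := volume_cube_ne_zero n a hh
  have hvt := volume_cube_ne_top n a hh.le
  unfold setAvg at h1
  calc ∫⁻ x in Cube n a h, ENNReal.ofReal |b x - intAvg n (Cube n a h) b|
      = volume (Cube n a h) * ((volume (Cube n a h))⁻¹ *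
        ∫⁻ x in Cube n a h, ENNReal.ofReal |b x - intAvg n (Cube n a h) b|) := by
        rw [← mul_assoc, ENNReal.mul_inv_cancel hv0 hvt, one_mul]
    _ ≤ volume (Cube n a h) * bmoNorm n b := by exact mul_le_mul_right h1 _
    _ = bmoNorm n b * volume (Cube n a h) := mul_comm _ _

lemma intAvg_sub_le (hb : LocallyIntegrable b) (a : Fin n → ℝ) {h : ℝ} (hh : 0 < h) (c : ℝ) :
    |intAvg n (Cube n a h) b - c| ≤
      ((volume (Cube n a h)).toReal)⁻¹ *
        (∫⁻ x in Cube n a h, ENNReal.ofReal |b x - c|).toReal := by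
  set Q := Cube n a h with hQ
  have hI : IntegrableOn b Q volume := hb.integrableOn_isCompact (isCompact_cube n a hh.le)
  have hIc : IntegrableOn (fun x => b x - c) Q volume := hI.sub (integrableOn_const
    ((volume_cube_ne_top n a hh.le)))
  have hv : (0:ℝ) < (volume Q).toReal := by
    refine ENNReal.toReal_pos (volume_cube_ne_zero n a hh) (volume_cube_ne_top n a hh.le)
  have hsub : ∫ x in Q, (b x - c) = (∫ x in Q, b x) - (volume Q).toReal * c := by
    rw [integral_sub hI (integrableOn_const
      ((volume_cube_ne_top n a hh.le)))]
    rw [setIntegral_const, smul_eq_mul, measureReal_def]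
  have havg : intAvg n Q b - c = ((volume Q).toReal)⁻¹ * ∫ x in Q, (b x - c) := by
    rw [hsub, intAvg]; field_simp
  have habs : |intAvg n Q b - c| ≤ ((volume Q).toReal)⁻¹ * ∫ x in Q, |b x - c| := by
    rw [havg, abs_mul, abs_of_nonneg (by positivity : (0:ℝ) ≤ ((volume Q).toReal)⁻¹)]
    refine mul_le_mul_of_nonneg_left ?_ (by positivity)
    simpa [Real.norm_eq_abs] using norm_integral_le_integral_norm (μ := volume.restrict Q) (fun x => b x - c)
  refine habs.trans ?_
  gcongr
  rw [integral_eq_lintegral_of_nonneg_ae (Eventually.of_forall fun x => abs_nonneg _)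
    (hIc.abs.aestronglyMeasurable)]

lemma intAvg_sub_le_of_lintegral_le (hb : LocallyIntegrable b) (a : Fin n → ℝ) {h : ℝ}
    (hh : 0 < h) (c : ℝ) {t : ℝ≥0∞} (htop : t ≠ ⊤)
    (hle : ∫⁻ x in Cube n a h, ENNReal.ofReal |b x - c| ≤ t * volume (Cube n a h)) :
    |intAvg n (Cube n a h) b - c| ≤ t.toReal := by
  have hv : (0:ℝ) < (volume (Cube n a h)).toReal :=
    ENNReal.toReal_pos (volume_cube_ne_zero n a hh) (volume_cube_ne_top n a hh.le)
  have h1 := intAvg_sub_le hb a hh c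
  have h2 : (∫⁻ x in Cube n a h, ENNReal.ofReal |b x - c|).toReal ≤
      t.toReal * (volume (Cube n a h)).toReal := by
    rw [← ENNReal.toReal_mul]
    exact ENNReal.toReal_mono (ENNReal.mul_ne_top htop (volume_cube_ne_top n a hh.le)) hle
  calc |intAvg n (Cube n a h) b - c| ≤ _ := h1
    _ ≤ ((volume (Cube n a h)).toReal)⁻¹ * (t.toReal * (volume (Cube n a h)).toReal) := by
        gcongr
    _ = t.toReal := by field_simp

/-! ### The distribution function -/

/-- normalized sup over all cubes of the superlevel-measure at `t` -/
def Fdist (n : ℕ) (b : (Fin n → ℝ) → ℝ) (t : ℝ) : ℝ≥0∞ :=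
  ⨆ (a : Fin n → ℝ) (h : ℝ) (_ : 0 < h),
    volume (Cube n a h ∩ {x | t < |b x - intAvg n (Cube n a h) b|}) / volume (Cube n a h)

lemma Fdist_le_one (t : ℝ) : Fdist n b t ≤ 1 := by
  refine iSup_le fun a => iSup_le fun h => iSup_le fun hh => ?_
  refine ENNReal.div_le_of_le_mul ?_
  rw [one_mul]
  exact measure_mono inter_subset_left

lemma measure_le_Fdist (a : Fin n → ℝ) {h : ℝ} (hh : 0 < h) (t : ℝ) :
    volume (Cube n a h ∩ {x | t < |b x - intAvg n (Cube n a h) b|}) ≤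
      Fdist n b t * volume (Cube n a h) := by
  have h1 : volume (Cube n a h ∩ {x | t < |b x - intAvg n (Cube n a h) b|}) /
      volume (Cube n a h) ≤ Fdist n b t :=
    le_iSup_of_le a (le_iSup_of_le h (le_iSup_of_le hh le_rfl))
  exact (ENNReal.div_le_iff_le_mul (Or.inl (volume_cube_ne_zero n a hh))
    (Or.inl (volume_cube_ne_top n a hh.le))).mp h1

/-! ### Calderón–Zygmund selection -/

/-- `∫_{Q_{k,j}} |b - b_{Q_0}|` -/
def Aint (b : (Fin n → ℝ) → ℝ) (a0 : Fin n → ℝ) (h0 : ℝ) (k : ℕ) (j : Fin n → ℕ) : ℝ≥0∞ :=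
  ∫⁻ x in dc a0 h0 k j, ENNReal.ofReal |b x - intAvg n (Cube n a0 h0) b|

/-- the stopping condition: the average of `|b - b_{Q_0}|` exceeds `2‖b‖` -/
def Cnd (b : (Fin n → ℝ) → ℝ) (a0 : Fin n → ℝ) (h0 : ℝ) (k : ℕ) (j : Fin n → ℕ) : Prop :=
  2 * bmoNorm n b * volume (dc a0 h0 k j) < Aint b a0 h0 k j

/-- selected (maximal stopping) dyadic cubes -/
def Sel (b : (Fin n → ℝ) → ℝ) (a0 : Fin n → ℝ) (h0 : ℝ) (p : ℕ × (Fin n → ℕ)) : Prop :=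
  (∀ i, p.2 i < 2 ^ p.1) ∧ Cnd b a0 h0 p.1 p.2 ∧
    ∀ m, 0 < m → m ≤ p.1 → ¬ Cnd b a0 h0 (p.1 - m) (fun i => p.2 i / 2 ^ m)

lemma sel_null_inter (hh : 0 < h0) {p q : ℕ × (Fin n → ℕ)}
    (hp : Sel b a0 h0 p) (hq : Sel b a0 h0 q) (hne : p ≠ q) (hk : p.1 ≤ q.1) :
    volume (dc a0 h0 p.1 p.2 ∩ dc a0 h0 q.1 q.2) = 0 := by
  obtain ⟨k, j⟩ := p
  obtain ⟨k', j'⟩ := q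
  simp only at hk ⊢
  by_cases hanc : (fun i => j' i / 2 ^ (k' - k)) = j
  · -- the level-k ancestor of q is p : impossible
    exfalso
    rcases Nat.eq_or_lt_of_le hk with heq | hlt
    · subst heq
      have : j = j' := by
        funext i
        have := congrFun hanc i
        simpa using this.symm
      exact hne (by rw [this])
    · have hm : 0 < k' - k := by omega
      have := hq.2.2 (k' - k) hm (by omega)
      rw [show k' - (k' - k) = k by omega, hanc] at this
      exact this hp.2.1
  · have hsub : dc a0 h0 k' j' ⊆ dc a0 h0 k (fun i => j' i / 2 ^ (k' - k)) := by
      have := dc_subset_anc (a0 := a0) hh k (k' - k) j'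
      rwa [show k + (k' - k) = k' by omega] at this
    refine measure_mono_null ?_
      (dc_inter_null (a0 := a0) hh k hanc :
        volume (dc a0 h0 k (fun i => j' i / 2 ^ (k' - k)) ∩ dc a0 h0 k j) = 0)
    exact fun x hx => ⟨hsub hx.2, hx.1⟩

lemma sel_aedisjoint (hh : 0 < h0) :
    Pairwise (Function.onFun (MeasureTheory.AEDisjoint volume)
      fun p : {p : ℕ × (Fin n → ℕ) // Sel b a0 h0 p} => dc a0 h0 p.1.1 p.1.2) := by
  intro p q hpq
  have hne : p.1 ≠ q.1 := fun h => hpq (Subtype.ext h)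
  rcases le_total p.1.1 q.1.1 with hk | hk
  · exact sel_null_inter hh p.2 q.2 hne hk
  · have := sel_null_inter hh q.2 p.2 hne.symm hk
    rwa [Set.inter_comm] at this

lemma sel_tsum_le (hh : 0 < h0) (hB0 : bmoNorm n b ≠ 0) (hBt : bmoNorm n b ≠ ⊤) :
    ∑' p : {p : ℕ × (Fin n → ℕ) // Sel b a0 h0 p}, volume (dc a0 h0 p.1.1 p.1.2) ≤
      volume (Cube n a0 h0) / 2 := by
  set B := bmoNorm n b with hB
  have hnm : ∀ p : {p : ℕ × (Fin n → ℕ) // Sel b a0 h0 p},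
      NullMeasurableSet (dc a0 h0 p.1.1 p.1.2) volume := fun p =>
    (measurableSet_cube n _ (by positivity : (0:ℝ) ≤ h0 / 2 ^ p.1.1)).nullMeasurableSet
  have key : 2 * B * ∑' p : {p : ℕ × (Fin n → ℕ) // Sel b a0 h0 p},
      volume (dc a0 h0 p.1.1 p.1.2) ≤ B * volume (Cube n a0 h0) := by
    rw [← ENNReal.tsum_mul_left]
    calc ∑' p : {p : ℕ × (Fin n → ℕ) // Sel b a0 h0 p}, 2 * B * volume (dc a0 h0 p.1.1 p.1.2)
        ≤ ∑' p : {p : ℕ × (Fin n → ℕ) // Sel b a0 h0 p}, Aint b a0 h0 p.1.1 p.1.2 :=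
          ENNReal.tsum_le_tsum fun p => (p.2.2.1).le
      _ = ∫⁻ x in ⋃ p : {p : ℕ × (Fin n → ℕ) // Sel b a0 h0 p}, dc a0 h0 p.1.1 p.1.2,
            ENNReal.ofReal |b x - intAvg n (Cube n a0 h0) b| :=
          (lintegral_iUnion₀ hnm (sel_aedisjoint hh) _).symm
      _ ≤ ∫⁻ x in Cube n a0 h0, ENNReal.ofReal |b x - intAvg n (Cube n a0 h0) b| := by
          refine lintegral_mono_set (iUnion_subset fun p => ?_)
          exact dc_subset_root hh p.1.1 p.1.2 p.2.1
      _ ≤ B * volume (Cube n a0 h0) := lintegral_cube_le_bmo a0 hh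
  -- cancel B
  have h2B : (2 * B) ≠ 0 := by simp [hB0]
  have h2Bt : (2 * B) ≠ ⊤ := by
    simp only [ne_eq, ENNReal.mul_eq_top]
    push_neg
    exact ⟨fun _ => hBt, by simp⟩
  calc ∑' p : {p : ℕ × (Fin n → ℕ) // Sel b a0 h0 p}, volume (dc a0 h0 p.1.1 p.1.2)
      = (2 * B)⁻¹ * (2 * B * ∑' p : {p : ℕ × (Fin n → ℕ) // Sel b a0 h0 p},
          volume (dc a0 h0 p.1.1 p.1.2)) := by
        rw [← mul_assoc, ENNReal.inv_mul_cancel h2B h2Bt, one_mul]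
    _ ≤ (2 * B)⁻¹ * (B * volume (Cube n a0 h0)) := mul_le_mul_right key _
    _ = volume (Cube n a0 h0) / 2 := by
        rw [ENNReal.mul_inv (Or.inl (by norm_num)) (Or.inl (by norm_num)), div_eq_mul_inv]
        calc (2:ℝ≥0∞)⁻¹ * B⁻¹ * (B * volume (Cube n a0 h0))
            = (B⁻¹ * B) * (volume (Cube n a0 h0) * 2⁻¹) := by ring
          _ = volume (Cube n a0 h0) * 2⁻¹ := by
              rw [ENNReal.inv_mul_cancel hB0 hBt, one_mul]

lemma volume_dc_succ (hh : 0 < h0) (k : ℕ) (j j' : Fin n → ℕ) :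
    volume (dc a0 h0 k j) = 2 ^ n * volume (dc a0 h0 (k+1) j') := by
  rw [dc, dc, volume_cube n _ (by positivity : (0:ℝ) ≤ h0 / 2 ^ k),
    volume_cube n _ (by positivity : (0:ℝ) ≤ h0 / 2 ^ (k+1))]
  have hs : (h0 / 2 ^ k : ℝ) = 2 * (h0 / 2 ^ (k+1)) := by
    rw [pow_succ]; ring
  rw [hs, mul_pow, ENNReal.ofReal_mul (by positivity : (0:ℝ) ≤ 2 ^ n),
    ENNReal.ofReal_pow (by norm_num : (0:ℝ) ≤ 2)]
  norm_num

lemma sel_avg_le (hb : LocallyIntegrable b) (hh : 0 < h0)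
    (hB0 : bmoNorm n b ≠ 0) (hBt : bmoNorm n b ≠ ⊤)
    {p : ℕ × (Fin n → ℕ)} (hp : Sel b a0 h0 p) :
    Aint b a0 h0 p.1 p.2 ≤ 2 ^ (n+1) * bmoNorm n b * volume (dc a0 h0 p.1 p.2) := by
  obtain ⟨k, j⟩ := p
  match k with
  | 0 =>
    exfalso
    have hj : j = fun _ => 0 := by
      funext i
      have := hp.1 i
      simpa [Nat.lt_one_iff] using this
    have hcnd := hp.2.1
    rw [Cnd] at hcnd
    have hsub : dc a0 h0 0 j = Cube n a0 h0 := by rw [hj, dc_zero]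
    have hA : Aint b a0 h0 0 j ≤ bmoNorm n b * volume (Cube n a0 h0) := by
      rw [Aint, hsub]; exact lintegral_cube_le_bmo a0 hh
    rw [hsub] at hcnd
    have hv0 := volume_cube_ne_zero n a0 hh
    have hvt := volume_cube_ne_top n a0 hh.le
    have : 2 * bmoNorm n b * volume (Cube n a0 h0) < bmoNorm n b * volume (Cube n a0 h0) :=
      lt_of_lt_of_le hcnd hA
    have hle : bmoNorm n b * volume (Cube n a0 h0) ≤ 2 * bmoNorm n b * volume (Cube n a0 h0) := by
      rw [mul_assoc]
      exact le_mul_of_one_le_left zero_le (by norm_num)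
    exact absurd this (not_lt.mpr hle)
  | k + 1 =>
    have hnc := hp.2.2 1 one_pos (by omega)
    rw [Cnd] at hnc
    push_neg at hnc
    simp only [Nat.add_sub_cancel, pow_one] at hnc
    calc Aint b a0 h0 (k+1) j
        ≤ Aint b a0 h0 k (fun i => j i / 2) :=
          lintegral_mono_set (dc_subset_parent hh k j)
      _ ≤ 2 * bmoNorm n b * volume (dc a0 h0 k (fun i => j i / 2)) := hnc
      _ = 2 * bmoNorm n b * (2 ^ n * volume (dc a0 h0 (k+1) j)) := by
          rw [volume_dc_succ hh k _ j]
      _ = 2 ^ (n+1) * bmoNorm n b * volume (dc a0 h0 (k+1) j) := by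
          rw [pow_succ]; ring

lemma intAvg_eq_setAverage (s : Set (Fin n → ℝ)) :
    intAvg n s b = ⨍ y in s, b y := by
  rw [setAverage_eq, smul_eq_mul]; rfl

set_option maxHeartbeats 1000000 in
lemma offsel (hb : LocallyIntegrable b) (hh : 0 < h0)
    (hB0 : bmoNorm n b ≠ 0) (hBt : bmoNorm n b ≠ ⊤) :
    volume ((Cube n a0 h0 ∩
      {x | 2 * (bmoNorm n b).toReal < |b x - intAvg n (Cube n a0 h0) b|}) \
      ⋃ p : {p : ℕ × (Fin n → ℕ) // Sel b a0 h0 p}, dc a0 h0 p.1.1 p.1.2) = 0 := by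
  classical
  set c0 := intAvg n (Cube n a0 h0) b with hc0
  set M := (bmoNorm n b).toReal with hM
  have hMpos : 0 < M := ENNReal.toReal_pos hB0 hBt
  have hae := IsUnifLocDoublingMeasure.ae_tendsto_average
    (μ := (volume : Measure (Fin n → ℝ))) hb 1
  refine measure_mono_null ?_ (ae_iff.mp hae)
  rintro x ⟨⟨hxQ, hxgt⟩, hxU⟩
  simp only [mem_setOf_eq] at hxgt ⊢
  intro hP
  obtain ⟨J, hJhalf, hJmem, hJvalid⟩ := chain_exists hh hxQ
  -- no cube in the chain satisfies the stopping condition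
  have hnc : ∀ k, ¬ Cnd b a0 h0 k (J k) := by
    by_contra hex
    push_neg at hex
    obtain ⟨k, hk⟩ := hex
    have hexx : ∃ k, Cnd b a0 h0 k (J k) := ⟨k, hk⟩
    let k0 := Nat.find hexx
    have hsel : Sel b a0 h0 (k0, J k0) := by
      refine ⟨hJvalid k0, Nat.find_spec hexx, fun m hm hmk => ?_⟩
      have hancJ : (fun i => J k0 i / 2 ^ m) = J (k0 - m) := by
        funext i
        have := chain_anc hJhalf (k0 - m) m i
        rwa [Nat.sub_add_cancel hmk] at this
      simp only
      rw [hancJ]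
      exact Nat.find_min hexx (by omega)
    exact hxU (Set.mem_iUnion.mpr ⟨⟨(k0, J k0), hsel⟩, hJmem k0⟩)
  -- hence all chain averages are at most 2M
  have havg : ∀ k, |intAvg n (dc a0 h0 k (J k)) b - c0| ≤ 2 * M := by
    intro k
    have h1 : Aint b a0 h0 k (J k) ≤ 2 * bmoNorm n b * volume (dc a0 h0 k (J k)) :=
      not_lt.mp (hnc k)
    have h2 := intAvg_sub_le_of_lintegral_le (b := b) hb
      (fun i => a0 i + h0 / 2 ^ k * J k i) (by positivity : (0:ℝ) < h0 / 2 ^ k) c0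
      (t := 2 * bmoNorm n b) (by finiteness) h1
    calc |intAvg n (dc a0 h0 k (J k)) b - c0| ≤ (2 * bmoNorm n b).toReal := h2
      _ = 2 * M := by rw [ENNReal.toReal_mul, ENNReal.toReal_ofNat]
  -- centers and radii of the chain cubes as closed balls
  set wc : ℕ → (Fin n → ℝ) :=
    fun k => fun i => (a0 i + h0 / 2 ^ k * J k i) + (h0 / 2 ^ k) / 2 with hwc
  set δ : ℕ → ℝ := fun k => h0 / 2 ^ (k+1) with hδ
  have hball : ∀ k, closedBall (wc k) (δ k) = dc a0 h0 k (J k) := by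
    intro k
    have hr : δ k = (h0 / 2 ^ k) / 2 := by rw [hδ]; simp only; rw [pow_succ]; ring
    rw [hr, dc, cube_eq_closedBall n _ (by positivity : (0:ℝ) ≤ h0 / 2 ^ k)]
  have hmem : ∀ᶠ k in atTop, x ∈ closedBall (wc k) (1 * δ k) := by
    refine Eventually.of_forall fun k => ?_
    rw [one_mul, hball]
    exact hJmem k
  have htend := hP wc δ (tendsto_radius hh) hmem
  have htend' : Tendsto (fun k => intAvg n (dc a0 h0 k (J k)) b) atTop (𝓝 (b x)) := by
    refine htend.congr fun k => ?_
    rw [← hball k, intAvg_eq_setAverage]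
  -- conclude  |b x - c0| ≤ 2M , contradiction
  have hub : ∀ k, |b x - c0| ≤ |b x - intAvg n (dc a0 h0 k (J k)) b| + 2 * M := by
    intro k
    calc |b x - c0| ≤ |b x - intAvg n (dc a0 h0 k (J k)) b| +
        |intAvg n (dc a0 h0 k (J k)) b - c0| := abs_sub_le _ _ _
      _ ≤ _ := by have := havg k; linarith
  have hlim : Tendsto (fun k => |b x - intAvg n (dc a0 h0 k (J k)) b| + 2 * M) atTop
      (𝓝 (0 + 2 * M)) := by
    refine Tendsto.add_const _ ?_
    have h1 : Tendsto (fun k => b x - intAvg n (dc a0 h0 k (J k)) b) atTop (𝓝 (b x - b x)) :=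
      tendsto_const_nhds.sub htend'
    have := h1.abs
    simpa using this
  have : |b x - c0| ≤ 0 + 2 * M := ge_of_tendsto hlim (Eventually.of_forall hub)
  rw [zero_add] at this
  linarith

set_option maxHeartbeats 1000000 in
lemma main_step (hb : LocallyIntegrable b) (hmb : Measurable b)
    (hB0 : bmoNorm n b ≠ 0) (hBt : bmoNorm n b ≠ ⊤) (hh : 0 < h0)
    {t : ℝ} (ht : 0 ≤ t) :
    volume (Cube n a0 h0 ∩
      {x | t + 2 ^ (n+1) * (bmoNorm n b).toReal < |b x - intAvg n (Cube n a0 h0) b|}) ≤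
      Fdist n b t * (volume (Cube n a0 h0) / 2) := by
  classical
  set c0 := intAvg n (Cube n a0 h0) b with hc0
  set M := (bmoNorm n b).toReal with hM
  have hMpos : 0 < M := ENNReal.toReal_pos hB0 hBt
  set S : Set (Fin n → ℝ) := {x | t + 2 ^ (n+1) * M < |b x - c0|} with hS
  set U : Set (Fin n → ℝ) :=
    ⋃ p : {p : ℕ × (Fin n → ℕ) // Sel b a0 h0 p}, dc a0 h0 p.1.1 p.1.2 with hU
  have hsplit : volume (Cube n a0 h0 ∩ S) ≤
      volume ((Cube n a0 h0 ∩ S) ∩ U) + volume ((Cube n a0 h0 ∩ S) \ U) :=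
    measure_le_inter_add_diff volume _ U
  -- the part off the selected cubes is null
  have hnull : volume ((Cube n a0 h0 ∩ S) \ U) = 0 := by
    refine measure_mono_null ?_ (offsel (a0 := a0) hb hh hB0 hBt)
    rintro x ⟨⟨hxQ, hxS⟩, hxU⟩
    refine ⟨⟨hxQ, ?_⟩, hxU⟩
    rw [hS] at hxS
    simp only [mem_setOf_eq] at hxS ⊢
    have h2 : (2:ℝ) ≤ 2 ^ (n+1) := by
      calc (2:ℝ) = 2 ^ 1 := (pow_one 2).symm
      _ ≤ 2 ^ (n+1) := by
        apply pow_le_pow_right₀ (by norm_num) (by omega)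
    nlinarith
  -- the part inside the selected cubes
  have hsel : volume ((Cube n a0 h0 ∩ S) ∩ U) ≤ Fdist n b t * (volume (Cube n a0 h0) / 2) := by
    rw [hU, inter_iUnion]
    refine (measure_iUnion_le _).trans ?_
    have hterm : ∀ p : {p : ℕ × (Fin n → ℕ) // Sel b a0 h0 p},
        volume ((Cube n a0 h0 ∩ S) ∩ dc a0 h0 p.1.1 p.1.2) ≤
          Fdist n b t * volume (dc a0 h0 p.1.1 p.1.2) := by
      intro p
      have hdiff : |intAvg n (dc a0 h0 p.1.1 p.1.2) b - c0| ≤ 2 ^ (n+1) * M := by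
        have h1 := sel_avg_le hb hh hB0 hBt p.2
        have h2 := intAvg_sub_le_of_lintegral_le (b := b) hb
          (fun i => a0 i + h0 / 2 ^ p.1.1 * p.1.2 i)
          (by positivity : (0:ℝ) < h0 / 2 ^ p.1.1) c0
          (t := 2 ^ (n+1) * bmoNorm n b)
          (ENNReal.mul_ne_top (ENNReal.pow_ne_top ENNReal.ofNat_ne_top) hBt) h1
        calc |intAvg n (dc a0 h0 p.1.1 p.1.2) b - c0| ≤ (2 ^ (n+1) * bmoNorm n b).toReal := h2
          _ = 2 ^ (n+1) * M := by
              rw [ENNReal.toReal_mul, ENNReal.toReal_pow, ENNReal.toReal_ofNat]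
      have hsub : (Cube n a0 h0 ∩ S) ∩ dc a0 h0 p.1.1 p.1.2 ⊆
          dc a0 h0 p.1.1 p.1.2 ∩
            {x | t < |b x - intAvg n (dc a0 h0 p.1.1 p.1.2) b|} := by
        rintro x ⟨⟨_, hxS⟩, hxp⟩
        refine ⟨hxp, ?_⟩
        simp only [hS, mem_setOf_eq] at hxS ⊢
        have htri : |b x - c0| ≤ |b x - intAvg n (dc a0 h0 p.1.1 p.1.2) b| +
            |intAvg n (dc a0 h0 p.1.1 p.1.2) b - c0| := abs_sub_le _ _ _
        linarith
      refine (measure_mono hsub).trans ?_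
      exact measure_le_Fdist (fun i => a0 i + h0 / 2 ^ p.1.1 * p.1.2 i)
        (by positivity : (0:ℝ) < h0 / 2 ^ p.1.1) t
    calc ∑' p : {p : ℕ × (Fin n → ℕ) // Sel b a0 h0 p},
          volume ((Cube n a0 h0 ∩ S) ∩ dc a0 h0 p.1.1 p.1.2)
        ≤ ∑' p : {p : ℕ × (Fin n → ℕ) // Sel b a0 h0 p},
            Fdist n b t * volume (dc a0 h0 p.1.1 p.1.2) := ENNReal.tsum_le_tsum hterm
      _ = Fdist n b t * ∑' p : {p : ℕ × (Fin n → ℕ) // Sel b a0 h0 p},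
            volume (dc a0 h0 p.1.1 p.1.2) := ENNReal.tsum_mul_left
      _ ≤ Fdist n b t * (volume (Cube n a0 h0) / 2) :=
          mul_le_mul_right (sel_tsum_le hh hB0 hBt) _
  calc volume (Cube n a0 h0 ∩ S) ≤ _ := hsplit
    _ ≤ Fdist n b t * (volume (Cube n a0 h0) / 2) + 0 := by
        rw [hnull]; exact add_le_add_left hsel 0
    _ = Fdist n b t * (volume (Cube n a0 h0) / 2) := add_zero _

lemma Fdist_step (hb : LocallyIntegrable b) (hmb : Measurable b)
    (hB0 : bmoNorm n b ≠ 0) (hBt : bmoNorm n b ≠ ⊤) {t : ℝ} (ht : 0 ≤ t) :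
    Fdist n b (t + 2 ^ (n+1) * (bmoNorm n b).toReal) ≤ Fdist n b t / 2 := by
  refine iSup_le fun a => iSup_le fun h => iSup_le fun hh => ?_
  have h1 := main_step (a0 := a) (h0 := h) hb hmb hB0 hBt hh ht
  refine ENNReal.div_le_of_le_mul ?_
  calc volume (Cube n a h ∩
      {x | t + 2 ^ (n+1) * (bmoNorm n b).toReal < |b x - intAvg n (Cube n a h) b|})
      ≤ Fdist n b t * (volume (Cube n a h) / 2) := h1
    _ = Fdist n b t / 2 * volume (Cube n a h) := by
        rw [div_eq_mul_inv, div_eq_mul_inv]; ring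

lemma Fdist_pow (hb : LocallyIntegrable b) (hmb : Measurable b)
    (hB0 : bmoNorm n b ≠ 0) (hBt : bmoNorm n b ≠ ⊤) (k : ℕ) :
    Fdist n b (k * (2 ^ (n+1) * (bmoNorm n b).toReal)) ≤ 2⁻¹ ^ k := by
  have hM : 0 ≤ (bmoNorm n b).toReal := ENNReal.toReal_nonneg
  have hJ : 0 ≤ 2 ^ (n+1) * (bmoNorm n b).toReal := by positivity
  induction k with
  | zero => simpa using Fdist_le_one (b := b) 0
  | succ k ih =>
    have harg : ((k+1 : ℕ) : ℝ) * (2 ^ (n+1) * (bmoNorm n b).toReal) =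
        (k : ℝ) * (2 ^ (n+1) * (bmoNorm n b).toReal) +
          2 ^ (n+1) * (bmoNorm n b).toReal := by push_cast; ring
    rw [harg]
    calc Fdist n b _ ≤ Fdist n b ((k : ℝ) * (2 ^ (n+1) * (bmoNorm n b).toReal)) / 2 :=
        Fdist_step hb hmb hB0 hBt (by positivity)
      _ ≤ 2⁻¹ ^ k / 2 := ENNReal.div_le_div_right ih 2
      _ = 2⁻¹ ^ (k+1) := by rw [pow_succ, div_eq_mul_inv]

set_option maxHeartbeats 1600000 in
lemma core (hb : LocallyIntegrable b) (hmb : Measurable b)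
    (hB0 : bmoNorm n b ≠ 0) (hBt : bmoNorm n b ≠ ⊤) (a0 : Fin n → ℝ) {h0 : ℝ} (hh : 0 < h0) :
    setAvg n (Cube n a0 h0) (fun y =>
      Real.exp (((2 : ℝ) ^ (n + 2))⁻¹ / (bmoNorm n b).toReal *
        |b y - intAvg n (Cube n a0 h0) b|)) ≤ ENNReal.ofReal 19 := by
  classical
  set c0 := intAvg n (Cube n a0 h0) b with hc0
  set M := (bmoNorm n b).toReal with hM
  have hMpos : 0 < M := ENNReal.toReal_pos hB0 hBt
  set α : ℝ := ((2 : ℝ) ^ (n + 2))⁻¹ / M with hα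
  have hαpos : 0 < α := by rw [hα]; positivity
  set Jr : ℝ := 2 ^ (n+1) * M with hJr
  have hJrpos : 0 < Jr := by rw [hJr]; positivity
  set E : ℕ → Set (Fin n → ℝ) := fun k =>
    Cube n a0 h0 ∩ (fun x => |b x - c0|) ⁻¹' (Set.Ico ((k:ℝ) * Jr) (((k:ℝ)+1) * Jr)) with hE
  have habs : Measurable fun x => |b x - c0| := (hmb.sub measurable_const).abs
  have hmE : ∀ k, MeasurableSet (E k) := fun k =>
    (measurableSet_cube n a0 hh.le).inter (habs measurableSet_Ico)
  have hcover : Cube n a0 h0 = ⋃ k, E k := by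
    ext x
    constructor
    · intro hx
      refine mem_iUnion.mpr ⟨⌊|b x - c0| / Jr⌋₊, hx, ?_, ?_⟩
      · rw [← le_div_iff₀ hJrpos]
        exact Nat.floor_le (by positivity)
      · rw [← div_lt_iff₀ hJrpos]
        exact Nat.lt_floor_add_one _
    · intro hx
      obtain ⟨k, hk⟩ := mem_iUnion.mp hx
      exact hk.1
  have hdisj : Pairwise (Function.onFun Disjoint E) := by
    intro k k' hne
    rw [Function.onFun]
    refine Set.disjoint_left.mpr ?_
    rintro x ⟨_, hx⟩ ⟨_, hx'⟩
    simp only [mem_preimage, mem_Ico] at hx hx'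
    rcases hne.lt_or_gt with hlt | hlt
    · have hcast : ((k:ℝ)+1) ≤ (k':ℝ) := by exact_mod_cast hlt
      nlinarith [hx.2, hx'.1]
    · have hcast : ((k':ℝ)+1) ≤ (k:ℝ) := by exact_mod_cast hlt
      nlinarith [hx'.2, hx.1]
  have hbound : ∀ k : ℕ, ∫⁻ x in E k, ENNReal.ofReal (Real.exp (α * |b x - c0|)) ≤
      ENNReal.ofReal (Real.exp (((k:ℝ)+1)/2)) * volume (E k) := by
    intro k
    have hval : α * (((k:ℝ)+1) * Jr) = ((k:ℝ)+1)/2 := by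
      rw [hα, hJr]
      have h2 : (2:ℝ)^(n+2) = 2 * 2^(n+1) := by rw [pow_succ]; ring
      rw [h2]
      field_simp
    calc ∫⁻ x in E k, ENNReal.ofReal (Real.exp (α * |b x - c0|))
        ≤ ∫⁻ _ in E k, ENNReal.ofReal (Real.exp (((k:ℝ)+1)/2)) := by
          refine setLIntegral_mono' (hmE k) fun x hx => ?_
          refine ENNReal.ofReal_le_ofReal (Real.exp_le_exp.mpr ?_)
          rw [← hval]
          have hub := hx.2.2
          simp only [mem_preimage, mem_Ico] at hub ⊢
          exact mul_le_mul_of_nonneg_left (le_of_lt hub) hαpos.le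
      _ = ENNReal.ofReal (Real.exp (((k:ℝ)+1)/2)) * volume (E k) := setLIntegral_const _ _
  have hvol : ∀ k : ℕ, volume (E k) ≤ 2 * 2⁻¹ ^ k * volume (Cube n a0 h0) := by
    intro k
    match k with
    | 0 =>
      calc volume (E 0) ≤ volume (Cube n a0 h0) := measure_mono inter_subset_left
        _ ≤ 2 * 2⁻¹ ^ 0 * volume (Cube n a0 h0) := by
            rw [pow_zero, mul_one]
            exact le_mul_of_one_le_left zero_le (by norm_num)
    | m + 1 =>
      have hsub : E (m+1) ⊆ Cube n a0 h0 ∩ {x | (m:ℝ) * Jr < |b x - c0|} := by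
        rintro x ⟨hxQ, hx⟩
        simp only [mem_preimage, mem_Ico] at hx
        refine ⟨hxQ, ?_⟩
        simp only [mem_setOf_eq]
        have h1 : (m:ℝ) * Jr < ((m+1:ℕ):ℝ) * Jr := by
          push_cast
          nlinarith
        exact lt_of_lt_of_le h1 hx.1
      calc volume (E (m+1)) ≤ volume (Cube n a0 h0 ∩ {x | (m:ℝ) * Jr < |b x - c0|}) :=
            measure_mono hsub
        _ ≤ Fdist n b ((m:ℝ) * Jr) * volume (Cube n a0 h0) := by
            rw [hc0]
            exact measure_le_Fdist a0 hh _
        _ ≤ 2⁻¹ ^ m * volume (Cube n a0 h0) := by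
            refine mul_le_mul_left ?_ _
            rw [hJr, hM]
            exact Fdist_pow hb hmb hB0 hBt m
        _ = 2 * 2⁻¹ ^ (m+1) * volume (Cube n a0 h0) := by
            congr 1
            have : (2:ℝ≥0∞) * 2⁻¹ ^ (m+1) = (2 * 2⁻¹) * 2⁻¹ ^ m := by rw [pow_succ]; ring
            rw [this, ENNReal.mul_inv_cancel (by norm_num) (by norm_num), one_mul]
  -- the geometric series bound
  have he165 : Real.exp (1/2) ≤ 1.65 := by
    have hsq : Real.exp (1/2) * Real.exp (1/2) = Real.exp 1 := by
      rw [← Real.exp_add]; norm_num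
    nlinarith [Real.exp_one_lt_d9, Real.exp_pos (1/2)]
  have hterm : ∀ k : ℕ, ENNReal.ofReal (Real.exp (((k:ℝ)+1)/2)) * (2 * 2⁻¹ ^ k) ≤
      ENNReal.ofReal 3.3 * (ENNReal.ofReal 0.825) ^ k := by
    intro k
    have hexp : Real.exp (((k:ℝ)+1)/2) = Real.exp (1/2) * Real.exp (1/2) ^ k := by
      rw [← Real.exp_nat_mul, ← Real.exp_add]
      congr 1
      push_cast
      ring
    have h2 : (2:ℝ≥0∞) = ENNReal.ofReal 2 := by simp
    have hhalf : (2:ℝ≥0∞)⁻¹ = ENNReal.ofReal 0.5 := by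
      rw [h2, ← ENNReal.ofReal_inv_of_pos (by norm_num)]
      norm_num
    calc ENNReal.ofReal (Real.exp (((k:ℝ)+1)/2)) * (2 * 2⁻¹ ^ k)
        = (ENNReal.ofReal (Real.exp (1/2)) * 2) *
            (ENNReal.ofReal (Real.exp (1/2)) * 2⁻¹) ^ k := by
          rw [hexp, ENNReal.ofReal_mul (Real.exp_nonneg _),
            ENNReal.ofReal_pow (Real.exp_nonneg _)]
          ring
      _ ≤ (ENNReal.ofReal 1.65 * 2) * (ENNReal.ofReal 1.65 * 2⁻¹) ^ k := by
          have hle : ENNReal.ofReal (Real.exp (1/2)) ≤ ENNReal.ofReal 1.65 :=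
            ENNReal.ofReal_le_ofReal he165
          exact mul_le_mul' (mul_le_mul_left hle 2)
            (pow_le_pow_left' (mul_le_mul_left hle _) k)
      _ = ENNReal.ofReal 3.3 * (ENNReal.ofReal 0.825) ^ k := by
          rw [hhalf, h2, ← ENNReal.ofReal_mul (by norm_num), ← ENNReal.ofReal_mul (by norm_num)]
          norm_num
  have hsum : ∑' k : ℕ, ENNReal.ofReal 3.3 * (ENNReal.ofReal 0.825) ^ k ≤
      ENNReal.ofReal 19 := by
    rw [ENNReal.tsum_mul_left, ENNReal.tsum_geometric]
    have h1 : (1:ℝ≥0∞) - ENNReal.ofReal 0.825 = ENNReal.ofReal 0.175 := by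
      rw [← ENNReal.ofReal_one, ← ENNReal.ofReal_sub _ (by norm_num)]
      norm_num
    rw [h1, ← ENNReal.ofReal_inv_of_pos (by norm_num), ← ENNReal.ofReal_mul (by norm_num)]
    exact ENNReal.ofReal_le_ofReal (by norm_num)
  -- assemble
  have hint : ∫⁻ x in Cube n a0 h0, ENNReal.ofReal (Real.exp (α * |b x - c0|)) ≤
      ENNReal.ofReal 19 * volume (Cube n a0 h0) := by
    calc ∫⁻ x in Cube n a0 h0, ENNReal.ofReal (Real.exp (α * |b x - c0|))
        = ∑' k : ℕ, ∫⁻ x in E k, ENNReal.ofReal (Real.exp (α * |b x - c0|)) := by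
          rw [hcover, lintegral_iUnion hmE hdisj]
      _ ≤ ∑' k : ℕ, ENNReal.ofReal (Real.exp (((k:ℝ)+1)/2)) *
            (2 * 2⁻¹ ^ k * volume (Cube n a0 h0)) := by
          refine ENNReal.tsum_le_tsum fun k => ?_
          exact (hbound k).trans (mul_le_mul_right (hvol k) _)
      _ = (∑' k : ℕ, ENNReal.ofReal (Real.exp (((k:ℝ)+1)/2)) * (2 * 2⁻¹ ^ k)) *
            volume (Cube n a0 h0) := by
          rw [← ENNReal.tsum_mul_right]
          congr 1
          funext k
          ring
      _ ≤ ENNReal.ofReal 19 * volume (Cube n a0 h0) := by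
          refine mul_le_mul_left ((ENNReal.tsum_le_tsum hterm).trans hsum) _
  rw [setAvg]
  calc (volume (Cube n a0 h0))⁻¹ *
      ∫⁻ x in Cube n a0 h0, ENNReal.ofReal (Real.exp (α * |b x - c0|))
      ≤ (volume (Cube n a0 h0))⁻¹ * (ENNReal.ofReal 19 * volume (Cube n a0 h0)) :=
        mul_le_mul_right hint _
    _ = ENNReal.ofReal 19 := by
        rw [mul_comm (ENNReal.ofReal 19), ← mul_assoc,
          ENNReal.inv_mul_cancel (volume_cube_ne_zero n a0 hh) (volume_cube_ne_top n a0 hh.le),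
          one_mul]

end JN

/-- (Sharp John–Nirenberg inequality.) With `α_n = 2^{-(n+2)}`, there is
`β_n > 1` such that for every `b` with `0 < ‖b‖_{BMO} < ∞` and every cube `Q`,
`|Q|⁻¹ ∫_Q exp((α_n/‖b‖_{BMO}) |b - b_Q|) ≤ β_n`. -/
theorem sharp_john_nirenberg (n : ℕ) (hn : 1 ≤ n) :
    ∃ βn : ℝ, 1 < βn ∧
      ∀ b : (Fin n → ℝ) → ℝ, LocallyIntegrable b →
        0 < bmoNorm n b → bmoNorm n b < ⊤ →
      ∀ (a : Fin n → ℝ) (h : ℝ), 0 < h →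
        setAvg n (Cube n a h) (fun y =>
          Real.exp (((2 : ℝ) ^ (n + 2))⁻¹ / (bmoNorm n b).toReal *
            |b y - intAvg n (Cube n a h) b|)) ≤ ENNReal.ofReal βn := by
  refine ⟨19, by norm_num, ?_⟩
  intro b hb hpos hlt a h hh
  set b' := hb.aestronglyMeasurable.mk b with hb'
  have heq : b =ᵐ[volume] b' := hb.aestronglyMeasurable.ae_eq_mk
  have hmb' : Measurable b' := hb.aestronglyMeasurable.stronglyMeasurable_mk.measurable
  have hli' : LocallyIntegrable b' := by
    refine (locallyIntegrable_iff).mpr fun k hk => ?_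
    exact (hb.integrableOn_isCompact hk).congr (ae_restrict_of_ae heq)
  have hIA : ∀ Q : Set (Fin n → ℝ), intAvg n Q b = intAvg n Q b' := fun Q => by
    unfold intAvg
    rw [integral_congr_ae (ae_restrict_of_ae heq)]
  have hbmo : bmoNorm n b = bmoNorm n b' := by
    unfold bmoNorm
    refine iSup_congr fun a' => iSup_congr fun h' => iSup_congr fun hh' => ?_
    unfold setAvg
    congr 1
    refine lintegral_congr_ae (MeasureTheory.ae_restrict_of_ae (heq.mono fun x hx => ?_))
    simp only [hx, hIA]
  have hgoal : setAvg n (Cube n a h) (fun y =>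
      Real.exp (((2 : ℝ) ^ (n + 2))⁻¹ / (bmoNorm n b).toReal *
        |b y - intAvg n (Cube n a h) b|)) =
      setAvg n (Cube n a h) (fun y =>
        Real.exp (((2 : ℝ) ^ (n + 2))⁻¹ / (bmoNorm n b').toReal *
          |b' y - intAvg n (Cube n a h) b'|)) := by
    unfold setAvg
    congr 1
    refine lintegral_congr_ae (MeasureTheory.ae_restrict_of_ae (heq.mono fun x hx => ?_))
    simp only [hx, hIA, hbmo]
  rw [hgoal]
  exact JN.core hli' hmb' (by rw [← hbmo]; exact hpos.ne') (by rw [← hbmo]; exact hlt.ne) a hh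
end
end

section
/- (Sharp reverse Hölder inequality for A₂ weights.) Let n ≥ 1 and let w be a weight on ℝ^n with w ∈ A₂. Set r_w = 1 + 1/(2^{n+5} [w]_{A₂}). Then for every cube Q ⊂ ℝ^n with sides parallel to the axes, ( |Q|⁻¹ ∫_Q w^{r_w} dx )^{1/r_w} ≤ 2 |Q|⁻¹ ∫_Q w dx. -/
open MeasureTheory ENNReal

noncomputable section

open Set Metric Filter Topology

namespace SRH

variable {n : ℕ}

def dside (h : ℝ) (k : ℕ) : ℝ := h / 2 ^ k

def dcorner (a : Fin n → ℝ) (h : ℝ) (k : ℕ) (j : Fin n → ℕ) : Fin n → ℝ :=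
  fun i => a i + (j i : ℝ) * dside h k

def dbox (a : Fin n → ℝ) (h : ℝ) (k : ℕ) (j : Fin n → ℕ) : Set (Fin n → ℝ) :=
  univ.pi fun i => Ico (dcorner a h k j i) (dcorner a h k j i + dside h k)

def dvalid (n : ℕ) (k : ℕ) (j : Fin n → ℕ) : Prop := ∀ i, j i < 2 ^ k

def didx (a : Fin n → ℝ) (h : ℝ) (k : ℕ) (x : Fin n → ℝ) : Fin n → ℕ :=
  fun i => ⌊(x i - a i) / dside h k⌋₊

variable {a : Fin n → ℝ} {h : ℝ}

lemma dside_pos (hh : 0 < h) (k : ℕ) : 0 < dside h k := by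
  show 0 < h / 2 ^ k; positivity

lemma mem_dbox {k : ℕ} {j : Fin n → ℕ} {x : Fin n → ℝ} :
    x ∈ dbox a h k j ↔ ∀ i, dcorner a h k j i ≤ x i ∧ x i < dcorner a h k j i + dside h k := by
  simp [dbox, Set.mem_pi, mem_Ico]

lemma dside_succ (h : ℝ) (k : ℕ) : dside h (k + 1) = dside h k / 2 := by
  rw [dside, dside, pow_succ]; ring

lemma dside_add (h : ℝ) (k d : ℕ) : dside h (k + d) = dside h k / 2 ^ d := by
  rw [dside, dside, pow_add]; ring

lemma dbox_subset_anc (hh : 0 < h) (k d : ℕ) (j : Fin n → ℕ) :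
    dbox a h (k + d) j ⊆ dbox a h k (fun i => j i / 2 ^ d) := by
  intro x hx
  rw [mem_dbox] at hx ⊢
  intro i
  obtain ⟨h1, h2⟩ := hx i
  have hδ : (0:ℝ) < dside h k := dside_pos hh k
  have h2d : (0:ℝ) < 2 ^ d := by positivity
  set ds : ℝ := dside h k / 2 ^ d with hds_def
  have hds : dside h k = 2 ^ d * ds := by rw [hds_def, mul_div_assoc', mul_div_cancel_left₀ _ (ne_of_gt h2d)]
  have hdspos : 0 < ds := by positivity
  have hde : dside h (k + d) = ds := dside_add h k d
  have hfl : ((j i / 2 ^ d : ℕ) : ℝ) * 2 ^ d ≤ (j i : ℝ) := by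
    exact_mod_cast Nat.div_mul_le_self (j i) (2 ^ d)
  have hfun : j i + 1 ≤ (j i / 2 ^ d + 1) * 2 ^ d := by
    have := Nat.lt_mul_div_succ (j i) (show 0 < 2^d by positivity)
    calc j i + 1 ≤ 2 ^ d * (j i / 2 ^ d + 1) := this
      _ = (j i / 2 ^ d + 1) * 2 ^ d := by ring
  have hfu : (j i : ℝ) + 1 ≤ (((j i / 2 ^ d : ℕ) : ℝ) + 1) * 2 ^ d := by
    exact_mod_cast hfun
  simp only [dcorner] at h1 h2 ⊢
  rw [hde] at h1 h2
  constructor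
  · rw [hds]
    nlinarith [mul_le_mul_of_nonneg_right hfl hdspos.le]
  · rw [hds]
    nlinarith [mul_le_mul_of_nonneg_right hfu hdspos.le]

lemma dbox_index_unique (hh : 0 < h) {k : ℕ} {j j' : Fin n → ℕ} {x : Fin n → ℝ}
    (hj : x ∈ dbox a h k j) (hj' : x ∈ dbox a h k j') : j = j' := by
  rw [mem_dbox] at hj hj'
  funext i
  obtain ⟨h1, h2⟩ := hj i
  obtain ⟨h1', h2'⟩ := hj' i
  have hδ : (0:ℝ) < dside h k := dside_pos hh k
  by_contra hne
  rcases Nat.lt_or_ge (j i) (j' i) with hlt | hge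
  · have hc : (j i : ℝ) + 1 ≤ (j' i : ℝ) := by exact_mod_cast hlt
    simp only [dcorner] at h1' h2
    nlinarith
  · have hlt : j' i < j i := by omega
    have hc : (j' i : ℝ) + 1 ≤ (j i : ℝ) := by exact_mod_cast hlt
    simp only [dcorner] at h1 h2'
    nlinarith

lemma dbox_zero : dbox a h 0 (fun _ => 0) = univ.pi fun i => Ico (a i) (a i + h) := by
  simp [dbox, dcorner, dside]

lemma mem_dbox_didx (hh : 0 < h) {x : Fin n → ℝ} (hx : x ∈ dbox a h 0 (fun _ => 0)) (k : ℕ) :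
    x ∈ dbox a h k (didx a h k x) ∧ dvalid n k (didx a h k x) := by
  rw [dbox_zero] at hx
  simp only [Set.mem_pi, mem_univ, forall_true_left, mem_Ico] at hx
  have hδ : (0:ℝ) < dside h k := dside_pos hh k
  constructor
  · rw [mem_dbox]
    intro i
    have ht0 : 0 ≤ (x i - a i) / dside h k := by
      have h1 := (hx i).1
      have : 0 ≤ x i - a i := by linarith
      positivity
    constructor
    · have hfl := Nat.floor_le ht0
      have hkey : (⌊(x i - a i) / dside h k⌋₊ : ℝ) * dside h k ≤ x i - a i := by
        have := mul_le_mul_of_nonneg_right hfl hδ.le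
        rwa [div_mul_cancel₀ _ hδ.ne'] at this
      simp only [dcorner, didx]
      linarith
    · have hlt := Nat.lt_floor_add_one ((x i - a i) / dside h k)
      simp only [dcorner, didx]
      have h2 := (mul_lt_mul_iff_left₀ hδ).2 hlt
      rw [div_mul_cancel₀ _ hδ.ne'] at h2
      linarith
  · intro i
    have ht0 : 0 ≤ (x i - a i) / dside h k := by
      have h1 := (hx i).1
      have : 0 ≤ x i - a i := by linarith
      positivity
    have hlt : (x i - a i) / dside h k < ((2 ^ k : ℕ) : ℝ) := by
      rw [div_lt_iff₀ hδ]
      have hσ : (2:ℝ) ^ k * dside h k = h := by rw [dside]; field_simp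
      push_cast
      rw [hσ]
      linarith [(hx i).2]
    exact (Nat.floor_lt ht0).2 hlt

lemma dbox_subset_base (hh : 0 < h) {k : ℕ} {j : Fin n → ℕ} (hj : dvalid n k j) :
    dbox a h k j ⊆ dbox a h 0 (fun _ => 0) := by
  have hanc := dbox_subset_anc (a := a) hh 0 k j
  intro x hx
  have hx' := hanc (by simpa using hx)
  have hj0 : (fun i => j i / 2 ^ k) = (fun _ : Fin n => 0) := by
    funext i; exact Nat.div_eq_of_lt (hj i)
  rwa [hj0] at hx'

lemma dbox_nested (hh : 0 < h) {k k' : ℕ} (hkk : k ≤ k') {j j' : Fin n → ℕ} {x : Fin n → ℝ}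
    (hx : x ∈ dbox a h k j) (hx' : x ∈ dbox a h k' j') :
    dbox a h k' j' ⊆ dbox a h k j ∧ j = fun i => j' i / 2 ^ (k' - k) := by
  obtain ⟨d, rfl⟩ := Nat.exists_eq_add_of_le hkk
  have hsub := dbox_subset_anc (a := a) hh k d j'
  have hxanc := hsub hx'
  have hj := dbox_index_unique hh hx hxanc
  constructor
  · rw [hj]; exact hsub
  · simpa [Nat.add_sub_cancel_left] using hj



lemma cube_eq_pi (c : Fin n → ℝ) (δ : ℝ) :
    Cube n c δ = univ.pi fun i => Icc (c i) (c i + δ) := by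
  ext x
  simp only [Cube, mem_setOf_eq, Set.mem_pi, mem_univ, forall_true_left, mem_Icc]

lemma measurable_dbox (k : ℕ) (j : Fin n → ℕ) : MeasurableSet (dbox a h k j) :=
  MeasurableSet.univ_pi fun i => measurableSet_Ico

lemma measurable_cube (c : Fin n → ℝ) (δ : ℝ) : MeasurableSet (Cube n c δ) := by
  rw [cube_eq_pi]; exact MeasurableSet.univ_pi fun i => measurableSet_Icc

lemma volume_dbox (hh : 0 < h) (k : ℕ) (j : Fin n → ℕ) :
    volume (dbox a h k j) = ENNReal.ofReal (dside h k) ^ n := by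
  rw [dbox, volume_pi_pi]
  simp [Real.volume_Ico]

lemma volume_cube {c : Fin n → ℝ} {δ : ℝ} (hδ : 0 ≤ δ) :
    volume (Cube n c δ) = ENNReal.ofReal δ ^ n := by
  rw [cube_eq_pi, volume_pi_pi]
  simp [Real.volume_Icc]

lemma dbox_ae_eq_cube (hh : 0 < h) (k : ℕ) (j : Fin n → ℕ) :
    dbox a h k j =ᵐ[volume] Cube n (dcorner a h k j) (dside h k) := by
  have hsub : dbox a h k j ⊆ Cube n (dcorner a h k j) (dside h k) := by
    intro x hx
    simp only [dbox, Set.mem_pi, mem_univ, forall_true_left, mem_Ico] at hx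
    intro i; exact ⟨(hx i).1, le_of_lt (hx i).2⟩
  have hvol : volume (Cube n (dcorner a h k j) (dside h k)) = volume (dbox a h k j) := by
    have hp : (0:ℝ) ≤ dside h k := le_of_lt (by show (0:ℝ) < h / 2^k; positivity)
    rw [volume_dbox hh, volume_cube hp]
  have hne : volume (Cube n (dcorner a h k j) (dside h k) \ dbox a h k j) = 0 := by
    have hfin : volume (dbox a h k j) ≠ ⊤ := by
      rw [volume_dbox hh]; exact ENNReal.pow_ne_top ENNReal.ofReal_ne_top
    rw [measure_diff hsub (measurable_dbox k j).nullMeasurableSet hfin, hvol, tsub_self]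
  rw [MeasureTheory.ae_eq_set]
  constructor
  · rw [diff_eq_empty.2 hsub]; exact measure_empty
  · exact hne

lemma setLIntegral_dbox (hh : 0 < h) (k : ℕ) (j : Fin n → ℕ) (f : (Fin n → ℝ) → ℝ≥0∞) :
    ∫⁻ x in Cube n (dcorner a h k j) (dside h k), f x =
    ∫⁻ x in dbox a h k j, f x :=
  setLIntegral_congr (dbox_ae_eq_cube hh k j).symm


section SEL
variable {n : ℕ} (w : (Fin n → ℝ) → ℝ) (a : Fin n → ℝ) (h : ℝ)

/-- dyadic average of `w` (as `ℝ≥0∞`) -/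
def davg (k : ℕ) (j : Fin n → ℕ) : ℝ≥0∞ :=
  (volume (dbox a h k j))⁻¹ * ∫⁻ x in dbox a h k j, ENNReal.ofReal (w x)

/-- indices of maximal dyadic boxes with average exceeding `lam` -/
def sel (lam : ℝ≥0∞) : Set (ℕ × (Fin n → ℕ)) :=
  {p | dvalid n p.1 p.2 ∧ lam < davg w a h p.1 p.2 ∧
    ∀ k' < p.1, davg w a h k' (fun i => p.2 i / 2 ^ (p.1 - k')) ≤ lam}

/-- the CZ open set at level `lam` -/
def omg (lam : ℝ≥0∞) : Set (Fin n → ℝ) :=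
  ⋃ p ∈ sel w a h lam, dbox a h p.1 p.2

variable {w a h}

lemma omg_subset_base (hh : 0 < h) (lam : ℝ≥0∞) : omg w a h lam ⊆ dbox a h 0 (fun _ => 0) := by
  intro x hx
  simp only [omg, mem_iUnion] at hx
  obtain ⟨p, hp, hxp⟩ := hx
  exact dbox_subset_base hh hp.1 hxp

lemma measurableSet_omg (lam : ℝ≥0∞) : MeasurableSet (omg w a h lam) := by
  have : Countable (↥(sel w a h lam)) := (Set.to_countable _).to_subtype
  rw [omg, biUnion_eq_iUnion]
  exact MeasurableSet.iUnion fun p => measurable_dbox _ _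

lemma mem_omg_iff (hh : 0 < h) (lam : ℝ≥0∞) {x : Fin n → ℝ} :
    x ∈ omg w a h lam ↔ x ∈ dbox a h 0 (fun _ => 0) ∧
      ∃ k, lam < davg w a h k (didx a h k x) := by
  constructor
  · intro hx
    simp only [omg, mem_iUnion] at hx
    obtain ⟨p, hp, hxp⟩ := hx
    have hbase := dbox_subset_base hh hp.1 hxp
    refine ⟨hbase, p.1, ?_⟩
    have hidx := (mem_dbox_didx hh hbase p.1).1
    have : p.2 = didx a h p.1 x := dbox_index_unique hh hxp hidx
    rw [← this]
    exact hp.2.1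
  · rintro ⟨hbase, k, hk⟩
    have hex : ∃ k, lam < davg w a h k (didx a h k x) := ⟨k, hk⟩
    classical
    let k0 := Nat.find hex
    have hk0 : lam < davg w a h k0 (didx a h k0 x) := Nat.find_spec hex
    have hmin : ∀ k' < k0, ¬ lam < davg w a h k' (didx a h k' x) := fun k' hk' =>
      Nat.find_min hex hk'
    have hmem := (mem_dbox_didx hh hbase k0).1
    have hval := (mem_dbox_didx hh hbase k0).2
    simp only [omg, mem_iUnion]
    refine ⟨(k0, didx a h k0 x), ⟨hval, hk0, ?_⟩, hmem⟩
    intro k' hk'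
    have hmem' := (mem_dbox_didx hh hbase k').1
    have hnest := dbox_nested hh (le_of_lt hk') hmem' hmem
    have :  didx a h k' x = fun i => didx a h k0 x i / 2 ^ (k0 - k') := hnest.2
    rw [← this]
    exact not_lt.1 (hmin k' hk')

lemma omg_anti (hh : 0 < h) {lam lam' : ℝ≥0∞} (hll : lam ≤ lam') : omg w a h lam' ⊆ omg w a h lam := by
  intro x hx
  rw [mem_omg_iff hh] at hx ⊢
  obtain ⟨hb, k, hk⟩ := hx
  exact ⟨hb, k, lt_of_le_of_lt hll hk⟩

/-- key nesting: a selected box at a higher level meeting a selected box at a lower level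
is contained in it -/
lemma sel_nested (hh : 0 < h) {lam lam' : ℝ≥0∞} (hll : lam ≤ lam') {p q : ℕ × (Fin n → ℕ)}
    (hp : p ∈ sel w a h lam) (hq : q ∈ sel w a h lam')
    (hint : (dbox a h p.1 p.2 ∩ dbox a h q.1 q.2).Nonempty) :
    p.1 ≤ q.1 ∧ dbox a h q.1 q.2 ⊆ dbox a h p.1 p.2 := by
  obtain ⟨x, hxp, hxq⟩ := hint
  have hple : p.1 ≤ q.1 := by
    by_contra hgt
    push_neg at hgt
    have hnest := dbox_nested hh (le_of_lt hgt) hxq hxp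
    have hanc := hp.2.2 q.1 hgt
    rw [← hnest.2] at hanc
    exact absurd (lt_of_le_of_lt hll hq.2.1) (not_lt.2 hanc)
  exact ⟨hple, (dbox_nested hh hple hxp hxq).1⟩

lemma sel_pairwiseDisjoint (hh : 0 < h) (lam : ℝ≥0∞) :
    (sel w a h lam).PairwiseDisjoint (fun p => dbox a h p.1 p.2) := by
  intro p hp q hq hpq
  rw [Function.onFun, Set.disjoint_left]
  intro x hxp hxq
  apply hpq
  have h1 := sel_nested hh le_rfl hp hq ⟨x, hxp, hxq⟩
  have h2 := sel_nested hh le_rfl hq hp ⟨x, hxq, hxp⟩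
  have hk : p.1 = q.1 := le_antisymm h1.1 h2.1
  have hj : p.2 = q.2 := by
    apply dbox_index_unique hh hxp
    rw [hk]; exact hxq
  exact Prod.ext hk hj

lemma omg_eq_biUnion (lam : ℝ≥0∞) :
    omg w a h lam = ⋃ p ∈ sel w a h lam, dbox a h p.1 p.2 := rfl

end SEL

section MEASURE
variable {n : ℕ} {w : (Fin n → ℝ) → ℝ} {a : Fin n → ℝ} {h : ℝ}

/-- the weighted measure `w dx` -/
def nuw (n : ℕ) (w : (Fin n → ℝ) → ℝ) : Measure (Fin n → ℝ) :=
  volume.withDensity fun x => ENNReal.ofReal (w x)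

lemma nuw_apply {s : Set (Fin n → ℝ)} (hs : MeasurableSet s) :
    nuw n w s = ∫⁻ x in s, ENNReal.ofReal (w x) := withDensity_apply _ hs

lemma volume_dbox_ne_zero (hh : 0 < h) (k : ℕ) (j : Fin n → ℕ) :
    volume (dbox a h k j) ≠ 0 := by
  rw [volume_dbox hh]
  have : (0:ℝ) < dside h k := dside_pos hh k
  simp [pow_eq_zero_iff, ENNReal.ofReal_eq_zero, not_le, this]

lemma volume_dbox_ne_top (hh : 0 < h) (k : ℕ) (j : Fin n → ℕ) :
    volume (dbox a h k j) ≠ ⊤ := by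
  rw [volume_dbox hh]
  exact ENNReal.pow_ne_top ENNReal.ofReal_ne_top

lemma davg_mul_volume (hh : 0 < h) (k : ℕ) (j : Fin n → ℕ) :
    davg w a h k j * volume (dbox a h k j) = nuw n w (dbox a h k j) := by
  rw [davg, nuw_apply (measurable_dbox k j), mul_comm, ← mul_assoc,
    ENNReal.mul_inv_cancel (volume_dbox_ne_zero hh k j) (volume_dbox_ne_top hh k j), one_mul]

lemma nuw_dbox_le_of_davg_le (hh : 0 < h) {k : ℕ} {j : Fin n → ℕ} {c : ℝ≥0∞}
    (hc : davg w a h k j ≤ c) :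
    nuw n w (dbox a h k j) ≤ c * volume (dbox a h k j) := by
  rw [← davg_mul_volume hh]
  exact mul_le_mul_left hc _

lemma le_nuw_dbox_of_lt_davg (hh : 0 < h) {k : ℕ} {j : Fin n → ℕ} {c : ℝ≥0∞}
    (hc : c ≤ davg w a h k j) :
    c * volume (dbox a h k j) ≤ nuw n w (dbox a h k j) := by
  rw [← davg_mul_volume hh]
  exact mul_le_mul_left hc _

lemma nuw_pos (hw0 : ∀ x, 0 < w x) (hwm : AEMeasurable w volume)
    {s : Set (Fin n → ℝ)} (hs : MeasurableSet s) (hvs : volume s ≠ 0) :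
    nuw n w s ≠ 0 := by
  intro h0
  rw [nuw_apply hs] at h0
  have hae := (lintegral_eq_zero_iff' (hwm.ennreal_ofReal.restrict)).1 h0
  rw [Filter.EventuallyEq, ae_restrict_iff' hs] at hae
  have : ∀ᵐ x ∂volume, x ∉ s := by
    filter_upwards [hae] with x hx
    intro hxs
    have := hx hxs
    simp only [Pi.zero_apply, ENNReal.ofReal_eq_zero] at this
    exact absurd this (not_le.2 (hw0 x))
  apply hvs
  have hc := ae_iff.mp this
  simpa [not_not] using hc

lemma integrable_on_cube (hloc : LocallyIntegrable w) (c : Fin n → ℝ) (δ : ℝ) :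
    IntegrableOn w (Cube n c δ) := by
  apply hloc.integrableOn_isCompact
  rw [cube_eq_pi]
  exact isCompact_univ_pi fun i => isCompact_Icc

lemma lintegral_cube_lt_top (hloc : LocallyIntegrable w) (c : Fin n → ℝ) (δ : ℝ) :
    ∫⁻ x in Cube n c δ, ENNReal.ofReal (w x) < ⊤ :=
  (integrable_on_cube hloc c δ).lintegral_lt_top

lemma nuw_dbox_lt_top (hh : 0 < h) (hloc : LocallyIntegrable w) (k : ℕ) (j : Fin n → ℕ) :
    nuw n w (dbox a h k j) < ⊤ := by
  rw [nuw_apply (measurable_dbox k j), ← setLIntegral_dbox hh]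
  exact lintegral_cube_lt_top hloc _ _

/-- Cauchy-Schwarz for the weight and its inverse -/
lemma cs_lemma (hw0 : ∀ x, 0 < w x) (hwm : AEMeasurable w volume)
    {E : Set (Fin n → ℝ)} (hE : MeasurableSet E) :
    volume E ^ 2 ≤ (∫⁻ x in E, ENNReal.ofReal (w x)) *
      (∫⁻ x in E, ENNReal.ofReal ((w x)⁻¹)) := by
  set f : (Fin n → ℝ) → ℝ≥0∞ := fun x => (ENNReal.ofReal (w x)) ^ (2⁻¹ : ℝ) with hf
  set g : (Fin n → ℝ) → ℝ≥0∞ := fun x => (ENNReal.ofReal ((w x)⁻¹)) ^ (2⁻¹ : ℝ) with hg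
  have hconj : Real.HolderConjugate 2 2 := Real.HolderConjugate.two_two
  have hfm : AEMeasurable f (volume.restrict E) :=
    (hwm.ennreal_ofReal.restrict).pow_const _
  have hgm : AEMeasurable g (volume.restrict E) :=
    ((hwm.inv).ennreal_ofReal.restrict).pow_const _
  have hfg : ∀ x, (f * g) x = 1 := by
    intro x
    have hx := hw0 x
    simp only [Pi.mul_apply, hf, hg]
    rw [← ENNReal.mul_rpow_of_nonneg _ _ (by norm_num : (0:ℝ) ≤ 2⁻¹),
      ← ENNReal.ofReal_mul (le_of_lt hx), mul_inv_cancel₀ (ne_of_gt hx)]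
    simp
  have hH := ENNReal.lintegral_mul_le_Lp_mul_Lq (volume.restrict E) hconj hfm hgm
  have hsq : ∀ (y : ℝ≥0∞), (y ^ (2⁻¹:ℝ)) ^ (2:ℝ) = y := by
    intro y
    rw [← ENNReal.rpow_mul]
    norm_num
  have hL : ∫⁻ x in E, (f * g) x = volume E := by
    simp only [hfg]
    rw [lintegral_one, Measure.restrict_apply_univ]
  rw [hL] at hH
  have hR1 : ∫⁻ x in E, f x ^ (2:ℝ) = ∫⁻ x in E, ENNReal.ofReal (w x) := by
    apply lintegral_congr; intro x; exact hsq _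
  have hR2 : ∫⁻ x in E, g x ^ (2:ℝ) = ∫⁻ x in E, ENNReal.ofReal ((w x)⁻¹) := by
    apply lintegral_congr; intro x; exact hsq _
  rw [hR1, hR2] at hH
  calc volume E ^ 2 ≤ ((∫⁻ x in E, ENNReal.ofReal (w x)) ^ (1/(2:ℝ)) *
        (∫⁻ x in E, ENNReal.ofReal ((w x)⁻¹)) ^ (1/(2:ℝ))) ^ 2 := by
        exact pow_le_pow_left' hH 2
    _ = (∫⁻ x in E, ENNReal.ofReal (w x)) *
        (∫⁻ x in E, ENNReal.ofReal ((w x)⁻¹)) := by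
        rw [mul_pow, ← ENNReal.rpow_natCast (_ ^ (1/(2:ℝ))) 2, ← ENNReal.rpow_natCast (_ ^ (1/(2:ℝ))) 2,
          ← ENNReal.rpow_mul, ← ENNReal.rpow_mul]
        norm_num

end MEASURE

section A2EST
variable {n : ℕ} {w : (Fin n → ℝ) → ℝ} {a : Fin n → ℝ} {h : ℝ}

lemma setAvg_pair_le_A2const {δ : ℝ} (hδ : 0 < δ) (c : Fin n → ℝ) :
    setAvg n (Cube n c δ) w * setAvg n (Cube n c δ) (fun x => (w x)⁻¹) ≤ A2const n w := by
  rw [A2const]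
  apply le_iSup_of_le c
  apply le_iSup_of_le δ
  exact le_iSup_of_le hδ le_rfl

lemma a2_dbox (hh : 0 < h) (k : ℕ) (j : Fin n → ℕ) :
    (∫⁻ x in dbox a h k j, ENNReal.ofReal (w x)) *
      (∫⁻ x in dbox a h k j, ENNReal.ofReal ((w x)⁻¹)) ≤
    A2const n w * volume (dbox a h k j) ^ 2 := by
  set V := volume (dbox a h k j) with hV
  have hV0 : V ≠ 0 := volume_dbox_ne_zero hh k j
  have hVt : V ≠ ⊤ := volume_dbox_ne_top hh k j
  have hvolc : volume (Cube n (dcorner a h k j) (dside h k)) = V := by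
    rw [volume_cube (dside_pos hh k).le, hV, volume_dbox hh]
  have hpair := setAvg_pair_le_A2const (w := w) (dside_pos hh k) (dcorner a h k j)
  rw [setAvg, setAvg, hvolc, setLIntegral_dbox hh, setLIntegral_dbox hh] at hpair
  set I1 := ∫⁻ x in dbox a h k j, ENNReal.ofReal (w x)
  set I2 := ∫⁻ x in dbox a h k j, ENNReal.ofReal ((w x)⁻¹)
  calc I1 * I2 = (V * V⁻¹) * I1 * ((V * V⁻¹) * I2) := by
        rw [ENNReal.mul_inv_cancel hV0 hVt]; ring
    _ = V ^ 2 * ((V⁻¹ * I1) * (V⁻¹ * I2)) := by ring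
    _ ≤ V ^ 2 * A2const n w := mul_le_mul_right hpair _
    _ = A2const n w * V ^ 2 := mul_comm _ _

lemma one_le_A2const (hw0 : ∀ x, 0 < w x) (hwm : AEMeasurable w volume)
    (hh : 0 < h) (a : Fin n → ℝ) : 1 ≤ A2const n w := by
  have hcs := cs_lemma hw0 hwm (measurable_cube a h)
  set V := volume (Cube n a h) with hV
  have hVval : V = ENNReal.ofReal h ^ n := volume_cube hh.le
  have hV0 : V ≠ 0 := by
    rw [hVval]; simp [pow_eq_zero_iff, ENNReal.ofReal_eq_zero, not_le, hh]
  have hVt : V ≠ ⊤ := by rw [hVval]; exact ENNReal.pow_ne_top ENNReal.ofReal_ne_top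
  have hpair := setAvg_pair_le_A2const (w := w) hh a
  rw [setAvg, setAvg, ← hV] at hpair
  refine le_trans ?_ hpair
  rw [show (V⁻¹ * ∫⁻ x in Cube n a h, ENNReal.ofReal (w x)) *
      (V⁻¹ * ∫⁻ x in Cube n a h, ENNReal.ofReal ((w x)⁻¹)) =
      (V⁻¹ * V⁻¹) * ((∫⁻ x in Cube n a h, ENNReal.ofReal (w x)) *
      (∫⁻ x in Cube n a h, ENNReal.ofReal ((w x)⁻¹))) from by ring]
  calc (1:ℝ≥0∞) = (V⁻¹ * V⁻¹) * V ^ 2 := by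
        rw [sq, show V⁻¹ * V⁻¹ * (V * V) = (V⁻¹ * V) * (V⁻¹ * V) from by ring,
          ENNReal.inv_mul_cancel hV0 hVt, one_mul]
    _ ≤ _ := mul_le_mul_right hcs _

/-- the subset-decay estimate coming from the `A₂` condition -/
lemma theta_step (hw0 : ∀ x, 0 < w x) (hwm : AEMeasurable w volume)
    (hloc : LocallyIntegrable w) (hh : 0 < h)
    (hC1 : 1 ≤ A2const n w) (hCt : A2const n w ≠ ⊤)
    {k : ℕ} {j : Fin n → ℕ} {E : Set (Fin n → ℝ)} (hE : MeasurableSet E)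
    (hEsub : E ⊆ dbox a h k j)
    (hEvol : volume E ≤ volume (dbox a h k j) / 4) :
    nuw n w E ≤ (1 - 9 * (16 * A2const n w)⁻¹) * nuw n w (dbox a h k j) := by
  classical
  set C := A2const n w with hCdef
  set c0 : ℝ≥0∞ := 9 * (16 * C)⁻¹ with hc0
  set D := dbox a h k j with hD
  set V := volume D with hV
  have hV0 : V ≠ 0 := volume_dbox_ne_zero hh k j
  have hVt : V ≠ ⊤ := volume_dbox_ne_top hh k j
  have hC0 : C ≠ 0 := by intro hc; rw [hc] at hC1; exact absurd hC1 (by simp)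
  set F := D \ E with hF
  have hFm : MeasurableSet F := (measurable_dbox k j).diff hE
  have hsplitV : volume E + volume F = V := by
    rw [hF, hV, ← measure_inter_add_diff D hE, inter_eq_right.2 hEsub]
  have hsplitN : nuw n w E + nuw n w F = nuw n w D := by
    rw [hF, ← measure_inter_add_diff D hE, inter_eq_right.2 hEsub]
  -- volume F ≥ (3/4) V, in the form 3*V ≤ 4*(volume F)
  have hvolF : (3:ℝ≥0∞) * V ≤ 4 * volume F := by
    have hE4 : 4 * volume E ≤ V := by
      have := (ENNReal.le_div_iff_mul_le (Or.inl (by norm_num)) (Or.inl (by norm_num))).1 hEvol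
      rwa [mul_comm] at this
    have h1 : V + 3 * V ≤ V + 4 * volume F := by
      calc V + 3 * V = 4 * V := by ring
        _ = 4 * (volume E + volume F) := by rw [hsplitV]
        _ = 4 * volume E + 4 * volume F := by ring
        _ ≤ V + 4 * volume F := add_le_add_left hE4 _
    exact (ENNReal.add_le_add_iff_left hVt).1 h1
  -- CS on F
  have hcs := cs_lemma hw0 hwm hFm
  have hIF2 : (∫⁻ x in F, ENNReal.ofReal ((w x)⁻¹)) ≤
      ∫⁻ x in D, ENNReal.ofReal ((w x)⁻¹) :=
    lintegral_mono_set diff_subset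
  have hNF : (∫⁻ x in F, ENNReal.ofReal (w x)) = nuw n w F := (nuw_apply hFm).symm
  have hND : (∫⁻ x in D, ENNReal.ofReal (w x)) = nuw n w D := (nuw_apply (measurable_dbox k j)).symm
  -- 9 V^2 * νD ≤ 16 C V^2 * νF
  have hkey : (9:ℝ≥0∞) * V^2 * nuw n w D ≤ 16 * C * V^2 * nuw n w F := by
    calc (9:ℝ≥0∞) * V^2 * nuw n w D = ((3:ℝ≥0∞) * V)^2 * nuw n w D := by
          rw [mul_pow]; ring_nf
      _ ≤ ((4:ℝ≥0∞) * volume F)^2 * nuw n w D :=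
          mul_le_mul_left (pow_le_pow_left' hvolF 2) _
      _ = 16 * (volume F ^ 2 * nuw n w D) := by rw [mul_pow]; ring_nf
      _ ≤ 16 * (((∫⁻ x in F, ENNReal.ofReal (w x)) *
            (∫⁻ x in F, ENNReal.ofReal ((w x)⁻¹))) * nuw n w D) :=
          mul_le_mul_right (mul_le_mul_left hcs _) _
      _ ≤ 16 * (((nuw n w F) * (∫⁻ x in D, ENNReal.ofReal ((w x)⁻¹))) * nuw n w D) := by
          rw [← hNF]
          exact mul_le_mul_right (mul_le_mul_left (mul_le_mul_right hIF2 _) _) _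
      _ = 16 * ((nuw n w F) * ((∫⁻ x in D, ENNReal.ofReal (w x)) *
            (∫⁻ x in D, ENNReal.ofReal ((w x)⁻¹)))) := by rw [hND]; ring
      _ ≤ 16 * ((nuw n w F) * (C * V^2)) :=
          mul_le_mul_right (mul_le_mul_right (a2_dbox hh k j) _) _
      _ = 16 * C * V^2 * nuw n w F := by ring
  -- cancel V^2
  have hV20 : V^2 ≠ 0 := pow_ne_zero _ hV0
  have hV2t : V^2 ≠ ⊤ := ENNReal.pow_ne_top hVt
  have hkey2 : (9:ℝ≥0∞) * nuw n w D ≤ 16 * C * nuw n w F := by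
    have hmul : V^2 * ((9:ℝ≥0∞) * nuw n w D) ≤ V^2 * (16 * C * nuw n w F) := by
      calc V^2 * ((9:ℝ≥0∞) * nuw n w D) = 9 * V^2 * nuw n w D := by ring
        _ ≤ 16 * C * V^2 * nuw n w F := hkey
        _ = V^2 * (16 * C * nuw n w F) := by ring
    exact (ENNReal.mul_le_mul_iff_right hV20 hV2t).1 hmul
  -- divide by 16 C
  have h16C0 : (16:ℝ≥0∞) * C ≠ 0 := by
    simp only [ne_eq, mul_eq_zero, not_or]
    exact ⟨by norm_num, hC0⟩
  have h16Ct : (16:ℝ≥0∞) * C ≠ ⊤ := ENNReal.mul_ne_top (by norm_num) hCt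
  have hlowF : c0 * nuw n w D ≤ nuw n w F := by
    have h5 : (16 * C)⁻¹ * ((9:ℝ≥0∞) * nuw n w D) ≤ (16*C)⁻¹ * (16 * C * nuw n w F) := by
      apply mul_le_mul_right
      calc (9:ℝ≥0∞) * nuw n w D ≤ 16 * C * nuw n w F := hkey2
        _ = 16 * C * nuw n w F := rfl
    rw [show (16*C)⁻¹ * (16 * C * nuw n w F) = ((16*C)⁻¹ * (16 * C)) * nuw n w F from by ring,
      ENNReal.inv_mul_cancel h16C0 h16Ct, one_mul] at h5
    calc c0 * nuw n w D = (16*C)⁻¹ * (9 * nuw n w D) := by rw [hc0]; ring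
      _ ≤ nuw n w F := h5
  -- conclude
  have hc0le : c0 ≤ 1 := by
    rw [hc0]
    have h16 : (16:ℝ≥0∞) ≤ 16 * C := le_mul_of_one_le_right (by norm_num) hC1
    have : (16 * C)⁻¹ ≤ 16⁻¹ := ENNReal.inv_le_inv' h16
    calc (9:ℝ≥0∞) * (16*C)⁻¹ ≤ 9 * 16⁻¹ := mul_le_mul_right this _
      _ ≤ 16 * 16⁻¹ := mul_le_mul_left (by norm_num) _
      _ = 1 := ENNReal.mul_inv_cancel (by norm_num) (by norm_num)
  have hfinD : nuw n w D < ⊤ := nuw_dbox_lt_top hh hloc k j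
  have hfin : c0 * nuw n w D ≠ ⊤ :=
    ENNReal.mul_ne_top (lt_of_le_of_lt hc0le (by norm_num)).ne hfinD.ne
  have hmain : nuw n w E + c0 * nuw n w D ≤ (1 - c0) * nuw n w D + c0 * nuw n w D := by
    calc nuw n w E + c0 * nuw n w D ≤ nuw n w E + nuw n w F := add_le_add_right hlowF _
      _ = nuw n w D := hsplitN
      _ = ((1 - c0) + c0) * nuw n w D := by rw [tsub_add_cancel_of_le hc0le, one_mul]
      _ = (1 - c0) * nuw n w D + c0 * nuw n w D := by rw [add_mul]
  exact (ENNReal.add_le_add_iff_right hfin).1 hmain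

end A2EST

section LEVELS
variable {n : ℕ} {w : (Fin n → ℝ) → ℝ} {a : Fin n → ℝ} {h : ℝ}

lemma sel_countable (lam : ℝ≥0∞) : (sel w a h lam).Countable := Set.to_countable _

lemma nuw_restrict_omg_eq_tsum (hh : 0 < h) (lam : ℝ≥0∞) {S : Set (Fin n → ℝ)}
    (hS : MeasurableSet S) (hsub : S ⊆ omg w a h lam) :
    nuw n w S = ∑' p : ↑(sel w a h lam), nuw n w (S ∩ dbox a h p.1.1 p.1.2) := by
  have hS' : S = ⋃ p ∈ sel w a h lam, (S ∩ dbox a h p.1 p.2) := by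
    rw [← inter_iUnion₂]
    exact (inter_eq_left.2 hsub).symm
  conv_lhs => rw [hS']
  refine measure_biUnion (sel_countable lam) ?_ ?_
  · exact (sel_pairwiseDisjoint hh lam).mono fun p => inter_subset_right
  · exact fun p _ => hS.inter (measurable_dbox p.1 p.2)

lemma nuw_omg_eq_tsum (hh : 0 < h) (lam : ℝ≥0∞) :
    nuw n w (omg w a h lam) =
      ∑' p : ↑(sel w a h lam), nuw n w (dbox a h p.1.1 p.1.2) :=
  measure_biUnion (sel_countable lam) (sel_pairwiseDisjoint hh lam)
    (fun p _ => measurable_dbox p.1 p.2)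

/-- selected boxes have average at most `2^n lam` -/
lemma davg_sel_le (hh : 0 < h) {lam : ℝ≥0∞}
    (hA0 : davg w a h 0 (fun _ => 0) ≤ lam) {p : ℕ × (Fin n → ℕ)}
    (hp : p ∈ sel w a h lam) :
    davg w a h p.1 p.2 ≤ 2 ^ n * lam := by
  obtain ⟨k, j⟩ := p
  obtain ⟨hval, hgt, hstop⟩ := hp
  simp only at hval hgt hstop ⊢
  have hk1 : 1 ≤ k := by
    by_contra hk0
    push_neg at hk0
    interval_cases k
    · have hj0 : j = fun _ => 0 := by
        funext i; have := hval i; omega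
      rw [hj0] at hgt
      exact absurd hgt (not_lt.2 hA0)
  -- parent
  have hpar := hstop (k - 1) (by omega)
  have hd1 : k - (k - 1) = 1 := by omega
  rw [hd1] at hpar
  set jp : Fin n → ℕ := fun i => j i / 2 ^ 1 with hjp
  have hsubpar : dbox a h k j ⊆ dbox a h (k-1) jp := by
    have := dbox_subset_anc (a := a) hh (k-1) 1 j
    rwa [show k - 1 + 1 = k from by omega] at this
  set V := volume (dbox a h k j) with hVd
  set VP := volume (dbox a h (k-1) jp) with hVPd
  have hVP : VP = 2 ^ n * V := by
    rw [hVPd, hVd, volume_dbox hh, volume_dbox hh]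
    have hds : dside h (k-1) = 2 * dside h k := by
      have := dside_succ h (k-1)
      rw [show k - 1 + 1 = k from by omega] at this
      rw [this]; ring
    rw [hds, ENNReal.ofReal_mul (by norm_num : (0:ℝ) ≤ 2), mul_pow]
    norm_num
  have hV0 : V ≠ 0 := volume_dbox_ne_zero hh k j
  have hVt : V ≠ ⊤ := volume_dbox_ne_top hh k j
  have hmono : (∫⁻ x in dbox a h k j, ENNReal.ofReal (w x)) ≤
      ∫⁻ x in dbox a h (k-1) jp, ENNReal.ofReal (w x) := lintegral_mono_set hsubpar
  have hVinv : V⁻¹ = 2 ^ n * VP⁻¹ := by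
    rw [hVP, ENNReal.mul_inv (Or.inl (by positivity)) (Or.inl (by simp))]
    rw [← mul_assoc, ENNReal.mul_inv_cancel (by positivity) (by simp), one_mul]
  calc davg w a h k j = V⁻¹ * ∫⁻ x in dbox a h k j, ENNReal.ofReal (w x) := rfl
    _ ≤ V⁻¹ * ∫⁻ x in dbox a h (k-1) jp, ENNReal.ofReal (w x) := mul_le_mul_right hmono _
    _ = 2 ^ n * (VP⁻¹ * ∫⁻ x in dbox a h (k-1) jp, ENNReal.ofReal (w x)) := by
        rw [hVinv]; ring
    _ = 2 ^ n * davg w a h (k-1) jp := rfl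
    _ ≤ 2 ^ n * lam := mul_le_mul_right hpar _

/-- the quarter-volume estimate -/
lemma quarter_volume (hh : 0 < h) {lam : ℝ≥0∞}
    (hA0 : davg w a h 0 (fun _ => 0) ≤ lam) (hlam0 : lam ≠ 0) (hlamt : lam ≠ ⊤)
    {p : ℕ × (Fin n → ℕ)} (hp : p ∈ sel w a h lam) :
    volume (omg w a h (2 ^ (n+2) * lam) ∩ dbox a h p.1 p.2) ≤
      volume (dbox a h p.1 p.2) / 4 := by
  classical
  set lam' : ℝ≥0∞ := 2 ^ (n+2) * lam with hlam'
  have hll : lam ≤ lam' := by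
    rw [hlam']
    exact le_mul_of_one_le_left zero_le (one_le_pow_of_one_le' (by norm_num : (1:ℝ≥0∞) ≤ 2) _)
  set S' : Set (ℕ × (Fin n → ℕ)) :=
    {q ∈ sel w a h lam' | dbox a h q.1 q.2 ⊆ dbox a h p.1 p.2} with hS'
  have hcover : omg w a h lam' ∩ dbox a h p.1 p.2 ⊆ ⋃ q ∈ S', dbox a h q.1 q.2 := by
    intro x hx
    obtain ⟨hxo, hxp⟩ := hx
    simp only [omg, mem_iUnion] at hxo
    obtain ⟨q, hq, hxq⟩ := hxo
    have hnest := sel_nested hh hll hp hq ⟨x, hxp, hxq⟩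
    simp only [mem_iUnion]
    exact ⟨q, ⟨hq, hnest.2⟩, hxq⟩
  have hS'c : S'.Countable := Set.to_countable _
  have hS'd : S'.PairwiseDisjoint (fun q => dbox a h q.1 q.2) :=
    (sel_pairwiseDisjoint hh lam').subset fun q hq => hq.1
  -- each selected box has small volume
  have hsmall : ∀ q ∈ S', lam' * volume (dbox a h q.1 q.2) ≤ nuw n w (dbox a h q.1 q.2) :=
    fun q hq => le_nuw_dbox_of_lt_davg hh (le_of_lt hq.1.2.1)
  have hunion_meas : nuw n w (⋃ q ∈ S', dbox a h q.1 q.2) =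
      ∑' q : ↑S', nuw n w (dbox a h q.1.1 q.1.2) :=
    measure_biUnion hS'c hS'd (fun q _ => measurable_dbox q.1 q.2)
  have hvol_union : volume (⋃ q ∈ S', dbox a h q.1 q.2) =
      ∑' q : ↑S', volume (dbox a h q.1.1 q.1.2) :=
    measure_biUnion hS'c hS'd (fun q _ => measurable_dbox q.1 q.2)
  have hsub_p : (⋃ q ∈ S', dbox a h q.1 q.2) ⊆ dbox a h p.1 p.2 := by
    intro x hx
    simp only [mem_iUnion] at hx
    obtain ⟨q, hq, hxq⟩ := hx
    exact hq.2 hxq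
  -- main chain
  have hchain : lam' * volume (omg w a h lam' ∩ dbox a h p.1 p.2) ≤
      2 ^ n * lam * volume (dbox a h p.1 p.2) := by
    calc lam' * volume (omg w a h lam' ∩ dbox a h p.1 p.2)
        ≤ lam' * volume (⋃ q ∈ S', dbox a h q.1 q.2) := mul_le_mul_right (measure_mono hcover) _
      _ = lam' * ∑' q : ↑S', volume (dbox a h q.1.1 q.1.2) := by
          rw [hvol_union]
      _ = ∑' q : ↑S', lam' * volume (dbox a h q.1.1 q.1.2) :=
          ENNReal.tsum_mul_left.symm
      _ ≤ ∑' q : ↑S', nuw n w (dbox a h q.1.1 q.1.2) :=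
          ENNReal.tsum_le_tsum (fun q => hsmall q q.2)
      _ = nuw n w (⋃ q ∈ S', dbox a h q.1 q.2) := hunion_meas.symm
      _ ≤ nuw n w (dbox a h p.1 p.2) := measure_mono hsub_p
      _ ≤ 2 ^ n * lam * volume (dbox a h p.1 p.2) :=
          nuw_dbox_le_of_davg_le hh (davg_sel_le hh hA0 hp)
  -- cancel
  have h2nl0 : (2:ℝ≥0∞) ^ n * lam ≠ 0 := by
    simp only [ne_eq, mul_eq_zero, not_or]
    exact ⟨by positivity, hlam0⟩
  have h2nlt : (2:ℝ≥0∞) ^ n * lam ≠ ⊤ := ENNReal.mul_ne_top (by simp) hlamt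
  have h4 : (2:ℝ≥0∞) ^ (n+2) = 2 ^ n * 4 := by
    rw [pow_add]; norm_num
  rw [ENNReal.le_div_iff_mul_le (Or.inl (by norm_num)) (Or.inl (by norm_num))]
  have hfin : (2 ^ n * lam) * (volume (omg w a h lam' ∩ dbox a h p.1 p.2) * 4) ≤
      (2 ^ n * lam) * volume (dbox a h p.1 p.2) := by
    calc (2 ^ n * lam) * (volume (omg w a h lam' ∩ dbox a h p.1 p.2) * 4)
        = lam' * volume (omg w a h lam' ∩ dbox a h p.1 p.2) := by
          rw [hlam', h4]; ring
      _ ≤ 2 ^ n * lam * volume (dbox a h p.1 p.2) := hchain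
  exact (ENNReal.mul_le_mul_iff_right h2nl0 h2nlt).1 hfin

end LEVELS

section DECAY
variable {n : ℕ} {w : (Fin n → ℝ) → ℝ} {a : Fin n → ℝ} {h : ℝ}

/-- the CZ levels `2^{(n+2)m} A₀` -/
def czlam (w : (Fin n → ℝ) → ℝ) (a : Fin n → ℝ) (h : ℝ) (m : ℕ) : ℝ≥0∞ :=
  (2 ^ (n + 2) : ℝ≥0∞) ^ m * davg w a h 0 (fun _ => 0)

lemma A0_ne_zero (hw0 : ∀ x, 0 < w x) (hwm : AEMeasurable w volume) (hh : 0 < h) :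
    davg w a h 0 (fun _ : Fin n => 0) ≠ 0 := by
  rw [davg]
  have hV := volume_dbox_ne_zero (a := a) hh 0 (fun _ => 0)
  have hVt := volume_dbox_ne_top (a := a) hh 0 (fun _ => 0)
  have hI : nuw n w (dbox a h 0 (fun _ => 0)) ≠ 0 :=
    nuw_pos hw0 hwm (measurable_dbox _ _) hV
  rw [nuw_apply (measurable_dbox _ _)] at hI
  simp only [ne_eq, mul_eq_zero, not_or]
  exact ⟨by simp [hVt], hI⟩

lemma A0_ne_top (hloc : LocallyIntegrable w) (hh : 0 < h) :
    davg w a h 0 (fun _ : Fin n => 0) ≠ ⊤ := by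
  rw [davg]
  have hV := volume_dbox_ne_zero (a := a) hh 0 (fun _ => 0)
  have hI : nuw n w (dbox a h 0 (fun _ => 0)) < ⊤ := nuw_dbox_lt_top hh hloc _ _
  rw [nuw_apply (measurable_dbox _ _)] at hI
  exact ENNReal.mul_ne_top (by simp [hV]) hI.ne

lemma czlam_zero : czlam w a h 0 = davg w a h 0 (fun _ : Fin n => 0) := by
  rw [czlam, pow_zero, one_mul]

lemma czlam_succ (m : ℕ) : czlam w a h (m + 1) = 2 ^ (n + 2) * czlam w a h m := by
  rw [czlam, czlam, pow_succ]; ring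

lemma A0_le_czlam (m : ℕ) : davg w a h 0 (fun _ : Fin n => 0) ≤ czlam w a h m := by
  rw [czlam]
  exact le_mul_of_one_le_left zero_le
    (one_le_pow_of_one_le' (one_le_pow_of_one_le' (by norm_num : (1:ℝ≥0∞) ≤ 2) _) m)

lemma czlam_ne_zero (hw0 : ∀ x, 0 < w x) (hwm : AEMeasurable w volume) (hh : 0 < h) (m : ℕ) :
    czlam w a h m ≠ 0 := by
  rw [czlam]
  simp only [ne_eq, mul_eq_zero, not_or]
  exact ⟨by positivity, A0_ne_zero hw0 hwm hh⟩

lemma czlam_ne_top (hloc : LocallyIntegrable w) (hh : 0 < h) (m : ℕ) :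
    czlam w a h m ≠ ⊤ := by
  rw [czlam]
  exact ENNReal.mul_ne_top (by simp) (A0_ne_top hloc hh)

lemma omg_czlam_anti (hh : 0 < h) (m : ℕ) :
    omg w a h (czlam w a h (m+1)) ⊆ omg w a h (czlam w a h m) := by
  apply omg_anti hh
  rw [czlam_succ]
  exact le_mul_of_one_le_left zero_le
    (one_le_pow_of_one_le' (by norm_num : (1:ℝ≥0∞) ≤ 2) _)

/-- one-step decay of the weighted measure of the CZ sets -/
lemma omg_decay (hw0 : ∀ x, 0 < w x) (hwm : AEMeasurable w volume)
    (hloc : LocallyIntegrable w) (hh : 0 < h)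
    (hC1 : 1 ≤ A2const n w) (hCt : A2const n w ≠ ⊤) (m : ℕ) :
    nuw n w (omg w a h (czlam w a h (m+1))) ≤
      (1 - 9 * (16 * A2const n w)⁻¹) * nuw n w (omg w a h (czlam w a h m)) := by
  have hsub := omg_czlam_anti (w := w) (a := a) hh m
  have hdecomp := nuw_restrict_omg_eq_tsum (w := w) (a := a) hh (czlam w a h m)
    (measurableSet_omg _) hsub
  rw [hdecomp, nuw_omg_eq_tsum hh (czlam w a h m), ← ENNReal.tsum_mul_left]
  apply ENNReal.tsum_le_tsum
  intro p
  have hp := p.2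
  apply theta_step hw0 hwm hloc hh hC1 hCt
    ((measurableSet_omg _).inter (measurable_dbox _ _)) inter_subset_right
  calc volume (omg w a h (czlam w a h (m+1)) ∩ dbox a h p.1.1 p.1.2)
      = volume (omg w a h (2 ^ (n+2) * czlam w a h m) ∩ dbox a h p.1.1 p.1.2) := by
        rw [← czlam_succ]
    _ ≤ volume (dbox a h p.1.1 p.1.2) / 4 :=
        quarter_volume hh (A0_le_czlam m) (czlam_ne_zero hw0 hwm hh m)
          (czlam_ne_top hloc hh m) hp

/-- iterated decay -/
lemma omg_decay_iter (hw0 : ∀ x, 0 < w x) (hwm : AEMeasurable w volume)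
    (hloc : LocallyIntegrable w) (hh : 0 < h)
    (hC1 : 1 ≤ A2const n w) (hCt : A2const n w ≠ ⊤) (m : ℕ) :
    nuw n w (omg w a h (czlam w a h m)) ≤
      (1 - 9 * (16 * A2const n w)⁻¹) ^ m * nuw n w (dbox a h 0 (fun _ => 0)) := by
  induction m with
  | zero =>
      simpa using measure_mono (μ := nuw n w) (omg_subset_base hh _)
  | succ m ih =>
      calc nuw n w (omg w a h (czlam w a h (m+1)))
          ≤ (1 - 9 * (16 * A2const n w)⁻¹) * nuw n w (omg w a h (czlam w a h m)) :=
            omg_decay hw0 hwm hloc hh hC1 hCt m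
        _ ≤ (1 - 9 * (16 * A2const n w)⁻¹) *
            ((1 - 9 * (16 * A2const n w)⁻¹) ^ m * nuw n w (dbox a h 0 (fun _ => 0))) :=
            mul_le_mul_right ih _
        _ = (1 - 9 * (16 * A2const n w)⁻¹) ^ (m+1) * nuw n w (dbox a h 0 (fun _ => 0)) := by
            rw [pow_succ]; ring

end DECAY

section DIFF
variable {n : ℕ} {w : (Fin n → ℝ) → ℝ} {a : Fin n → ℝ} {h : ℝ}

lemma closedBall_eq_cube (hh : 0 < h) (k : ℕ) (j : Fin n → ℕ) :
    closedBall (fun i => dcorner a h k j i + dside h k / 2) (dside h k / 2) =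
      Cube n (dcorner a h k j) (dside h k) := by
  have hδ : (0:ℝ) < dside h k := dside_pos hh k
  ext y
  rw [mem_closedBall, dist_pi_le_iff (by positivity)]
  constructor
  · intro hy i
    have := hy i
    rw [Real.dist_eq, abs_le] at this
    constructor <;> [linarith [this.1]; linarith [this.2]]
  · intro hy i
    have := hy i
    rw [Real.dist_eq, abs_le]
    constructor <;> [linarith [this.1]; linarith [this.2]]

lemma davg_toReal_eq_average (hw0 : ∀ x, 0 < w x) (hloc : LocallyIntegrable w)
    (hh : 0 < h) (k : ℕ) (j : Fin n → ℕ) :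
    (davg w a h k j).toReal = ⨍ y in Cube n (dcorner a h k j) (dside h k), w y := by
  have hδ : (0:ℝ) < dside h k := dside_pos hh k
  set Q := Cube n (dcorner a h k j) (dside h k) with hQ
  have hvolQ : volume Q = volume (dbox a h k j) := by
    rw [hQ, volume_cube hδ.le, volume_dbox hh]
  have hV0 : volume (dbox a h k j) ≠ 0 := volume_dbox_ne_zero hh k j
  have hVt : volume (dbox a h k j) ≠ ⊤ := volume_dbox_ne_top hh k j
  have hint : IntegrableOn w Q := integrable_on_cube hloc _ _
  have hofReal : ENNReal.ofReal (∫ y in Q, w y) = ∫⁻ y in Q, ENNReal.ofReal (w y) :=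
    MeasureTheory.ofReal_integral_eq_lintegral_ofReal hint
      (Filter.Eventually.of_forall fun y => (hw0 y).le)
  have hlineq : (∫⁻ y in Q, ENNReal.ofReal (w y)) = ∫⁻ y in dbox a h k j, ENNReal.ofReal (w y) :=
    setLIntegral_dbox hh k j _
  rw [setAverage_eq, davg, smul_eq_mul]
  rw [ENNReal.toReal_mul, measureReal_def, hvolQ, ENNReal.toReal_inv]
  congr 1
  rw [← hlineq, ← hofReal, ENNReal.toReal_ofReal]
  exact setIntegral_nonneg (measurable_cube _ _) fun y _ => (hw0 y).le

/-- a.e. bound off the CZ set coming from Lebesgue differentiation -/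
lemma ae_le_off_omg (hw0 : ∀ x, 0 < w x) (hloc : LocallyIntegrable w) (hh : 0 < h)
    {lam : ℝ≥0∞} (hlamt : lam ≠ ⊤) :
    ∀ᵐ x ∂volume, x ∈ dbox a h 0 (fun _ => 0) \ omg w a h lam →
      ENNReal.ofReal (w x) ≤ lam := by
  filter_upwards [IsUnifLocDoublingMeasure.ae_tendsto_average (μ := volume) hloc 1]
    with x hx hxmem
  obtain ⟨hxQ, hxo⟩ := hxmem
  -- all dyadic averages at x are ≤ lam
  have hdavg : ∀ k, davg w a h k (didx a h k x) ≤ lam := by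
    intro k
    by_contra hk
    exact hxo ((mem_omg_iff hh lam).2 ⟨hxQ, k, not_le.1 hk⟩)
  -- the shrinking cubes
  set wk : ℕ → (Fin n → ℝ) := fun k => fun i =>
    dcorner a h k (didx a h k x) i + dside h k / 2 with hwk
  set δk : ℕ → ℝ := fun k => dside h k / 2 with hδk
  have hδlim : Tendsto δk atTop (𝓝[>] 0) := by
    rw [tendsto_nhdsWithin_iff]
    constructor
    · have heq : δk = fun k : ℕ => (h/2) * (2⁻¹:ℝ)^k := by
        funext k
        simp only [hδk, dside, div_eq_mul_inv, inv_pow]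
        ring
      rw [heq]
      have := tendsto_pow_atTop_nhds_zero_of_lt_one
        (by norm_num : (0:ℝ) ≤ 2⁻¹) (by norm_num : (2⁻¹:ℝ) < 1)
      simpa using tendsto_const_nhds.mul this
    · exact Filter.Eventually.of_forall fun k => by
        simp only [hδk, Set.mem_Ioi]
        exact half_pos (dside_pos hh k)
  have hxmem : ∀ k, x ∈ closedBall (wk k) (1 * δk k) := by
    intro k
    rw [one_mul, hwk, hδk, closedBall_eq_cube hh]
    have hxk := (mem_dbox_didx hh hxQ k).1
    rw [mem_dbox] at hxk
    intro i
    exact ⟨(hxk i).1, ((hxk i).2).le⟩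
  have htends := hx wk δk hδlim (Filter.Eventually.of_forall hxmem)
  -- each average is at most lam.toReal
  have hbound : ∀ k, (⨍ y in closedBall (wk k) (δk k), w y) ≤ lam.toReal := by
    intro k
    have hcb : closedBall (wk k) (δk k) =
        Cube n (dcorner a h k (didx a h k x)) (dside h k) := closedBall_eq_cube hh k _
    rw [hcb, ← davg_toReal_eq_average hw0 hloc hh]
    exact ENNReal.toReal_mono hlamt (hdavg k)
  have hwx : w x ≤ lam.toReal :=
    le_of_tendsto htends (Filter.Eventually.of_forall hbound)
  calc ENNReal.ofReal (w x) ≤ ENNReal.ofReal lam.toReal := ENNReal.ofReal_le_ofReal hwx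
    _ = lam := ENNReal.ofReal_toReal hlamt

end DIFF

section PIECES
variable {n : ℕ} {w : (Fin n → ℝ) → ℝ} {a : Fin n → ℝ} {h : ℝ}

lemma piece_bound (hwm : AEMeasurable w volume) {S : Set (Fin n → ℝ)}
    (hS : MeasurableSet S) {lam : ℝ≥0∞} (hlamt : lam ≠ ⊤) {ε : ℝ} (hε : 0 ≤ ε)
    (hae : ∀ᵐ x ∂volume, x ∈ S → ENNReal.ofReal (w x) ≤ lam) :
    ∫⁻ x in S, (ENNReal.ofReal (w x)) ^ (1+ε) ≤ lam ^ ε * nuw n w S := by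
  rw [nuw_apply hS, ← lintegral_const_mul' _ _ (ENNReal.rpow_ne_top_of_nonneg hε hlamt)]
  apply lintegral_mono_ae
  rw [ae_restrict_iff' hS]
  filter_upwards [hae] with x hx hxS
  calc (ENNReal.ofReal (w x)) ^ (1+ε)
      = ENNReal.ofReal (w x) * (ENNReal.ofReal (w x)) ^ ε := by
        rw [ENNReal.rpow_add_of_nonneg _ _ (by norm_num : (0:ℝ) ≤ 1) hε, ENNReal.rpow_one]
    _ ≤ ENNReal.ofReal (w x) * lam ^ ε :=
        mul_le_mul_right (ENNReal.rpow_le_rpow (hx hxS) hε) _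
    _ = lam ^ ε * ENNReal.ofReal (w x) := mul_comm _ _

lemma vol_iInter_omg_zero (hw0 : ∀ x, 0 < w x) (hwm : AEMeasurable w volume)
    (hloc : LocallyIntegrable w) (hh : 0 < h)
    (hC1 : 1 ≤ A2const n w) (hCt : A2const n w ≠ ⊤) :
    volume (⋂ m, omg w a h (czlam w a h m)) = 0 := by
  set θ : ℝ≥0∞ := 1 - 9 * (16 * A2const n w)⁻¹ with hθ
  set N := ⋂ m, omg w a h (czlam w a h m) with hN
  set B := nuw n w (dbox a h 0 (fun _ => 0)) with hB
  have hNm : MeasurableSet N := MeasurableSet.iInter fun m => measurableSet_omg _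
  have h16Ct : (16:ℝ≥0∞) * A2const n w ≠ ⊤ := ENNReal.mul_ne_top (by norm_num) hCt
  have hc00 : (9:ℝ≥0∞) * (16 * A2const n w)⁻¹ ≠ 0 := by
    simp only [ne_eq, mul_eq_zero, not_or, ENNReal.inv_eq_zero]
    exact ⟨by norm_num, h16Ct⟩
  have hθlt : θ < 1 := ENNReal.sub_lt_self one_ne_top one_ne_zero hc00
  have hBt : B ≠ ⊤ := (nuw_dbox_lt_top hh hloc 0 _).ne
  have htend : Tendsto (fun m => θ ^ m * B) atTop (𝓝 0) := by
    have h1 := ENNReal.tendsto_pow_atTop_nhds_zero_of_lt_one hθlt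
    have h2 := ENNReal.Tendsto.mul_const h1 (Or.inr hBt)
    rwa [zero_mul] at h2
  have hle : ∀ m, nuw n w N ≤ θ ^ m * B := fun m =>
    (measure_mono (iInter_subset _ m)).trans (omg_decay_iter hw0 hwm hloc hh hC1 hCt m)
  have hnuN : nuw n w N = 0 :=
    le_antisymm (ge_of_tendsto' htend hle) zero_le
  by_contra hv
  exact nuw_pos hw0 hwm hNm hv hnuN

lemma cover_base (hh : 0 < h) :
    dbox a h 0 (fun _ => 0) ⊆
      (dbox a h 0 (fun _ => 0) \ omg w a h (czlam w a h 0)) ∪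
      ((⋃ m, omg w a h (czlam w a h m) \ omg w a h (czlam w a h (m+1))) ∪
        ⋂ m, omg w a h (czlam w a h m)) := by
  intro x hx
  by_cases h0 : x ∈ omg w a h (czlam w a h 0)
  · by_cases hall : ∀ m, x ∈ omg w a h (czlam w a h m)
    · exact Or.inr (Or.inr (mem_iInter.2 hall))
    · push_neg at hall
      classical
      have hm0 : x ∉ omg w a h (czlam w a h (Nat.find hall)) := Nat.find_spec hall
      have hm0pos : Nat.find hall ≠ 0 := by
        intro he
        rw [he] at hm0
        exact hm0 h0
      have hmin : x ∈ omg w a h (czlam w a h (Nat.find hall - 1)) := by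
        by_contra hc
        exact (Nat.find_min hall (by omega)) hc
      refine Or.inr (Or.inl (mem_iUnion.2 ⟨Nat.find hall - 1, hmin, ?_⟩))
      rw [show Nat.find hall - 1 + 1 = Nat.find hall from by omega]
      exact hm0
  · exact Or.inl ⟨hx, h0⟩

lemma series_bound {c θ : ℝ≥0∞} (hcθ : c * (1 + θ) ≤ 2) (s u : ℕ → ℝ≥0∞)
    (hsu : ∀ m, s m = u m + s (m+1)) (hdec : ∀ m, s (m+1) ≤ θ * s m) :
    ∑' m, c ^ (m+1) * u m ≤ 2 * s 0 := by
  have key : ∀ M, (∑ m ∈ Finset.range M, c ^ (m+1) * u m) + 2 * c ^ M * s M ≤ 2 * s 0 := by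
    intro M
    induction M with
    | zero => simp
    | succ M ih =>
        have hstep : c ^ (M+1) * u M + 2 * c ^ (M+1) * s (M+1) ≤ 2 * c ^ M * s M := by
          calc c ^ (M+1) * u M + 2 * c ^ (M+1) * s (M+1)
              = c ^ (M+1) * (u M + s (M+1)) + c ^ (M+1) * s (M+1) := by ring
            _ = c ^ (M+1) * s M + c ^ (M+1) * s (M+1) := by rw [← hsu M]
            _ ≤ c ^ (M+1) * s M + c ^ (M+1) * (θ * s M) :=
                add_le_add_right (mul_le_mul_right (hdec M) _) _
            _ = (c * (1 + θ)) * (c ^ M * s M) := by ring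
            _ ≤ 2 * (c ^ M * s M) := mul_le_mul_left hcθ _
            _ = 2 * c ^ M * s M := by rw [mul_assoc]
        calc (∑ m ∈ Finset.range (M+1), c ^ (m+1) * u m) + 2 * c ^ (M+1) * s (M+1)
            = (∑ m ∈ Finset.range M, c ^ (m+1) * u m) +
              (c ^ (M+1) * u M + 2 * c ^ (M+1) * s (M+1)) := by
              rw [Finset.sum_range_succ]; ring
          _ ≤ (∑ m ∈ Finset.range M, c ^ (m+1) * u m) + 2 * c ^ M * s M :=
              add_le_add_right hstep _
          _ ≤ 2 * s 0 := ih
  rw [ENNReal.tsum_eq_iSup_nat]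
  exact iSup_le fun M => le_trans (le_add_right le_rfl) (key M)

lemma numeric_real (n : ℕ) {K : ℝ} (hK : 1 ≤ K) :
    ((2:ℝ) ^ (n+2)) ^ (((2:ℝ) ^ (n+5) * K)⁻¹) * (2 - 9 * (16 * K)⁻¹) ≤ 2 := by
  have hK0 : (0:ℝ) < K := lt_of_lt_of_le one_pos hK
  set ε : ℝ := ((2:ℝ) ^ (n+5) * K)⁻¹ with hε
  have hε0 : 0 < ε := by positivity
  set t : ℝ := ((n:ℝ)+2) * Real.log 2 * ε with ht
  have hlog2 : Real.log 2 ≤ 1 := by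
    have := Real.log_two_lt_d9
    linarith
  have hlog2pos : 0 < Real.log 2 := Real.log_pos (by norm_num)
  have ht0 : 0 < t := by positivity
  -- t ≤ 9/(32 K)
  have hn9 : (n:ℝ) + 2 ≤ 9 * 2 ^ n := by
    have h1 : n < 2 ^ n := Nat.lt_two_pow_self
    have h2 : 1 ≤ 2 ^ n := Nat.one_le_two_pow
    have : n + 2 ≤ 9 * 2 ^ n := by omega
    exact_mod_cast this
  have htle : t ≤ 9 * (32 * K)⁻¹ := by
    have h2n5 : (0:ℝ) < 2 ^ (n+5) := by positivity
    have hstep : ((n:ℝ)+2) * Real.log 2 / 2 ^ (n+5) ≤ 9 / 32 := by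
      rw [div_le_div_iff₀ h2n5 (by norm_num)]
      have h1 : ((n:ℝ)+2) * Real.log 2 ≤ (n:ℝ)+2 := by nlinarith
      calc ((n:ℝ)+2) * Real.log 2 * 32 ≤ ((n:ℝ)+2) * 32 := by nlinarith
        _ ≤ 9 * 2 ^ n * 32 := by nlinarith
        _ = 9 * 2 ^ (n+5) := by rw [pow_add]; ring
    calc t = (((n:ℝ)+2) * Real.log 2 / 2 ^ (n+5)) * K⁻¹ := by
          rw [ht, hε, mul_inv]; ring
      _ ≤ (9/32) * K⁻¹ := mul_le_mul_of_nonneg_right hstep (by positivity)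
      _ = 9 * (32 * K)⁻¹ := by rw [mul_inv]; ring
  have h932K : 9 * (32 * K)⁻¹ ≤ 9/32 := by
    rw [mul_inv]
    have : K⁻¹ ≤ 1 := inv_le_one_of_one_le₀ hK
    calc 9 * (32⁻¹ * K⁻¹) ≤ 9 * (32⁻¹ * 1) := by
          apply mul_le_mul_of_nonneg_left _ (by norm_num)
          apply mul_le_mul_of_nonneg_left this (by norm_num)
      _ = 9/32 := by norm_num
  have ht1 : t < 1 := lt_of_le_of_lt (htle.trans h932K) (by norm_num)
  -- rpow = exp
  have hrpow : ((2:ℝ) ^ (n+2)) ^ ε = Real.exp t := by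
    rw [Real.rpow_def_of_pos (by positivity), Real.log_pow]
    rw [ht]
    congr 1
    push_cast
    ring
  -- exp t ≤ (1 - t)⁻¹
  have hexp : Real.exp t ≤ (1 - t)⁻¹ := by
    have h1t : 0 < 1 - t := by linarith
    have hkey : (1 - t) * Real.exp t ≤ 1 := by
      have := Real.add_one_le_exp (-t)
      have h2 : 1 - t ≤ Real.exp (-t) := by linarith
      calc (1 - t) * Real.exp t ≤ Real.exp (-t) * Real.exp t :=
            mul_le_mul_of_nonneg_right h2 (Real.exp_pos t).le
        _ = 1 := by rw [← Real.exp_add]; simp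
    rw [inv_eq_one_div, le_div_iff₀ h1t]
    linarith [hkey]
  have h1m : (0:ℝ) < 1 - 9 * (32 * K)⁻¹ := by
    have := h932K
    linarith
  have hmono : (1 - t)⁻¹ ≤ (1 - 9 * (32 * K)⁻¹)⁻¹ := by
    apply inv_anti₀ h1m
    linarith [htle]
  have hnn : (0:ℝ) ≤ 2 - 9 * (16 * K)⁻¹ := by
    have h916 : 9 * (16*K)⁻¹ ≤ 9/16 := by
      rw [mul_inv]
      have : K⁻¹ ≤ 1 := inv_le_one_of_one_le₀ hK
      calc 9 * (16⁻¹ * K⁻¹) ≤ 9 * (16⁻¹ * 1) := by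
            apply mul_le_mul_of_nonneg_left _ (by norm_num)
            apply mul_le_mul_of_nonneg_left this (by norm_num)
        _ = 9/16 := by norm_num
    linarith
  calc ((2:ℝ) ^ (n+2)) ^ ε * (2 - 9 * (16 * K)⁻¹)
      ≤ (1 - 9 * (32 * K)⁻¹)⁻¹ * (2 - 9 * (16 * K)⁻¹) := by
        apply mul_le_mul_of_nonneg_right _ hnn
        rw [hrpow]
        exact hexp.trans hmono
    _ = 2 := by
        have hd : 1 - 9 * (32*K)⁻¹ ≠ 0 := ne_of_gt h1m
        have h2 : 2 - 9 * (16*K)⁻¹ = 2 * (1 - 9 * (32*K)⁻¹) := by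
          field_simp
          ring
        rw [h2, show (1 - 9*(32*K)⁻¹)⁻¹ * (2*(1 - 9*(32*K)⁻¹))
            = 2 * ((1 - 9*(32*K)⁻¹)⁻¹ * (1 - 9*(32*K)⁻¹)) from by ring,
          inv_mul_cancel₀ hd, mul_one]

end PIECES

section NUMERIC
variable {n : ℕ}

lemma numeric_ennreal (n : ℕ) {C : ℝ≥0∞} (hC1 : 1 ≤ C) (hCt : C ≠ ⊤) :
    ((2:ℝ≥0∞) ^ (n+2)) ^ (((2:ℝ) ^ (n+5) * C.toReal)⁻¹) * (1 + (1 - 9 * (16 * C)⁻¹)) ≤ 2 := by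
  set K := C.toReal with hKd
  have hK1 : (1:ℝ) ≤ K := by
    rw [hKd, show (1:ℝ) = (1:ℝ≥0∞).toReal from by simp]
    exact ENNReal.toReal_mono hCt hC1
  have hK0 : (0:ℝ) < K := lt_of_lt_of_le one_pos hK1
  have hCK : C = ENNReal.ofReal K := (ENNReal.ofReal_toReal hCt).symm
  set ε : ℝ := ((2:ℝ) ^ (n+5) * K)⁻¹ with hε
  have hq16 : 9 * (16*K)⁻¹ ≤ 1 := by
    rw [mul_inv]
    have hKinv : K⁻¹ ≤ 1 := inv_le_one_of_one_le₀ hK1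
    calc (9:ℝ) * (16⁻¹ * K⁻¹) ≤ 9 * (16⁻¹ * 1) := by
          apply mul_le_mul_of_nonneg_left _ (by norm_num)
          apply mul_le_mul_of_nonneg_left hKinv (by norm_num)
      _ ≤ 1 := by norm_num
  have h16C : (16:ℝ≥0∞) * C = ENNReal.ofReal (16 * K) := by
    rw [hCK, show (16:ℝ≥0∞) = ENNReal.ofReal (16:ℝ) from by simp,
      ← ENNReal.ofReal_mul (by norm_num : (0:ℝ) ≤ 16)]
  have hth : (9:ℝ≥0∞) * (16 * C)⁻¹ = ENNReal.ofReal (9 * (16*K)⁻¹) := by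
    rw [h16C, ← ENNReal.ofReal_inv_of_pos (by positivity),
      show (9:ℝ≥0∞) = ENNReal.ofReal (9:ℝ) from by simp,
      ← ENNReal.ofReal_mul (by norm_num : (0:ℝ) ≤ 9)]
  have hsub : (1:ℝ≥0∞) - 9 * (16*C)⁻¹ = ENNReal.ofReal (1 - 9*(16*K)⁻¹) := by
    have hrec := ENNReal.ofReal_sub (1:ℝ) (show (0:ℝ) ≤ 9*(16*K)⁻¹ by positivity)
    rw [ENNReal.ofReal_one] at hrec
    rw [hth, ← hrec]
  have hsum : (1:ℝ≥0∞) + (1 - 9*(16*C)⁻¹) = ENNReal.ofReal (2 - 9*(16*K)⁻¹) := by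
    rw [hsub, show (1:ℝ≥0∞) = ENNReal.ofReal (1:ℝ) from by simp,
      ← ENNReal.ofReal_add (by norm_num) (by linarith)]
    congr 1
    ring
  have hcpow : ((2:ℝ≥0∞) ^ (n+2)) ^ ε = ENNReal.ofReal (((2:ℝ) ^ (n+2)) ^ ε) := by
    rw [show (2:ℝ≥0∞) = ENNReal.ofReal (2:ℝ) from by simp,
      ← ENNReal.ofReal_pow (by norm_num : (0:ℝ) ≤ 2),
      ENNReal.ofReal_rpow_of_pos (by positivity)]
  rw [hcpow, hsum, ← ENNReal.ofReal_mul (by positivity)]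
  calc ENNReal.ofReal (((2:ℝ) ^ (n+2)) ^ ε * (2 - 9*(16*K)⁻¹))
      ≤ ENNReal.ofReal 2 := ENNReal.ofReal_le_ofReal (numeric_real n hK1)
    _ = 2 := by simp

end NUMERIC

end SRH

open SRH in
/-- (Sharp reverse Hölder inequality for `A₂` weights.) If `w ∈ A₂` and
`r_w = 1 + 1/(2^{n+5} [w]_{A₂})`, then for every cube `Q`,
`(|Q|⁻¹ ∫_Q w^{r_w})^{1/r_w} ≤ 2 |Q|⁻¹ ∫_Q w`. -/
theorem sharp_reverse_holder_A2 (n : ℕ) (hn : 1 ≤ n)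
    (w : (Fin n → ℝ) → ℝ) (hw : IsA2 n w)
    (a : Fin n → ℝ) (h : ℝ) (hh : 0 < h) :
    (setAvg n (Cube n a h)
        (fun x => w x ^ (1 + ((2 : ℝ) ^ (n + 5) * (A2const n w).toReal)⁻¹)))
      ^ (1 / (1 + ((2 : ℝ) ^ (n + 5) * (A2const n w).toReal)⁻¹)) ≤
    2 * setAvg n (Cube n a h) w := by
  classical
  obtain ⟨hw0, hloc, hCtop⟩ := hw
  have hwm : AEMeasurable w volume := hloc.aestronglyMeasurable.aemeasurable
  have hCt : A2const n w ≠ ⊤ := hCtop.ne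
  have hC1 : (1:ℝ≥0∞) ≤ A2const n w := one_le_A2const hw0 hwm hh a
  have hK1 : (1:ℝ) ≤ (A2const n w).toReal := by
    rw [show (1:ℝ) = (1:ℝ≥0∞).toReal from by simp]
    exact ENNReal.toReal_mono hCt hC1
  have hKpos : (0:ℝ) < (A2const n w).toReal := lt_of_lt_of_le one_pos hK1
  set ε : ℝ := ((2 : ℝ) ^ (n + 5) * (A2const n w).toReal)⁻¹ with hεd
  have hε0 : (0:ℝ) < ε := by rw [hεd]; positivity
  have hr0 : (0:ℝ) < 1 + ε := by linarith
  -- identification of the cube with the base dyadic box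
  have hcube_eq : Cube n a h = Cube n (dcorner a h 0 (fun _ => 0)) (dside h 0) := by
    have h1 : dcorner a h 0 (fun _ : Fin n => 0) = a := by
      funext i; simp [dcorner]
    have h2 : dside h 0 = h := by simp [dside]
    rw [h1, h2]
  set Q0 : Set (Fin n → ℝ) := dbox a h 0 (fun _ => 0) with hQ0
  have hvolQ : volume (Cube n a h) = volume Q0 := by
    rw [hcube_eq, volume_cube (dside_pos hh 0).le, hQ0, volume_dbox hh]
  set A0 : ℝ≥0∞ := davg w a h 0 (fun _ => 0) with hA0d
  have hA00 : A0 ≠ 0 := A0_ne_zero hw0 hwm hh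
  have hA0t : A0 ≠ ⊤ := A0_ne_top hloc hh
  have hA0eq : setAvg n (Cube n a h) w = A0 := by
    rw [setAvg, hvolQ, hcube_eq, setLIntegral_dbox hh 0 (fun _ => 0), hA0d, davg]
  -- the level sets
  set Om : ℕ → Set (Fin n → ℝ) := fun m => omg w a h (czlam w a h m) with hOm
  set θ : ℝ≥0∞ := 1 - 9 * (16 * A2const n w)⁻¹ with hθ
  set c : ℝ≥0∞ := ((2:ℝ≥0∞) ^ (n+2)) ^ ε with hc
  set s : ℕ → ℝ≥0∞ := fun m => nuw n w (Om m) with hs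
  set u : ℕ → ℝ≥0∞ := fun m => nuw n w (Om m \ Om (m+1)) with hu
  have hOmMeas : ∀ m, MeasurableSet (Om m) := fun m => measurableSet_omg _
  have hOmSub : ∀ m, Om (m+1) ⊆ Om m := fun m => omg_czlam_anti hh m
  have hOmBase : ∀ m, Om m ⊆ Q0 := fun m => omg_subset_base hh _
  have hsu : ∀ m, s m = u m + s (m+1) := by
    intro m
    have := measure_inter_add_diff (μ := nuw n w) (Om m) (hOmMeas (m+1))
    rw [inter_eq_right.2 (hOmSub m)] at this
    show nuw n w (Om m) = nuw n w (Om m \ Om (m+1)) + nuw n w (Om (m+1))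
    rw [← this]
    ring
  have hdec : ∀ m, s (m+1) ≤ θ * s m := fun m => omg_decay hw0 hwm hloc hh hC1 hCt m
  have hcθ : c * (1 + θ) ≤ 2 := numeric_ennreal n hC1 hCt
  have hseries : ∑' m, c ^ (m+1) * u m ≤ 2 * s 0 := series_bound hcθ s u hsu hdec
  -- czlam powers
  have hlam_pow : ∀ m, (czlam w a h m) ^ ε = c ^ m * A0 ^ ε := by
    intro m
    rw [czlam, ENNReal.mul_rpow_of_ne_top (by simp) hA0t, hc]
    congr 1
    rw [← ENNReal.rpow_natCast ((2:ℝ≥0∞) ^ (n+2)) m, ← ENNReal.rpow_mul,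
      mul_comm (m:ℝ) ε, ENNReal.rpow_mul, ENNReal.rpow_natCast]
  -- piece bounds
  have hA_bd : ∫⁻ x in Q0 \ Om 0, (ENNReal.ofReal (w x)) ^ (1+ε) ≤
      A0 ^ ε * nuw n w (Q0 \ Om 0) := by
    have := piece_bound (w := w) hwm ((measurable_dbox 0 _).diff (hOmMeas 0))
      (czlam_ne_top (a := a) hloc hh 0) hε0.le
      (ae_le_off_omg hw0 hloc hh (czlam_ne_top hloc hh 0))
    rwa [hlam_pow 0, pow_zero, one_mul] at this
  have hB_bd : ∀ m, ∫⁻ x in Om m \ Om (m+1), (ENNReal.ofReal (w x)) ^ (1+ε) ≤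
      c ^ (m+1) * A0 ^ ε * u m := by
    intro m
    have hae : ∀ᵐ x ∂volume, x ∈ Om m \ Om (m+1) → ENNReal.ofReal (w x) ≤
        czlam w a h (m+1) := by
      filter_upwards [ae_le_off_omg hw0 hloc hh
        (czlam_ne_top (a := a) (w := w) hloc hh (m+1))] with x hx hxB
      exact hx ⟨hOmBase m hxB.1, hxB.2⟩
    have := piece_bound (w := w) hwm ((hOmMeas m).diff (hOmMeas (m+1)))
      (czlam_ne_top (a := a) hloc hh (m+1)) hε0.le hae
    rwa [hlam_pow (m+1)] at this
  have hN0 : volume (⋂ m, Om m) = 0 := vol_iInter_omg_zero hw0 hwm hloc hh hC1 hCt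
  -- total bound on T
  have hT : ∫⁻ x in Q0, (ENNReal.ofReal (w x)) ^ (1+ε) ≤ 2 * A0 ^ ε * nuw n w Q0 := by
    calc ∫⁻ x in Q0, (ENNReal.ofReal (w x)) ^ (1+ε)
        ≤ ∫⁻ x in (Q0 \ Om 0) ∪ ((⋃ m, Om m \ Om (m+1)) ∪ ⋂ m, Om m),
            (ENNReal.ofReal (w x)) ^ (1+ε) :=
          lintegral_mono_set (cover_base hh)
      _ ≤ (∫⁻ x in Q0 \ Om 0, (ENNReal.ofReal (w x)) ^ (1+ε)) +
          (∫⁻ x in (⋃ m, Om m \ Om (m+1)) ∪ ⋂ m, Om m,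
            (ENNReal.ofReal (w x)) ^ (1+ε)) := lintegral_union_le _ _ _
      _ ≤ (∫⁻ x in Q0 \ Om 0, (ENNReal.ofReal (w x)) ^ (1+ε)) +
          ((∫⁻ x in ⋃ m, Om m \ Om (m+1), (ENNReal.ofReal (w x)) ^ (1+ε)) +
           (∫⁻ x in ⋂ m, Om m, (ENNReal.ofReal (w x)) ^ (1+ε))) :=
          add_le_add_right (lintegral_union_le _ _ _) _
      _ = (∫⁻ x in Q0 \ Om 0, (ENNReal.ofReal (w x)) ^ (1+ε)) +
          (∫⁻ x in ⋃ m, Om m \ Om (m+1), (ENNReal.ofReal (w x)) ^ (1+ε)) := by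
          rw [setLIntegral_measure_zero _ _ hN0, add_zero]
      _ ≤ A0 ^ ε * nuw n w (Q0 \ Om 0) +
          ∑' m, (∫⁻ x in Om m \ Om (m+1), (ENNReal.ofReal (w x)) ^ (1+ε)) :=
          add_le_add hA_bd (lintegral_iUnion_le _ _)
      _ ≤ A0 ^ ε * nuw n w (Q0 \ Om 0) + ∑' m, c ^ (m+1) * A0 ^ ε * u m :=
          add_le_add_right (ENNReal.tsum_le_tsum hB_bd) _
      _ = A0 ^ ε * (nuw n w (Q0 \ Om 0) + ∑' m, c ^ (m+1) * u m) := by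
          rw [mul_add]
          congr 1
          rw [← ENNReal.tsum_mul_left]
          congr 1
          funext m
          ring
      _ ≤ A0 ^ ε * (nuw n w (Q0 \ Om 0) + 2 * s 0) :=
          mul_le_mul_right (add_le_add_right hseries _) _
      _ ≤ 2 * A0 ^ ε * nuw n w Q0 := by
          have hQOm : nuw n w (Q0 \ Om 0) + s 0 = nuw n w Q0 := by
            have := measure_inter_add_diff (μ := nuw n w) Q0 (hOmMeas 0)
            rw [inter_eq_right.2 (hOmBase 0)] at this
            rw [hs, ← this]
            ring
          have hs0le : s 0 ≤ nuw n w Q0 := by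
            rw [hs]
            exact measure_mono (hOmBase 0)
          calc A0 ^ ε * (nuw n w (Q0 \ Om 0) + 2 * s 0)
              = A0 ^ ε * ((nuw n w (Q0 \ Om 0) + s 0) + s 0) := by ring
            _ = A0 ^ ε * (nuw n w Q0 + s 0) := by rw [hQOm]
            _ ≤ A0 ^ ε * (nuw n w Q0 + nuw n w Q0) := by
                exact mul_le_mul_right (add_le_add_right hs0le _) _
            _ = 2 * A0 ^ ε * nuw n w Q0 := by ring
  -- the LHS average
  have hLHS : setAvg n (Cube n a h) (fun x => w x ^ (1 + ε)) ≤ (2 * A0) ^ (1 + ε) := by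
    have hconv : ∫⁻ x in Q0, ENNReal.ofReal (w x ^ (1+ε)) =
        ∫⁻ x in Q0, (ENNReal.ofReal (w x)) ^ (1+ε) :=
      lintegral_congr fun x => (ENNReal.ofReal_rpow_of_pos (hw0 x)).symm
    rw [setAvg, hvolQ, hcube_eq, setLIntegral_dbox hh 0 (fun _ => 0), ← hQ0, hconv]
    have hV0 : volume Q0 ≠ 0 := volume_dbox_ne_zero hh 0 _
    have hVt : volume Q0 ≠ ⊤ := volume_dbox_ne_top hh 0 _
    have hA0form : A0 = (volume Q0)⁻¹ * nuw n w Q0 := by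
      rw [hA0d, davg, nuw_apply (measurable_dbox 0 _)]
    calc (volume Q0)⁻¹ * ∫⁻ x in Q0, (ENNReal.ofReal (w x)) ^ (1+ε)
        ≤ (volume Q0)⁻¹ * (2 * A0 ^ ε * nuw n w Q0) := mul_le_mul_right hT _
      _ = 2 * A0 ^ ε * ((volume Q0)⁻¹ * nuw n w Q0) := by ring
      _ = 2 * A0 ^ ε * A0 := by rw [← hA0form]
      _ = 2 * A0 ^ (1 + ε) := by
          rw [add_comm (1:ℝ) ε, ENNReal.rpow_add ε 1 hA00 hA0t, ENNReal.rpow_one]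
          ring
      _ ≤ 2 ^ ((1:ℝ) + ε) * A0 ^ (1 + ε) := by
          apply mul_le_mul_left
          calc (2:ℝ≥0∞) = 2 ^ (1:ℝ) := by rw [ENNReal.rpow_one]
            _ ≤ 2 ^ ((1:ℝ) + ε) :=
              ENNReal.rpow_le_rpow_of_exponent_le (by norm_num) (by linarith)
      _ = (2 * A0) ^ (1 + ε) := (ENNReal.mul_rpow_of_nonneg 2 A0 (by linarith)).symm
  -- conclude by taking the 1/(1+ε) power
  rw [hA0eq]
  calc (setAvg n (Cube n a h) (fun x => w x ^ (1 + ε))) ^ (1 / (1 + ε))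
      ≤ ((2 * A0) ^ (1 + ε)) ^ (1 / (1 + ε)) := ENNReal.rpow_le_rpow hLHS (by positivity)
    _ = (2 * A0) ^ ((1 + ε) * (1 / (1 + ε))) := by rw [← ENNReal.rpow_mul]
    _ = 2 * A0 := by rw [mul_one_div_cancel hr0.ne', ENNReal.rpow_one]
end
end

section
/- Let n ≥ 1, let w be a weight on ℝ^n with w ∈ A₂, let Q ⊂ ℝ^n be a cube with sides parallel to the axes, set w_Q = |Q|⁻¹ ∫_Q w dx, and let λ > w_Q. Then w( { x ∈ Q : w(x) > λ } ) ≤ 2^{n+1} λ | { x ∈ Q : w(x) > λ / (2 [w]_{A₂}) } |, where w(E) = ∫_E w dx and |·| denotes Lebesgue measure. -/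
open MeasureTheory ENNReal

noncomputable section

open NNReal Set Filter Topology

namespace A2aux

def dC (n : ℕ) (a : Fin n → ℝ) (h : ℝ) (k : ℕ) (j : Fin n → ℕ) : Set (Fin n → ℝ) :=
  Cube n (fun i => a i + j i * (h / 2 ^ k)) (h / 2 ^ k)

variable {n : ℕ} {a : Fin n → ℝ} {h : ℝ}

lemma cube_pi (c : Fin n → ℝ) (s : ℝ) :
    Cube n c s = Set.pi Set.univ (fun i => Icc (c i) (c i + s)) := by
  ext x
  simp only [Cube, Set.mem_setOf_eq, Set.mem_pi, Set.mem_univ, Set.mem_Icc, forall_const]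

lemma cube_vol (c : Fin n → ℝ) {s : ℝ} (hs : 0 ≤ s) :
    volume (Cube n c s) = ENNReal.ofReal s ^ n := by
  rw [cube_pi, volume_pi_pi]
  simp [Real.volume_Icc]

lemma cube_meas (c : Fin n → ℝ) (s : ℝ) : MeasurableSet (Cube n c s) := by
  rw [cube_pi]; exact MeasurableSet.univ_pi (fun i => measurableSet_Icc)

lemma cube_compact (c : Fin n → ℝ) (s : ℝ) : IsCompact (Cube n c s) := by
  rw [cube_pi]; exact isCompact_univ_pi (fun i => isCompact_Icc)

lemma cube_closed (c : Fin n → ℝ) (s : ℝ) : IsClosed (Cube n c s) := by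
  rw [cube_pi]; exact isClosed_set_pi (fun i _ => isClosed_Icc)

lemma cube_interior_nonempty (c : Fin n → ℝ) {s : ℝ} (hs : 0 < s) :
    (interior (Cube n c s)).Nonempty := by
  rw [cube_pi, interior_pi_set finite_univ]
  refine ⟨fun i => c i + s / 2, ?_⟩
  intro i _
  simp only [interior_Icc, Set.mem_Ioo]
  constructor <;> linarith

lemma cube_subset_closedBall {c : Fin n → ℝ} {s : ℝ} (hs : 0 ≤ s) {x : Fin n → ℝ}
    (hx : x ∈ Cube n c s) : Cube n c s ⊆ Metric.closedBall x s := by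
  intro y hy
  rw [Metric.mem_closedBall, dist_pi_le_iff hs]
  intro i
  have h1 := hx i; have h2 := hy i
  rw [Real.dist_eq, abs_le]
  constructor <;> linarith [h1.1, h1.2, h2.1, h2.2]

lemma dC_zero : dC n a h 0 (fun _ => 0) = Cube n a h := by
  simp [dC]

lemma dC_vol (hh : 0 < h) (k : ℕ) (j : Fin n → ℕ) :
    volume (dC n a h k j) = ENNReal.ofReal (h / 2 ^ k) ^ n :=
  cube_vol _ (by positivity)

lemma dC_child_subset (hh : 0 < h) (k : ℕ) (j : Fin n → ℕ) :
    dC n a h (k + 1) j ⊆ dC n a h k (fun i => j i / 2) := by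
  intro x hx i
  have hx' := hx i
  have hd : (0:ℝ) < h / 2 ^ (k+1) := by positivity
  have e1 : (2 : ℝ) * (h / 2 ^ (k+1)) = h / 2 ^ k := by ring
  have h2q : (j i / 2) * 2 ≤ j i := Nat.div_mul_le_self _ _
  have h2q' : j i < (j i / 2) * 2 + 2 := Nat.lt_div_mul_add (by norm_num)
  have c1 : ((j i / 2 : ℕ) : ℝ) * 2 ≤ (j i : ℝ) := by exact_mod_cast h2q
  have c2 : (j i : ℝ) + 1 ≤ ((j i / 2 : ℕ) : ℝ) * 2 + 2 := by
    have : (j i : ℝ) < ((j i / 2 : ℕ) : ℝ) * 2 + 2 := by exact_mod_cast h2q'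
    have : (j i : ℝ) + 1 ≤ ((j i / 2 : ℕ) : ℝ) * 2 + 2 := by
      have := h2q'
      exact_mod_cast Nat.succ_le_of_lt h2q'
    exact this
  constructor
  · have : ((j i / 2 : ℕ) : ℝ) * (h / 2 ^ k) ≤ (j i : ℝ) * (h / 2 ^ (k+1)) := by
      rw [← e1]; nlinarith
    linarith [hx'.1]
  · have : (j i : ℝ) * (h / 2 ^ (k+1)) + h / 2 ^ (k+1) ≤
        ((j i / 2 : ℕ) : ℝ) * (h / 2 ^ k) + h / 2 ^ k := by
      rw [← e1]; nlinarith
    linarith [hx'.2]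

lemma dC_anc_subset (hh : 0 < h) {m k : ℕ} (hm : m ≤ k) (j : Fin n → ℕ) :
    dC n a h k j ⊆ dC n a h (k - m) (fun i => j i / 2 ^ m) := by
  induction m with
  | zero => simp
  | succ m ih =>
    have hm' : m ≤ k := Nat.le_of_succ_le hm
    refine (ih hm').trans ?_
    have hkeq : k - m = (k - (m + 1)) + 1 := by omega
    rw [hkeq]
    have := dC_child_subset (a := a) hh (k - (m+1)) (fun i => j i / 2 ^ m)
    refine this.trans ?_
    have : (fun i => j i / 2 ^ m / 2) = (fun i => j i / 2 ^ (m+1)) := by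
      funext i; rw [Nat.div_div_eq_div_mul, pow_succ]
    rw [this]

lemma dC_same_level_aedisjoint (hh : 0 < h) (k : ℕ) {j j' : Fin n → ℕ} (hj : j ≠ j') :
    volume (dC n a h k j ∩ dC n a h k j') = 0 := by
  obtain ⟨i, hi⟩ := Function.ne_iff.1 hj
  set δ := h / 2 ^ k with hδ
  have hδ0 : (0:ℝ) < δ := by positivity
  have hsub : dC n a h k j ∩ dC n a h k j' ⊆
      Set.pi Set.univ (fun i' => Icc (a i' + j i' * δ) (a i' + j i' * δ + δ) ∩
        Icc (a i' + j' i' * δ) (a i' + j' i' * δ + δ)) := by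
    rw [dC, dC, cube_pi, cube_pi, ← Set.pi_inter_distrib]
  refine le_antisymm ?_ zero_le
  refine le_trans (measure_mono hsub) ?_
  rw [volume_pi_pi]
  refine le_of_eq (Finset.prod_eq_zero (Finset.mem_univ i) ?_)
  rw [Set.Icc_inter_Icc, Real.volume_Icc]
  rw [ENNReal.ofReal_eq_zero]
  have : (j i : ℝ) + 1 ≤ j' i ∨ (j' i : ℝ) + 1 ≤ j i := by
    rcases Nat.lt_or_ge (j i) (j' i) with hlt | hge
    · left; exact_mod_cast hlt
    · right
      have : j' i < j i := lt_of_le_of_ne hge (Ne.symm hi)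
      exact_mod_cast this
  rcases this with hc | hc
  · have : min (a i + j i * δ + δ) (a i + j' i * δ + δ) ≤ a i + j i * δ + δ := min_le_left _ _
    have h2 : a i + j i * δ + δ ≤ a i + j' i * δ := by nlinarith
    have h3 : a i + j' i * δ ≤ max (a i + j i * δ) (a i + j' i * δ) := le_max_right _ _
    linarith
  · have : min (a i + j i * δ + δ) (a i + j' i * δ + δ) ≤ a i + j' i * δ + δ := min_le_right _ _
    have h2 : a i + j' i * δ + δ ≤ a i + j i * δ := by nlinarith
    have h3 : a i + j i * δ ≤ max (a i + j i * δ) (a i + j' i * δ) := le_max_left _ _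
    linarith

lemma exists_cover (hh : 0 < h) {x : Fin n → ℝ} (hx : x ∈ Cube n a h) (k : ℕ) :
    ∃ j : Fin n → ℕ, (∀ i, j i < 2 ^ k) ∧ x ∈ dC n a h k j := by
  set δ := h / 2 ^ k with hδ
  have hδ0 : (0:ℝ) < δ := by positivity
  refine ⟨fun i => min ⌊(x i - a i) / δ⌋₊ (2 ^ k - 1), fun i => ?_, fun i => ?_⟩
  · have h1 : min ⌊(x i - a i) / δ⌋₊ (2 ^ k - 1) ≤ 2 ^ k - 1 := min_le_right _ _
    have h2 : (0:ℕ) < 2 ^ k := by positivity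
    exact lt_of_le_of_lt h1 (Nat.sub_lt h2 Nat.one_pos)
  · set t := (x i - a i) / δ with ht
    have ht0 : 0 ≤ t := div_nonneg (by linarith [(hx i).1]) hδ0.le
    have htk : t ≤ 2 ^ k := by
      rw [ht, div_le_iff₀ hδ0]
      have : (2:ℝ) ^ k * δ = h := by rw [hδ, mul_div_cancel₀ _ (by positivity)]
      rw [this]
      linarith [(hx i).2]
    set j := min ⌊t⌋₊ (2 ^ k - 1) with hj
    have hj_le : (j : ℝ) ≤ t := by
      have h1 : (j : ℕ) ≤ ⌊t⌋₊ := min_le_left _ _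
      calc (j:ℝ) ≤ (⌊t⌋₊ : ℝ) := by exact_mod_cast h1
        _ ≤ t := Nat.floor_le ht0
    have hj_ge : t ≤ (j : ℝ) + 1 := by
      rcases le_or_gt ⌊t⌋₊ (2 ^ k - 1) with hcase | hcase
      · have : j = ⌊t⌋₊ := min_eq_left hcase
        rw [this]
        exact (Nat.lt_floor_add_one t).le
      · have hje : j = 2 ^ k - 1 := min_eq_right hcase.le
        have h2 : (0:ℕ) < 2 ^ k := by positivity
        have : ((j : ℕ) : ℝ) + 1 = (2:ℝ) ^ k := by
          rw [hje]
          have : ((2 ^ k - 1 : ℕ) : ℝ) = (2:ℝ) ^ k - 1 := by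
            have : (2 ^ k - 1 : ℕ) + 1 = 2 ^ k := by omega
            have h3 : (((2 ^ k - 1 : ℕ) + 1 : ℕ) : ℝ) = ((2 ^ k : ℕ) : ℝ) := by rw [this]
            push_cast at h3 ⊢
            linarith
          rw [this]; ring
        rw [this]
        exact htk
    constructor
    · have : (j : ℝ) * δ ≤ t * δ := by nlinarith
      have h2 : t * δ = x i - a i := by rw [ht, div_mul_cancel₀ _ hδ0.ne']
      rw [h2] at this
      linarith
    · have : t * δ ≤ ((j:ℝ) + 1) * δ := by nlinarith
      have h2 : t * δ = x i - a i := by rw [ht, div_mul_cancel₀ _ hδ0.ne']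
      rw [h2] at this
      nlinarith


lemma dC_subset_Q (hh : 0 < h) {k : ℕ} {j : Fin n → ℕ} (hjr : ∀ i, j i < 2 ^ k) :
    dC n a h k j ⊆ Cube n a h := by
  have h1 := dC_anc_subset (a := a) hh (le_refl k) j
  have h2 : (fun i => j i / 2 ^ k) = (fun _ => (0:ℕ)) := by
    funext i; exact Nat.div_eq_of_lt (hjr i)
  rw [Nat.sub_self, h2] at h1
  rwa [dC_zero] at h1



lemma vol_cB (x : Fin n → ℝ) {r : ℝ} (hr : 0 ≤ r) :
    volume (Metric.closedBall x r) = ENNReal.ofReal (2 * r) ^ n := by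
  rw [closedBall_pi _ hr, volume_pi_pi]
  have : ∀ i : Fin n, volume (Metric.closedBall (x i) r) = ENNReal.ofReal (2 * r) := by
    intro i
    rw [Real.closedBall_eq_Icc, Real.volume_Icc]
    congr 1; ring
  simp [this]

lemma lint_pos {Q : Set (Fin n → ℝ)} (hQ : MeasurableSet Q) (hQ0 : volume Q ≠ 0)
    {g : (Fin n → ℝ) → ℝ} (hg : AEMeasurable g) (hgpos : ∀ x, 0 < g x) :
    0 < ∫⁻ x in Q, ENNReal.ofReal (g x) := by
  by_contra hcon
  push_neg at hcon
  have h0 : ∫⁻ x in Q, ENNReal.ofReal (g x) = 0 := le_antisymm hcon zero_le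
  have hmeas : AEMeasurable (fun x => ENNReal.ofReal (g x)) (volume.restrict Q) :=
    ENNReal.measurable_ofReal.comp_aemeasurable (hg.restrict)
  have := (lintegral_eq_zero_iff' hmeas).1 h0
  rw [Filter.EventuallyEq, ae_iff] at this
  have huniv : {x | ¬ (fun x => ENNReal.ofReal (g x)) x = (0 : (Fin n → ℝ) → ℝ≥0∞) x} = univ := by
    ext x
    simp only [Set.mem_setOf_eq, Set.mem_univ, iff_true, Pi.zero_apply]
    simp only [ENNReal.ofReal_eq_zero, not_le]
    exact hgpos x
  rw [huniv, Measure.restrict_apply_univ] at this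
  exact hQ0 this

end A2aux

open A2aux

/-- If `w ∈ A₂`, `Q` is a cube, `w_Q = |Q|⁻¹∫_Q w` and `λ > w_Q`, then
`w({x ∈ Q : w(x) > λ}) ≤ 2^{n+1} λ |{x ∈ Q : w(x) > λ/(2[w]_{A₂})}|`. -/



theorem A2_level_set_estimate (n : ℕ) (hn : 1 ≤ n)
    (w : (Fin n → ℝ) → ℝ) (hw : IsA2 n w)
    (a : Fin n → ℝ) (h : ℝ) (hh : 0 < h)
    (lam : ℝ) (hlam : intAvg n (Cube n a h) w < lam) :
    (∫⁻ x in {x ∈ Cube n a h | lam < w x}, ENNReal.ofReal (w x)) ≤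
      ENNReal.ofReal ((2 : ℝ) ^ (n + 1) * lam) *
        volume {x ∈ Cube n a h | lam / (2 * (A2const n w).toReal) < w x} := by
  classical
  obtain ⟨hwpos, hwli, hAlt⟩ := hw
  set Q := Cube n a h with hQdef
  set A := A2const n w with hAdef
  set lam' := lam / (2 * A.toReal) with hlam'def
  set ow : (Fin n → ℝ) → ℝ≥0∞ := fun x => ENNReal.ofReal (w x) with howdef
  set S : Set (Fin n → ℝ) := {x ∈ Q | lam < w x} with hSdef
  set S' : Set (Fin n → ℝ) := {x ∈ Q | lam' < w x} with hS'def
  have hwam : AEMeasurable w volume := hwli.aestronglyMeasurable.aemeasurable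
  have howam : AEMeasurable ow volume := ENNReal.measurable_ofReal.comp_aemeasurable hwam
  have hA_ne_top : A ≠ ⊤ := hAlt.ne
  -- volumes of dyadic cubes
  have hDvol : ∀ (k : ℕ) (j : Fin n → ℕ),
      volume (dC n a h k j) = ENNReal.ofReal (h / 2 ^ k) ^ n := fun k j => dC_vol hh k j
  have hDvol0 : ∀ (k : ℕ) (j : Fin n → ℕ), volume (dC n a h k j) ≠ 0 := by
    intro k j
    rw [hDvol]
    have : (0:ℝ) < h / 2 ^ k := by positivity
    simp [pow_eq_zero_iff, ENNReal.ofReal_eq_zero, not_le, this]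
  have hDvolt : ∀ (k : ℕ) (j : Fin n → ℕ), volume (dC n a h k j) ≠ ⊤ := by
    intro k j
    rw [hDvol]
    exact (ENNReal.pow_lt_top ENNReal.ofReal_lt_top).ne
  -- integrability on cubes
  have hint : ∀ (k : ℕ) (j : Fin n → ℕ), IntegrableOn w (dC n a h k j) :=
    fun k j => hwli.integrableOn_isCompact (cube_compact _ _)
  have hlint : ∀ (k : ℕ) (j : Fin n → ℕ),
      ∫⁻ x in dC n a h k j, ow x = ENNReal.ofReal (∫ x in dC n a h k j, w x) := by
    intro k j
    rw [MeasureTheory.ofReal_integral_eq_lintegral_ofReal (hint k j)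
      (Filter.Eventually.of_forall (fun x => (hwpos x).le))]
  have hQ0 : dC n a h 0 (fun _ => 0) = Q := dC_zero
  have hQvolt : volume Q ≠ ⊤ := by
    have := hDvolt 0 (fun _ => 0); rwa [hQ0] at this
  have hQvol0 : volume Q ≠ 0 := by
    have := hDvol0 0 (fun _ => 0); rwa [hQ0] at this
  have hQnotBad' : ∫⁻ x in Q, ow x ≤ ENNReal.ofReal lam * volume Q := by
    have h1 : ∫⁻ x in Q, ow x = ENNReal.ofReal (∫ x in Q, w x) := by
      rw [← hQ0]; exact hlint 0 _
    have hvQ : volume Q = ENNReal.ofReal ((volume Q).toReal) :=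
      (ENNReal.ofReal_toReal hQvolt).symm
    have hvQpos : 0 < (volume Q).toReal := ENNReal.toReal_pos hQvol0 hQvolt
    have hintlt : ∫ x in Q, w x < lam * (volume Q).toReal := by
      have := hlam
      rw [intAvg] at this
      rw [inv_mul_lt_iff₀ hvQpos] at this
      linarith [this]
    calc ∫⁻ x in Q, ow x = ENNReal.ofReal (∫ x in Q, w x) := h1
      _ ≤ ENNReal.ofReal (lam * (volume Q).toReal) := ENNReal.ofReal_le_ofReal hintlt.le
      _ = ENNReal.ofReal lam * ENNReal.ofReal ((volume Q).toReal) := by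
          rw [ENNReal.ofReal_mul']; exact ENNReal.toReal_nonneg
      _ = ENNReal.ofReal lam * volume Q := by rw [← hvQ]
  have hlintQpos : 0 < ∫⁻ x in Q, ow x := by
    refine lint_pos (cube_meas a h) hQvol0 hwam hwpos
  have hlam_pos : 0 < lam := by
    by_contra hcon
    push_neg at hcon
    have : ENNReal.ofReal lam = 0 := ENNReal.ofReal_eq_zero.2 hcon
    rw [this, zero_mul] at hQnotBad'
    exact absurd (le_antisymm hQnotBad' zero_le) hlintQpos.ne'
  -- A2 constant bounds
  have key1 : ∀ (k : ℕ) (j : Fin n → ℕ),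
      setAvg n (dC n a h k j) w * setAvg n (dC n a h k j) (fun x => (w x)⁻¹) ≤ A := by
    intro k j
    rw [hAdef, A2const]
    refine le_iSup_of_le (fun i => a i + j i * (h / 2 ^ k)) ?_
    refine le_iSup_of_le (h / 2 ^ k) ?_
    refine le_iSup_of_le (by positivity) ?_
    rfl
  have hA_pos : 0 < A := by
    refine lt_of_lt_of_le ?_ (key1 0 (fun _ => 0))
    rw [dC_zero]
    refine ENNReal.mul_pos ?_ ?_
    · rw [setAvg]
      refine mul_ne_zero (ENNReal.inv_ne_zero.2 hQvolt) hlintQpos.ne'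
    · rw [setAvg]
      refine mul_ne_zero (ENNReal.inv_ne_zero.2 hQvolt) ?_
      refine (lint_pos (cube_meas a h) hQvol0 hwam.inv (fun x => inv_pos.2 (hwpos x))).ne'
  have hlam'_pos : 0 < lam' := by
    rw [hlam'def]
    have : 0 < A.toReal := ENNReal.toReal_pos hA_pos.ne' hA_ne_top
    positivity
  -- Bad cubes and maximal bad cubes
  set Bad : ℕ × (Fin n → ℕ) → Prop := fun p =>
    ENNReal.ofReal lam * volume (dC n a h p.1 p.2) < ∫⁻ x in dC n a h p.1 p.2, ow x
    with hBaddef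
  set M : Set (ℕ × (Fin n → ℕ)) := {p | (∀ i, p.2 i < 2 ^ p.1) ∧ Bad p ∧
    ∀ m, 0 < m → m ≤ p.1 → ¬ Bad (p.1 - m, fun i => p.2 i / 2 ^ m)} with hMdef
  have hQnotBad : ¬ Bad (0, fun _ => 0) := by
    rw [hBaddef]
    simp only [not_lt]
    rw [dC_zero]
    exact hQnotBad'
  -- every in-range bad cube is inside a maximal one
  have badsub : ∀ (k : ℕ) (j : Fin n → ℕ), (∀ i, j i < 2 ^ k) → Bad (k, j) →
      ∃ q ∈ M, dC n a h k j ⊆ dC n a h q.1 q.2 := by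
    intro k j hjr hbad
    have hP0 : Bad (k - 0, fun i => j i / 2 ^ 0) := by
      have he : (fun i => j i / 2 ^ 0) = j := by funext i; simp
      rw [Nat.sub_zero, he]; exact hbad
    set m₀ := Nat.findGreatest (fun m => Bad (k - m, fun i => j i / 2 ^ m)) k with hm₀
    have hPm : Bad (k - m₀, fun i => j i / 2 ^ m₀) := by
      rw [hm₀]
      exact Nat.findGreatest_spec (P := fun m => Bad (k - m, fun i => j i / 2 ^ m))
        (Nat.zero_le k) hP0
    have hm₀le : m₀ ≤ k := by rw [hm₀]; exact Nat.findGreatest_le k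
    have hgr : ∀ m', m₀ < m' → m' ≤ k → ¬ Bad (k - m', fun i => j i / 2 ^ m') := by
      intro m' h1 h2
      refine Nat.findGreatest_is_greatest (P := fun m => Bad (k - m, fun i => j i / 2 ^ m))
        (n := k) ?_ h2
      rw [hm₀] at h1; exact h1
    refine ⟨(k - m₀, fun i => j i / 2 ^ m₀), ⟨?_, hPm, ?_⟩, dC_anc_subset hh hm₀le j⟩
    · intro i
      show j i / 2 ^ m₀ < 2 ^ (k - m₀)
      rw [Nat.div_lt_iff_lt_mul (show 0 < 2 ^ m₀ by positivity)]
      calc j i < 2 ^ k := hjr i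
        _ = 2 ^ (k - m₀) * 2 ^ m₀ := by rw [← pow_add]; congr 1; omega
    · intro m hm hmle
      have h1 : k - m₀ - m = k - (m₀ + m) := by omega
      have h2 : (fun i => j i / 2 ^ m₀ / 2 ^ m) = (fun i => j i / 2 ^ (m₀ + m)) := by
        funext i; rw [Nat.div_div_eq_div_mul, pow_add]
      simp only [h1, h2]
      exact hgr (m₀ + m) (by omega) (by omega)
  -- pairwise a.e. disjointness of maximal cubes
  have key4half : ∀ p ∈ M, ∀ q ∈ M, p.1 ≤ q.1 → p ≠ q →
      volume (dC n a h p.1 p.2 ∩ dC n a h q.1 q.2) = 0 := by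
    intro p hp q hq hle hne
    by_cases hcase : (fun i => q.2 i / 2 ^ (q.1 - p.1)) = p.2
    · exfalso
      rcases Nat.eq_zero_or_pos (q.1 - p.1) with hm0 | hmpos
      · apply hne
        have h1 : p.1 = q.1 := by omega
        have h2 : p.2 = q.2 := by
          rw [← hcase]
          funext i
          rw [hm0, pow_zero, Nat.div_one]
        exact Prod.ext h1 h2
      · have hnb := hq.2.2 (q.1 - p.1) hmpos (by omega)
        apply hnb
        have heq1 : q.1 - (q.1 - p.1) = p.1 := by omega
        rw [heq1, hcase]
        exact hp.2.1
    · have hsub : dC n a h q.1 q.2 ⊆ dC n a h p.1 (fun i => q.2 i / 2 ^ (q.1 - p.1)) := by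
        have h1 : q.1 - (q.1 - p.1) = p.1 := by omega
        have := dC_anc_subset (a := a) hh (show q.1 - p.1 ≤ q.1 by omega) q.2
        rwa [h1] at this
      refine le_antisymm ?_ zero_le
      calc volume (dC n a h p.1 p.2 ∩ dC n a h q.1 q.2)
          ≤ volume (dC n a h p.1 p.2 ∩ dC n a h p.1 (fun i => q.2 i / 2 ^ (q.1 - p.1))) :=
            measure_mono (Set.inter_subset_inter_right _ hsub)
        _ = 0 := dC_same_level_aedisjoint hh p.1 (fun hcon => hcase hcon.symm)
  have key4 : ∀ p ∈ M, ∀ q ∈ M, p ≠ q →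
      volume (dC n a h p.1 p.2 ∩ dC n a h q.1 q.2) = 0 := by
    intro p hp q hq hne
    rcases le_total p.1 q.1 with hle | hle
    · exact key4half p hp q hq hle hne
    · rw [Set.inter_comm]
      exact key4half q hq p hp hle (Ne.symm hne)
  -- the maximal cubes satisfy the lintegral bound
  have key3 : ∀ p ∈ M, ∫⁻ x in dC n a h p.1 p.2, ow x ≤
      2 ^ n * ENNReal.ofReal lam * volume (dC n a h p.1 p.2) := by
    rintro ⟨k, j⟩ hp
    match k, hp with
    | 0, hp =>
      exfalso
      have hj : j = fun _ => 0 := by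
        funext i
        have := hp.1 i
        simpa using this
      rw [hj] at hp
      exact hQnotBad hp.2.1
    | (k+1), hp =>
      have hnotbad : ¬ Bad (k, fun i => j i / 2) := by
        have := hp.2.2 1 Nat.one_pos (by omega)
        simpa using this
      rw [hBaddef] at hnotbad
      simp only [not_lt] at hnotbad
      have hsub := dC_child_subset (a := a) hh k j
      have hvol : volume (dC n a h k (fun i => j i / 2)) =
          2 ^ n * volume (dC n a h (k+1) j) := by
        rw [hDvol, hDvol]
        have : h / 2 ^ k = 2 * (h / 2 ^ (k+1)) := by ring
        rw [this, ENNReal.ofReal_mul (by norm_num), mul_pow]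
        norm_num
      calc ∫⁻ x in dC n a h (k+1) j, ow x
          ≤ ∫⁻ x in dC n a h k (fun i => j i / 2), ow x := lintegral_mono_set hsub
        _ ≤ ENNReal.ofReal lam * volume (dC n a h k (fun i => j i / 2)) := hnotbad
        _ = 2 ^ n * ENNReal.ofReal lam * volume (dC n a h (k+1) j) := by
            rw [hvol]; ring
  -- null measurability of S'
  have hS'nm : NullMeasurableSet S' volume := by
    have : S' = Q ∩ w ⁻¹' (Set.Ioi lam') := rfl
    rw [this]
    exact (cube_meas a h).nullMeasurableSet.inter (hwam.nullMeasurable measurableSet_Ioi)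
  -- key2 : maximal cubes have at least half their mass in S'
  have key2 : ∀ p ∈ M, volume (dC n a h p.1 p.2) ≤ 2 * volume (dC n a h p.1 p.2 ∩ S') := by
    intro p hp
    set D := dC n a h p.1 p.2 with hD
    set V := volume D with hV
    set Iw := ∫⁻ x in D, ow x with hIw
    set Iv := ∫⁻ x in D, ENNReal.ofReal ((w x)⁻¹) with hIv
    have hV0 : V ≠ 0 := hDvol0 _ _
    have hVt : V ≠ ⊤ := hDvolt _ _
    have hBadp : ENNReal.ofReal lam * V < Iw := hp.2.1
    have hA2 : (V⁻¹ * Iw) * (V⁻¹ * Iv) ≤ A := key1 p.1 p.2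
    set E : Set (Fin n → ℝ) := {x ∈ D | w x ≤ lam'} with hE
    have hEnm : NullMeasurableSet E volume := by
      have : E = D ∩ w ⁻¹' (Set.Iic lam') := rfl
      rw [this]
      exact (cube_meas _ _).nullMeasurableSet.inter (hwam.nullMeasurable measurableSet_Iic)
    have hEIv : ENNReal.ofReal lam'⁻¹ * volume E ≤ Iv := by
      calc ENNReal.ofReal lam'⁻¹ * volume E = ∫⁻ _ in E, ENNReal.ofReal lam'⁻¹ := by
            rw [setLIntegral_const]
        _ ≤ ∫⁻ x in E, ENNReal.ofReal ((w x)⁻¹) := by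
            refine lintegral_mono_ae ?_
            filter_upwards [ae_restrict_mem₀ hEnm] with x hx
            exact ENNReal.ofReal_le_ofReal (inv_anti₀ (hwpos x) hx.2)
        _ ≤ Iv := lintegral_mono_set (fun x hx => hx.1)
    have hmain : ENNReal.ofReal lam * (ENNReal.ofReal lam'⁻¹ * (volume E * V⁻¹)) ≤ A := by
      refine le_trans ?_ hA2
      have hVV : V⁻¹ * V = 1 := ENNReal.inv_mul_cancel hV0 hVt
      calc ENNReal.ofReal lam * (ENNReal.ofReal lam'⁻¹ * (volume E * V⁻¹))
          = (V⁻¹ * (ENNReal.ofReal lam * V)) * (V⁻¹ * (ENNReal.ofReal lam'⁻¹ * volume E)) := by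
            rw [show (V⁻¹ * (ENNReal.ofReal lam * V)) * (V⁻¹ * (ENNReal.ofReal lam'⁻¹ * volume E))
              = (V⁻¹ * V) * (ENNReal.ofReal lam * (ENNReal.ofReal lam'⁻¹ * (volume E * V⁻¹)))
              from by ring, hVV, one_mul]
        _ ≤ (V⁻¹ * Iw) * (V⁻¹ * Iv) :=
            mul_le_mul' (mul_le_mul_right hBadp.le _) (mul_le_mul_right hEIv _)
    have hll : ENNReal.ofReal lam * ENNReal.ofReal lam'⁻¹ = 2 * A := by
      rw [← ENNReal.ofReal_mul hlam_pos.le]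
      have hAr : 0 < A.toReal := ENNReal.toReal_pos hA_pos.ne' hA_ne_top
      have : lam * lam'⁻¹ = 2 * A.toReal := by
        rw [hlam'def]
        field_simp
      rw [this, ENNReal.ofReal_mul (by norm_num), ENNReal.ofReal_ofNat,
        ENNReal.ofReal_toReal hA_ne_top]
    have h2A : 2 * A * (volume E * V⁻¹) ≤ 2 * A * 2⁻¹ := by
      have hstep : 2 * A * (volume E * V⁻¹) ≤ A := by
        rw [← hll]
        calc ENNReal.ofReal lam * ENNReal.ofReal lam'⁻¹ * (volume E * V⁻¹)
            = ENNReal.ofReal lam * (ENNReal.ofReal lam'⁻¹ * (volume E * V⁻¹)) := by ring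
          _ ≤ A := hmain
      have : (2 : ℝ≥0∞) * A * 2⁻¹ = A := by
        rw [mul_comm (2 : ℝ≥0∞) A, mul_assoc, ENNReal.mul_inv_cancel (by norm_num) (by norm_num),
          mul_one]
      rw [this]
      exact hstep
    have hEhalf : volume E ≤ 2⁻¹ * V := by
      have h2A0 : (2 : ℝ≥0∞) * A ≠ 0 := mul_ne_zero (by norm_num) hA_pos.ne'
      have h2At : (2 : ℝ≥0∞) * A ≠ ⊤ := ENNReal.mul_ne_top (by norm_num) hA_ne_top
      have hX : volume E * V⁻¹ ≤ 2⁻¹ := (ENNReal.mul_le_mul_iff_right h2A0 h2At).1 h2A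
      calc volume E = volume E * V⁻¹ * V := by
            rw [mul_assoc, ENNReal.inv_mul_cancel hV0 hVt, mul_one]
        _ ≤ 2⁻¹ * V := by exact mul_le_mul_left hX V
    have hcover : V ≤ volume E + volume (D ∩ S') := by
      refine le_trans (measure_mono ?_) (measure_union_le _ _)
      intro x hx
      rcases le_or_gt (w x) lam' with hc | hc
      · exact Or.inl ⟨hx, hc⟩
      · exact Or.inr ⟨hx, dC_subset_Q hh hp.1 hx, hc⟩
    have hhalf : 2⁻¹ * V ≤ volume (D ∩ S') := by
      have h1 : 2⁻¹ * V + 2⁻¹ * V ≤ 2⁻¹ * V + volume (D ∩ S') := by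
        calc 2⁻¹ * V + 2⁻¹ * V = V := by
              rw [← add_mul]
              norm_num [ENNReal.inv_two_add_inv_two]
          _ ≤ volume E + volume (D ∩ S') := hcover
          _ ≤ 2⁻¹ * V + volume (D ∩ S') := add_le_add hEhalf le_rfl
      exact (ENNReal.add_le_add_iff_left
        (ENNReal.mul_ne_top (ENNReal.inv_ne_top.mpr (by norm_num)) hVt)).1 h1
    calc V = 2 * (2⁻¹ * V) := by
          rw [← mul_assoc, ENNReal.mul_inv_cancel (by norm_num) (by norm_num), one_mul]
      _ ≤ 2 * volume (D ∩ S') := mul_le_mul_right hhalf 2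
  -- Vitali covering / Lebesgue differentiation
  have doubling : ∀ x : Fin n → ℝ, ∃ᶠ r in nhdsWithin (0:ℝ) (Set.Ioi 0),
      volume (Metric.closedBall x (3 * r)) ≤
        ((6:ℝ≥0) ^ n : ℝ≥0) * volume (Metric.closedBall x r) := by
    intro x
    refine Filter.Eventually.frequently ?_
    filter_upwards [self_mem_nhdsWithin] with r hr
    have hr0 : (0:ℝ) < r := hr
    rw [vol_cB x (by linarith : (0:ℝ) ≤ 3 * r), vol_cB x hr0.le]
    have he : ENNReal.ofReal (2 * (3 * r)) = 3 * ENNReal.ofReal (2 * r) := by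
      rw [show (2:ℝ) * (3 * r) = 3 * (2 * r) by ring,
        ENNReal.ofReal_mul (by norm_num : (0:ℝ) ≤ 3)]
      norm_num
    rw [he, mul_pow, ENNReal.coe_pow, ENNReal.coe_ofNat]
    exact mul_le_mul_left (pow_le_pow_left₀ (by norm_num) (by norm_num) n) _
  set v := Vitali.vitaliFamily (volume : Measure (Fin n → ℝ)) ((6:ℝ≥0) ^ n) doubling with hv
  set f : (Fin n → ℝ) → ℝ≥0∞ := Q.indicator ow with hf
  have hfae : AEMeasurable f volume := howam.indicator (cube_meas a h)
  have hffin : ∫⁻ y, f y ≠ ⊤ := by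
    rw [hf, lintegral_indicator (cube_meas a h)]
    have he : ∫⁻ y in Q, ow y = ENNReal.ofReal (∫ x in Q, w x) := by
      rw [← hQ0]; exact hlint 0 _
    rw [he]
    exact ENNReal.ofReal_ne_top
  have hdiff := v.ae_tendsto_lintegral_div hfae hffin
  set U : Set (Fin n → ℝ) := ⋃ p ∈ M, dC n a h p.1 p.2 with hU
  have key5 : volume (S \ U) = 0 := by
    have hsubN : S \ U ⊆ {x | ¬ Filter.Tendsto (fun s => (∫⁻ y in s, f y) / volume s)
        (v.filterAt x) (nhds (f x))} := by
      intro x hx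
      simp only [Set.mem_setOf_eq]
      intro htend
      obtain ⟨hxS, hxU⟩ := hx
      obtain ⟨hxQ, hxlam⟩ := hxS
      choose jj hjr hjm using fun k => exists_cover (a := a) hh hxQ k
      have hnb : ∀ k, ¬ Bad (k, jj k) := by
        intro k hbad
        obtain ⟨q, hqM, hsub⟩ := badsub k (jj k) (hjr k) hbad
        exact hxU (Set.mem_biUnion hqM (hsub (hjm k)))
      have hquot : ∀ k, (∫⁻ y in dC n a h k (jj k), f y) / volume (dC n a h k (jj k)) ≤
          ENNReal.ofReal lam := by
        intro k
        refine ENNReal.div_le_of_le_mul ?_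
        have h1 : (∫⁻ y in dC n a h k (jj k), f y) ≤ ∫⁻ y in dC n a h k (jj k), ow y :=
          lintegral_mono (fun y => Set.indicator_le_self Q ow y)
        have h2 := not_lt.1 (hnb k)
        exact h1.trans h2
      have htendg : Filter.Tendsto (fun k => dC n a h k (jj k)) Filter.atTop (v.filterAt x) := by
        rw [VitaliFamily.tendsto_filterAt_iff]
        constructor
        · refine Filter.Eventually.of_forall (fun k => ?_)
          have hd0 : (0:ℝ) < h / 2 ^ k := by positivity
          rw [hv]
          refine ⟨cube_closed _ _, cube_interior_nonempty _ hd0, h / 2 ^ k,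
            cube_subset_closedBall hd0.le (hjm k), ?_⟩
          rw [vol_cB x (by linarith : (0:ℝ) ≤ 3 * (h / 2 ^ k)), dC_vol hh]
          rw [show (2:ℝ) * (3 * (h / 2 ^ k)) = 6 * (h / 2 ^ k) by ring,
            ENNReal.ofReal_mul (by norm_num : (0:ℝ) ≤ 6), mul_pow, ENNReal.coe_pow,
            ENNReal.coe_ofNat, ENNReal.ofReal_ofNat]
        · intro ε hε
          have h2 : Filter.Tendsto (fun k : ℕ => ((1:ℝ)/2) ^ k) Filter.atTop (nhds 0) :=
            tendsto_pow_atTop_nhds_zero_of_lt_one (by norm_num) (by norm_num)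
          have h3 := h2.const_mul h
          rw [mul_zero] at h3
          have heq : (fun k : ℕ => h * ((1:ℝ)/2) ^ k) = (fun k : ℕ => h / 2 ^ k) := by
            funext k; rw [one_div, inv_pow, div_eq_mul_inv]
          rw [heq] at h3
          filter_upwards [h3.eventually (eventually_lt_nhds hε)] with k hk
          exact (cube_subset_closedBall (by positivity) (hjm k)).trans
            (Metric.closedBall_subset_closedBall hk.le)
      have hfx : f x ≤ ENNReal.ofReal lam :=
        le_of_tendsto (htend.comp htendg) (Filter.Eventually.of_forall hquot)
      rw [hf, Set.indicator_of_mem hxQ] at hfx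
      have : w x ≤ lam := (ENNReal.ofReal_le_ofReal_iff hlam_pos.le).1 hfx
      linarith
    exact measure_mono_null hsubN (ae_iff.1 hdiff)
  -- assembly
  have hUsplit : ∫⁻ x in S, ow x ≤ (∫⁻ x in U, ow x) + ∫⁻ x in S \ U, ow x := by
    refine le_trans (lintegral_mono_set ?_) (lintegral_union_le _ _ _)
    intro x hx
    by_cases hxU : x ∈ U
    · exact Or.inl hxU
    · exact Or.inr ⟨hx, hxU⟩
  have hzero : ∫⁻ x in S \ U, ow x = 0 := setLIntegral_measure_zero _ _ key5
  have hUsum : ∫⁻ x in U, ow x ≤ ∑' p : M, ∫⁻ x in dC n a h (p:ℕ × (Fin n → ℕ)).1 (p:ℕ × (Fin n → ℕ)).2, ow x := by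
    rw [hU, Set.biUnion_eq_iUnion]
    exact lintegral_iUnion_le _ _
  have hsum2 : (∑' p : M, ∫⁻ x in dC n a h (p:ℕ × (Fin n → ℕ)).1 (p:ℕ × (Fin n → ℕ)).2, ow x) ≤
      2 ^ (n+1) * ENNReal.ofReal lam *
        ∑' p : M, volume (dC n a h (p:ℕ × (Fin n → ℕ)).1 (p:ℕ × (Fin n → ℕ)).2 ∩ S') := by
    rw [← ENNReal.tsum_mul_left]
    refine ENNReal.tsum_le_tsum (fun p => ?_)
    calc ∫⁻ x in dC n a h (p:ℕ × (Fin n → ℕ)).1 (p:ℕ × (Fin n → ℕ)).2, ow x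
        ≤ 2 ^ n * ENNReal.ofReal lam * volume (dC n a h (p:ℕ × (Fin n → ℕ)).1 (p:ℕ × (Fin n → ℕ)).2) :=
          key3 _ p.2
      _ ≤ 2 ^ n * ENNReal.ofReal lam *
          (2 * volume (dC n a h (p:ℕ × (Fin n → ℕ)).1 (p:ℕ × (Fin n → ℕ)).2 ∩ S')) :=
          mul_le_mul_right (key2 _ p.2) _
      _ = 2 ^ (n+1) * ENNReal.ofReal lam *
          volume (dC n a h (p:ℕ × (Fin n → ℕ)).1 (p:ℕ × (Fin n → ℕ)).2 ∩ S') := by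
          rw [pow_succ]; ring
  have hsum3 : (∑' p : M, volume (dC n a h (p:ℕ × (Fin n → ℕ)).1 (p:ℕ × (Fin n → ℕ)).2 ∩ S')) =
      volume (⋃ p : M, dC n a h (p:ℕ × (Fin n → ℕ)).1 (p:ℕ × (Fin n → ℕ)).2 ∩ S') := by
    refine (measure_iUnion₀ ?_ ?_).symm
    · intro p q hpq
      refine measure_mono_null ?_ (key4 _ p.2 _ q.2 (fun hcon => hpq (Subtype.ext hcon)))
      exact Set.inter_subset_inter Set.inter_subset_left Set.inter_subset_left
    · exact fun p => ((cube_meas _ _).nullMeasurableSet).inter hS'nm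
  have hsum4 : volume (⋃ p : M, dC n a h (p:ℕ × (Fin n → ℕ)).1 (p:ℕ × (Fin n → ℕ)).2 ∩ S') ≤
      volume S' := measure_mono (Set.iUnion_subset (fun p => Set.inter_subset_right))
  have hconst : ENNReal.ofReal ((2:ℝ) ^ (n+1) * lam) = 2 ^ (n+1) * ENNReal.ofReal lam := by
    rw [ENNReal.ofReal_mul (by positivity), ENNReal.ofReal_pow (by norm_num),
      ENNReal.ofReal_ofNat]
  calc ∫⁻ x in S, ow x ≤ (∫⁻ x in U, ow x) + ∫⁻ x in S \ U, ow x := hUsplit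
    _ = ∫⁻ x in U, ow x := by rw [hzero, add_zero]
    _ ≤ ∑' p : M, ∫⁻ x in dC n a h (p:ℕ × (Fin n → ℕ)).1 (p:ℕ × (Fin n → ℕ)).2, ow x := hUsum
    _ ≤ 2 ^ (n+1) * ENNReal.ofReal lam *
        ∑' p : M, volume (dC n a h (p:ℕ × (Fin n → ℕ)).1 (p:ℕ × (Fin n → ℕ)).2 ∩ S') := hsum2
    _ = 2 ^ (n+1) * ENNReal.ofReal lam *
        volume (⋃ p : M, dC n a h (p:ℕ × (Fin n → ℕ)).1 (p:ℕ × (Fin n → ℕ)).2 ∩ S') := by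
        rw [hsum3]
    _ ≤ 2 ^ (n+1) * ENNReal.ofReal lam * volume S' := mul_le_mul_right hsum4 _
    _ = ENNReal.ofReal ((2:ℝ) ^ (n+1) * lam) * volume S' := by rw [hconst]
end
end

section
/- Let 0 < δ < 1 and 0 < x < 1. Then ∫₀¹ (log(x/y)/(x−y)) · y^{δ−1} dy > x^{δ−1}/δ², where the integrand (which is nonnegative on (0,1)) is understood with its continuous extension y^{δ−1}/x at y = x. (This computes a lower bound for |[b,H]f(x)| with b(y) = log|y|, f(y) = y^{δ−1}·1_{(0,1)}(y), and H the Hilbert transform.) -/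
open MeasureTheory ENNReal

noncomputable section

section Aux

open Real Set

/-- Pointwise bound `(log x - log y) * y^(δ-1) ≤ (2/δ) * y^(δ/2-1)` on `(0, x]`, `x < 1`. -/
private lemma aux_bound {δ x y : ℝ} (hδ0 : 0 < δ) (hx0 : 0 < x) (hx1 : x < 1)
    (hy0 : 0 < y) (hyx : y ≤ x) :
    (Real.log x - Real.log y) * y ^ (δ - 1) ≤ 2 / δ * y ^ (δ / 2 - 1) := by
  have hlogx : Real.log x ≤ 0 := Real.log_nonpos hx0.le hx1.le
  have h1 : Real.log (y ^ (-(δ / 2))) ≤ y ^ (-(δ / 2)) :=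
    (Real.log_le_sub_one_of_pos (Real.rpow_pos_of_pos hy0 _)).trans (by linarith)
  rw [Real.log_rpow hy0] at h1
  have h2 : -Real.log y ≤ 2 / δ * y ^ (-(δ / 2)) := by
    have := mul_le_mul_of_nonneg_left h1 (le_of_lt (by positivity : (0:ℝ) < 2 / δ))
    calc -Real.log y = 2 / δ * (-(δ / 2) * Real.log y) := by field_simp
      _ ≤ 2 / δ * y ^ (-(δ / 2)) := this
  have h3 : Real.log x - Real.log y ≤ 2 / δ * y ^ (-(δ / 2)) := by linarith
  calc (Real.log x - Real.log y) * y ^ (δ - 1)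
      ≤ 2 / δ * y ^ (-(δ / 2)) * y ^ (δ - 1) := by
        apply mul_le_mul_of_nonneg_right h3 (Real.rpow_nonneg hy0.le _)
    _ = 2 / δ * y ^ (δ / 2 - 1) := by
        rw [mul_assoc, ← Real.rpow_add hy0]; ring_nf

private lemma measurable_rpow_const (c : ℝ) : Measurable fun y : ℝ => y ^ c := by
  have h : (fun y : ℝ => y ^ c) = fun y =>
      if y = 0 then (if c = 0 then 1 else 0)
      else Real.exp (Real.log y * c) * (if y < 0 then Real.cos (c * Real.pi) else 1) := by
    funext y
    rcases lt_trichotomy y 0 with hy | hy | hy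
    · rw [if_neg hy.ne, if_pos hy, Real.rpow_def_of_neg hy]
    · subst hy
      rcases eq_or_ne c 0 with hc | hc
      · simp [hc]
      · simp [hc, Real.zero_rpow hc]
    · rw [if_neg hy.ne', if_neg (not_lt.2 hy.le), mul_one, Real.rpow_def_of_pos hy]
  rw [h]
  refine Measurable.ite ?_ measurable_const ?_
  · simpa [Set.setOf_eq_eq_singleton] using measurableSet_singleton (0 : ℝ)
  · exact (Real.measurable_exp.comp (Real.measurable_log.mul_const c)).mul
      (Measurable.ite measurableSet_Iio measurable_const measurable_const)

private lemma aux_measurable (δ x : ℝ) :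
    Measurable fun y : ℝ => (Real.log x - Real.log y) * y ^ (δ - 1) :=
  (measurable_const.sub Real.measurable_log).mul (measurable_rpow_const _)

/-- Integrability of `(log x - log y) * y^(δ-1)` on `(0, x]`. -/
private lemma aux_integrable {δ x : ℝ} (hδ0 : 0 < δ) (hx0 : 0 < x) (hx1 : x < 1) :
    IntegrableOn (fun y => (Real.log x - Real.log y) * y ^ (δ - 1)) (Set.Ioc 0 x) := by
  have hmaj : IntegrableOn (fun y : ℝ => 2 / δ * y ^ (δ / 2 - 1)) (Set.Ioc 0 x) := by
    have : IntervalIntegrable (fun y : ℝ => y ^ (δ / 2 - 1)) volume 0 x :=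
      intervalIntegral.intervalIntegrable_rpow' (by linarith)
    exact ((intervalIntegrable_iff_integrableOn_Ioc_of_le hx0.le).1 this).const_mul _
  apply hmaj.mono' (aux_measurable δ x).aestronglyMeasurable
  filter_upwards [ae_restrict_mem measurableSet_Ioc] with y hy
  have hy0 : 0 < y := hy.1
  have hyx : y ≤ x := hy.2
  have hnn : 0 ≤ (Real.log x - Real.log y) * y ^ (δ - 1) := by
    have : Real.log y ≤ Real.log x := Real.log_le_log hy0 hyx
    exact mul_nonneg (by linarith) (Real.rpow_nonneg hy0.le _)
  rw [Real.norm_eq_abs, abs_of_nonneg hnn]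
  exact aux_bound hδ0 hx0 hx1 hy0 hyx

/-- The exact integral `∫₀ˣ (log x - log y) y^(δ-1) dy = x^δ/δ²`. -/
private lemma aux_integral {δ x : ℝ} (hδ0 : 0 < δ) (hx0 : 0 < x) (hx1 : x < 1) :
    ∫ y in (0:ℝ)..x, (Real.log x - Real.log y) * y ^ (δ - 1) = x ^ δ / δ ^ 2 := by
  set G : ℝ → ℝ := fun y => Real.log x * y ^ δ / δ - y ^ δ * Real.log y / δ + y ^ δ / δ ^ 2
    with hG
  have hG0 : G 0 = 0 := by
    simp [hG, Real.zero_rpow hδ0.ne', Real.log_zero]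
  have hGx : G x = x ^ δ / δ ^ 2 := by simp [hG]; ring
  have hcont : ContinuousOn G (Set.Icc 0 x) := by
    intro t ht
    rcases eq_or_lt_of_le ht.1 with h0 | h0
    · -- t = 0 : continuity from the right
      subst h0
      apply ContinuousWithinAt.mono _ (Set.Icc_subset_Ici_self)
      have hrp : Filter.Tendsto (fun y : ℝ => y ^ δ) (nhdsWithin 0 (Set.Ioi 0)) (nhds 0) := by
        have hlog : Filter.Tendsto Real.log (nhdsWithin 0 (Set.Ioi 0)) Filter.atBot :=
          Real.tendsto_log_nhdsGT_zero
        have h2 : Filter.Tendsto (fun y : ℝ => Real.exp (Real.log y * δ))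
            (nhdsWithin 0 (Set.Ioi 0)) (nhds 0) :=
          Real.tendsto_exp_atBot.comp (hlog.atBot_mul_const hδ0)
        apply h2.congr'
        filter_upwards [self_mem_nhdsWithin] with y hy
        rw [Real.rpow_def_of_pos hy]
      have hlm : Filter.Tendsto (fun y : ℝ => y ^ δ * Real.log y)
          (nhdsWithin 0 (Set.Ioi 0)) (nhds 0) := by
        have := tendsto_log_mul_rpow_nhdsGT_zero hδ0
        exact this.congr (fun y => mul_comm _ _)
      have htend : Filter.Tendsto G (nhdsWithin 0 (Set.Ioi 0)) (nhds 0) := by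
        have : Filter.Tendsto
            (fun y : ℝ => Real.log x * y ^ δ / δ - y ^ δ * Real.log y / δ + y ^ δ / δ ^ 2)
            (nhdsWithin 0 (Set.Ioi 0)) (nhds (Real.log x * 0 / δ - 0 * Real.log 0 / δ + 0 / δ ^ 2)) := by
          refine Filter.Tendsto.add (Filter.Tendsto.sub ?_ ?_) ?_
          · exact (hrp.const_mul _).div_const _
          · simpa using hlm.div_const δ
          · exact hrp.div_const _
        simpa [hG] using this
      have hcw : ContinuousWithinAt G (Set.Ioi 0) 0 := by
        unfold ContinuousWithinAt
        rw [hG0]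
        exact htend
      rw [← Set.Ioi_insert]
      exact ContinuousWithinAt.insert hcw
    · -- 0 < t : plain continuity
      apply ContinuousAt.continuousWithinAt
      have h1 : ContinuousAt (fun y : ℝ => y ^ δ) t :=
        Real.continuousAt_rpow_const t δ (Or.inl h0.ne')
      have h2 : ContinuousAt Real.log t := Real.continuousAt_log h0.ne'
      exact (((h1.const_mul _).div_const _).sub ((h1.mul h2).div_const _)).add (h1.div_const _)
  have hderiv : ∀ t ∈ Set.Ioo (0:ℝ) x,
      HasDerivWithinAt G ((Real.log x - Real.log t) * t ^ (δ - 1)) (Set.Ioi t) t := by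
    intro t ht
    have ht0 : 0 < t := ht.1
    have h1 : HasDerivAt (fun y : ℝ => y ^ δ) (δ * t ^ (δ - 1)) t :=
      Real.hasDerivAt_rpow_const (Or.inl ht0.ne')
    have h2 : HasDerivAt Real.log t⁻¹ t := Real.hasDerivAt_log ht0.ne'
    have hD : HasDerivAt G
        (Real.log x * (δ * t ^ (δ - 1)) / δ -
          (δ * t ^ (δ - 1) * Real.log t + t ^ δ * t⁻¹) / δ + δ * t ^ (δ - 1) / δ ^ 2) t :=
      (((h1.const_mul _).div_const _).sub ((h1.mul h2).div_const _)).add (h1.div_const _)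
    have hpow : t ^ δ * t⁻¹ = t ^ (δ - 1) := by
      rw [Real.rpow_sub ht0, Real.rpow_one, div_eq_mul_inv]
    have : Real.log x * (δ * t ^ (δ - 1)) / δ -
          (δ * t ^ (δ - 1) * Real.log t + t ^ δ * t⁻¹) / δ + δ * t ^ (δ - 1) / δ ^ 2
        = (Real.log x - Real.log t) * t ^ (δ - 1) := by
      rw [hpow]; field_simp; ring
    rw [this] at hD
    exact hD.hasDerivWithinAt
  have hint : IntervalIntegrable (fun y => (Real.log x - Real.log y) * y ^ (δ - 1))
      volume 0 x :=
    (intervalIntegrable_iff_integrableOn_Ioc_of_le hx0.le).2 (aux_integrable hδ0 hx0 hx1)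
  rw [intervalIntegral.integral_eq_sub_of_hasDeriv_right_of_le hx0.le hcont hderiv hint,
    hGx, hG0, sub_zero]

end Aux

/-- For `0 < δ < 1` and `0 < x < 1`,
`∫₀¹ (log(x/y)/(x-y)) y^{δ-1} dy > x^{δ-1}/δ²`, where the (nonnegative) integrand is understood
with its continuous extension `y^{δ-1}/x` at `y = x`. This computes a lower bound for
`|[b,H]f(x)|` with `b(y) = log|y|`, `f(y) = y^{δ-1} 1_{(0,1)}(y)` and `H` the Hilbert
transform. -/
theorem commutator_hilbert_pointwise_lower_bound
    (δ x : ℝ) (hδ0 : 0 < δ) (hδ1 : δ < 1) (hx0 : 0 < x) (hx1 : x < 1) :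
    ENNReal.ofReal (x ^ (δ - 1) / δ ^ 2) <
      ∫⁻ y in Set.Ioo (0 : ℝ) 1,
        ENNReal.ofReal
          ((if y = x then x⁻¹ else Real.log (x / y) / (x - y)) * y ^ (δ - 1)) := by
  set F : ℝ → ℝ≥0∞ := fun y =>
    ENNReal.ofReal ((if y = x then x⁻¹ else Real.log (x / y) / (x - y)) * y ^ (δ - 1)) with hF
  have hFmeas : Measurable F := by
    apply ENNReal.measurable_ofReal.comp
    apply Measurable.mul
    · refine Measurable.ite ?_ measurable_const ?_
      · simpa [Set.setOf_eq_eq_singleton] using measurableSet_singleton x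
      · exact (Real.measurable_log.comp (measurable_const.div measurable_id)).div
          (measurable_const.sub measurable_id)
    · exact measurable_rpow_const _
  -- positivity of the part over (x, 1)
  have hpos : 0 < ∫⁻ y in Set.Ioo x 1, F y := by
    rw [lintegral_pos_iff_support hFmeas]
    have hsub : Set.Ioo x 1 ⊆ Function.support F := by
      intro y hy
      have hy0 : 0 < y := hx0.trans hy.1
      have h1 : Real.log (x / y) < 0 :=
        Real.log_neg (div_pos hx0 hy0) ((div_lt_one hy0).2 hy.1)
      have h2 : x - y < 0 := by linarith [hy.1]
      have hfy : 0 < (if y = x then x⁻¹ else Real.log (x / y) / (x - y)) * y ^ (δ - 1) := by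
        rw [if_neg hy.1.ne']
        exact mul_pos (div_pos_of_neg_of_neg h1 h2) (Real.rpow_pos_of_pos hy0 _)
      simp only [hF, Function.mem_support]
      exact (ENNReal.ofReal_pos.2 hfy).ne'
    calc (0:ℝ≥0∞) < volume (Set.Ioo x 1) := by
          rw [Real.volume_Ioo]; exact ENNReal.ofReal_pos.2 (by linarith)
      _ = (volume.restrict (Set.Ioo x 1)) (Set.Ioo x 1) := by
          rw [Measure.restrict_apply_self]
      _ ≤ (volume.restrict (Set.Ioo x 1)) (Function.support F) := measure_mono hsub
  -- lower bound for the part over (0, x)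
  have hlow : ENNReal.ofReal (x ^ (δ - 1) / δ ^ 2) ≤ ∫⁻ y in Set.Ioo 0 x, F y := by
    set g : ℝ → ℝ := fun y => (Real.log x - Real.log y) * y ^ (δ - 1) / x with hg
    have hgint : IntegrableOn g (Set.Ioo 0 x) :=
      ((aux_integrable hδ0 hx0 hx1).mono_set Set.Ioo_subset_Ioc_self).div_const x
    have hgnn : 0 ≤ᵐ[volume.restrict (Set.Ioo 0 x)] g := by
      filter_upwards [ae_restrict_mem measurableSet_Ioo] with y hy
      have : Real.log y ≤ Real.log x := Real.log_le_log hy.1 hy.2.le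
      exact div_nonneg (mul_nonneg (by linarith) (Real.rpow_nonneg hy.1.le _)) hx0.le
    have hgval : ∫ y in Set.Ioo (0:ℝ) x, g y = x ^ (δ - 1) / δ ^ 2 := by
      rw [hg]
      rw [← MeasureTheory.integral_Ioc_eq_integral_Ioo,
        ← intervalIntegral.integral_of_le hx0.le]
      rw [intervalIntegral.integral_div, aux_integral hδ0 hx0 hx1]
      rw [Real.rpow_sub hx0, Real.rpow_one]
      ring
    calc ENNReal.ofReal (x ^ (δ - 1) / δ ^ 2)
        = ENNReal.ofReal (∫ y in Set.Ioo (0:ℝ) x, g y) := by rw [hgval]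
      _ = ∫⁻ y in Set.Ioo (0:ℝ) x, ENNReal.ofReal (g y) :=
          ofReal_integral_eq_lintegral_ofReal hgint hgnn
      _ ≤ ∫⁻ y in Set.Ioo (0:ℝ) x, F y := by
          apply lintegral_mono_ae
          filter_upwards [ae_restrict_mem measurableSet_Ioo] with y hy
          have hy0 : 0 < y := hy.1
          have hyx : y < x := hy.2
          apply ENNReal.ofReal_le_ofReal
          rw [if_neg hyx.ne]
          rw [Real.log_div hx0.ne' hy0.ne']
          have hnum : 0 ≤ Real.log x - Real.log y := by
            have : Real.log y ≤ Real.log x := Real.log_le_log hy0 hyx.le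
            linarith
          have h1 : (Real.log x - Real.log y) / x ≤ (Real.log x - Real.log y) / (x - y) := by
            apply div_le_div_of_nonneg_left hnum (by linarith) (by linarith)
          calc g y = (Real.log x - Real.log y) / x * y ^ (δ - 1) := by rw [hg]; ring
            _ ≤ (Real.log x - Real.log y) / (x - y) * y ^ (δ - 1) :=
                mul_le_mul_of_nonneg_right h1 (Real.rpow_nonneg hy0.le _)
  -- assemble
  have hdisj : Disjoint (Set.Ioo (0:ℝ) x) (Set.Ioo x 1) :=
    Set.disjoint_left.2 fun y hy hy' => absurd hy.2 (not_lt.2 hy'.1.le)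
  have hsub : Set.Ioo (0:ℝ) x ∪ Set.Ioo x 1 ⊆ Set.Ioo 0 1 := by
    rintro y (hy | hy)
    · exact ⟨hy.1, hy.2.trans hx1⟩
    · exact ⟨hx0.trans hy.1, hy.2⟩
  calc ENNReal.ofReal (x ^ (δ - 1) / δ ^ 2)
      < ENNReal.ofReal (x ^ (δ - 1) / δ ^ 2) + ∫⁻ y in Set.Ioo x 1, F y :=
        ENNReal.lt_add_right ENNReal.ofReal_ne_top hpos.ne'
    _ ≤ (∫⁻ y in Set.Ioo 0 x, F y) + ∫⁻ y in Set.Ioo x 1, F y := by gcongr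
    _ = ∫⁻ y in Set.Ioo (0:ℝ) x ∪ Set.Ioo x 1, F y :=
        (lintegral_union measurableSet_Ioo hdisj).symm
    _ ≤ ∫⁻ y in Set.Ioo (0:ℝ) 1, F y := lintegral_mono_set hsub
end
end
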